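/- arXiv:2306.07755 — 9 statements merged into one kernel-verified Lean document; each statement's English description precedes it below -/
import Mathlib

section
/- Let P be an m×m matrix with a PSD factorization by r×r complex positive semidefinite matrices {C_x}_{x=1}^m and {D_y}_{y=1}^m (i.e. tr(C_x D_y) = P_{xy} for all x,y), and suppose S_C = ∑_{x=1}^m C_x and S_D = ∑_{y=1}^m D_y are invertible. Then P admits a canonical form of PSD factorization: there exist r×r complex positive semidefinite matrices {C'_x}_{x=1}^m and {D'_y}_{y=1}^m with tr(C'_x D'_y) = P_{xy} for all x,y, and ∑_{x=1}^m C'_x = ∑_{y=1}^m D'_y = Λ, where Λ is a diagonal positive semidefinite matrix whose diagonal entries are the eigenvalues of (S_C^{1/2} S_D S_C^{1/2})^{1/2}. -/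
open Matrix ComplexOrder
open scoped MatrixOrder

/-- every PSD factorization of `P` with invertible marginal sums `S_C`, `S_D`
corresponds to a canonical form of PSD factorization whose diagonal matrix `Λ` has as diagonal
entries the eigenvalues of `(S_C^{1/2} S_D S_C^{1/2})^{1/2}` (characterized below via the
unique PSD square roots `R` of `S_C` and `E` of `R * S_D * R`). -/
theorem stmt0 {m r : ℕ} (P : Matrix (Fin m) (Fin m) ℝ)
    (C D : Fin m → Matrix (Fin r) (Fin r) ℂ)
    (hC : ∀ x, (C x).PosSemidef) (hD : ∀ y, (D y).PosSemidef)
    (hfac : ∀ x y, (C x * D y).trace = (P x y : ℂ))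
    (hSC : IsUnit (∑ x, C x)) (hSD : IsUnit (∑ y, D y)) :
    ∃ (C' D' : Fin m → Matrix (Fin r) (Fin r) ℂ) (Λ : Matrix (Fin r) (Fin r) ℂ),
      (∀ x, (C' x).PosSemidef) ∧ (∀ y, (D' y).PosSemidef) ∧
      (∀ x y, (C' x * D' y).trace = (P x y : ℂ)) ∧
      (∑ x, C' x) = Λ ∧ (∑ y, D' y) = Λ ∧ Λ.IsDiag ∧ Λ.PosSemidef ∧
      ∀ (R E : Matrix (Fin r) (Fin r) ℂ) (_ : R.PosSemidef) (hE : E.PosSemidef),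
        R * R = (∑ x, C x) → E * E = R * (∑ y, D y) * R →
        (Finset.univ.val.map fun i => Λ i i) =
          Finset.univ.val.map fun i => ((hE.1.eigenvalues i : ℝ) : ℂ) := by
  classical
  set SC := ∑ x, C x with hSCdef
  set SD := ∑ y, D y with hSDdef
  have hSCps : SC.PosSemidef :=
    Finset.sum_induction _ _ (fun a b ha hb => ha.add hb) .zero (fun x _ => hC x)
  have hSDps : SD.PosSemidef :=
    Finset.sum_induction _ _ (fun a b ha hb => ha.add hb) .zero (fun y _ => hD y)
  set R := CFC.sqrt SC with hRdef
  have hRps : R.PosSemidef := Matrix.nonneg_iff_posSemidef.mp (CFC.sqrt_nonneg SC)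
  have hRR : R * R = SC := CFC.sqrt_mul_sqrt_self SC hSCps.nonneg
  have hRdet : IsUnit R.det := by
    have h := (Matrix.isUnit_iff_isUnit_det _).mp hSC
    rw [← hRR, Matrix.det_mul] at h
    exact isUnit_of_mul_isUnit_left h
  have hRinv : R * R⁻¹ = 1 := Matrix.mul_nonsing_inv _ hRdet
  have hinvR : R⁻¹ * R = 1 := Matrix.nonsing_inv_mul _ hRdet
  set M := R * SD * R with hMdef
  have hMps : M.PosSemidef := by
    have h := hSDps.mul_mul_conjTranspose_same R
    rwa [hRps.isHermitian.eq] at h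
  set E := CFC.sqrt M with hEdef
  have hEps : E.PosSemidef := Matrix.nonneg_iff_posSemidef.mp (CFC.sqrt_nonneg M)
  have hEE : E * E = M := CFC.sqrt_mul_sqrt_self M hMps.nonneg
  have hEH : E.IsHermitian := hEps.isHermitian
  have hMdet : IsUnit M.det := by
    rw [hMdef, Matrix.det_mul, Matrix.det_mul]
    exact (hRdet.mul ((Matrix.isUnit_iff_isUnit_det _).mp hSD)).mul hRdet
  have hEdet : IsUnit E.det := by
    have h : IsUnit (E.det * E.det) := by rw [← Matrix.det_mul, hEE]; exact hMdet
    exact isUnit_of_mul_isUnit_left h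
  set ev : Fin r → ℝ := hEH.eigenvalues with hevdef
  have hev_nonneg : ∀ i, 0 ≤ ev i := hEps.eigenvalues_nonneg
  have hev_ne : ∀ i, ev i ≠ 0 := by
    intro i h0
    have hdet := hEdet
    rw [hEH.det_eq_prod_eigenvalues] at hdet
    have hne := Finset.prod_ne_zero_iff.mp hdet.ne_zero i (Finset.mem_univ i)
    apply hne
    rw [show hEH.eigenvalues i = ev i from rfl, h0]
    simp
  set μ : Fin r → ℝ := fun i => Real.sqrt (ev i) with hμdef
  have hμ_ne : ∀ i, (μ i : ℂ) ≠ 0 := by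
    intro i
    simp only [ne_eq, Complex.ofReal_eq_zero, hμdef]
    exact Real.sqrt_ne_zero'.mpr (lt_of_le_of_ne (hev_nonneg i) (Ne.symm (hev_ne i)))
  have hμ_sq : ∀ i, (μ i : ℂ) * (μ i : ℂ) = (ev i : ℂ) := by
    intro i
    rw [← Complex.ofReal_mul, Real.mul_self_sqrt (hev_nonneg i)]
  set Λ : Matrix (Fin r) (Fin r) ℂ := Matrix.diagonal (fun i => (ev i : ℂ)) with hΛdef
  set W : Matrix (Fin r) (Fin r) ℂ := Matrix.diagonal (fun i => (μ i : ℂ)) with hWdef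
  set Wi : Matrix (Fin r) (Fin r) ℂ := Matrix.diagonal (fun i => ((μ i : ℂ))⁻¹) with hWidef
  have hWW : W * W = Λ := by
    rw [hWdef, hΛdef, Matrix.diagonal_mul_diagonal]
    exact congrArg _ (funext fun i => hμ_sq i)
  have hWWi : W * Wi = 1 := by
    rw [hWdef, hWidef, Matrix.diagonal_mul_diagonal]
    rw [show (fun i => (μ i : ℂ) * (μ i : ℂ)⁻¹) = fun _ => (1 : ℂ) from
      funext fun i => mul_inv_cancel₀ (hμ_ne i), Matrix.diagonal_one]
  have hWiW : Wi * W = 1 := by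
    rw [hWidef, hWdef, Matrix.diagonal_mul_diagonal]
    rw [show (fun i => (μ i : ℂ)⁻¹ * (μ i : ℂ)) = fun _ => (1 : ℂ) from
      funext fun i => inv_mul_cancel₀ (hμ_ne i), Matrix.diagonal_one]
  set U : Matrix (Fin r) (Fin r) ℂ := (hEH.eigenvectorUnitary : Matrix (Fin r) (Fin r) ℂ) with hUdef
  have hU1 : U * star U = 1 := (Matrix.mem_unitaryGroup_iff).mp hEH.eigenvectorUnitary.2
  have hU2 : star U * U = 1 := (Matrix.mem_unitaryGroup_iff').mp hEH.eigenvectorUnitary.2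
  have hdiagΛ : Matrix.diagonal (RCLike.ofReal ∘ ev) = Λ := rfl
  have hUEU : star U * E * U = Λ := by
    rw [← hdiagΛ]; exact (Unitary.conjStarAlgAut_star_apply (S := ℂ) _ _).symm.trans hEH.conjStarAlgAut_star_eigenvectorUnitary
  set A : Matrix (Fin r) (Fin r) ℂ := W * star U * R⁻¹ with hAdef
  set B : Matrix (Fin r) (Fin r) ℂ := Wi * star U * R with hBdef
  have hRinvH : (R⁻¹)ᴴ = R⁻¹ := by rw [Matrix.conjTranspose_nonsing_inv, hRps.isHermitian.eq]
  have hWH : Wᴴ = W := by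
    rw [hWdef, Matrix.diagonal_conjTranspose]
    refine congrArg Matrix.diagonal (funext fun i => ?_)
    simp [Complex.conj_ofReal]
  have hWiH : Wiᴴ = Wi := by
    rw [hWidef, Matrix.diagonal_conjTranspose]
    refine congrArg Matrix.diagonal (funext fun i => ?_)
    simp [Complex.conj_ofReal]
  have hAH : Aᴴ = R⁻¹ * (U * W) := by
    rw [hAdef, Matrix.conjTranspose_mul, Matrix.conjTranspose_mul, hRinvH, hWH,
      Matrix.star_eq_conjTranspose, Matrix.conjTranspose_conjTranspose]
  have hBH : Bᴴ = R * (U * Wi) := by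
    rw [hBdef, Matrix.conjTranspose_mul, Matrix.conjTranspose_mul, hRps.isHermitian.eq, hWiH,
      Matrix.star_eq_conjTranspose, Matrix.conjTranspose_conjTranspose]
  have hAB : Aᴴ * B = 1 := by
    rw [hAH, hBdef]
    calc R⁻¹ * (U * W) * (Wi * star U * R)
        = R⁻¹ * (U * ((W * Wi) * (star U * R))) := by noncomm_ring
      _ = R⁻¹ * R := by rw [hWWi, one_mul, ← Matrix.mul_assoc U (star U) R, hU1, one_mul]
      _ = 1 := hinvR
  have hBA : Bᴴ * A = 1 := by
    rw [hBH, hAdef]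
    calc R * (U * Wi) * (W * star U * R⁻¹)
        = R * (U * ((Wi * W) * (star U * R⁻¹))) := by noncomm_ring
      _ = R * R⁻¹ := by rw [hWiW, one_mul, ← Matrix.mul_assoc U (star U) R⁻¹, hU1, one_mul]
      _ = 1 := hRinv
  refine ⟨fun x => A * C x * Aᴴ, fun y => B * D y * Bᴴ, Λ, ?_, ?_, ?_, ?_, ?_, ?_, ?_, ?_⟩
  · exact fun x => (hC x).mul_mul_conjTranspose_same A
  · exact fun y => (hD y).mul_mul_conjTranspose_same B
  · intro x y
    rw [← hfac x y]
    calc (A * C x * Aᴴ * (B * D y * Bᴴ)).trace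
        = (A * (C x * ((Aᴴ * B) * (D y * Bᴴ)))).trace := by noncomm_ring
      _ = (A * (C x * (D y * Bᴴ))).trace := by rw [hAB, one_mul]
      _ = ((C x * (D y * Bᴴ)) * A).trace := Matrix.trace_mul_comm _ _
      _ = (C x * (D y * (Bᴴ * A))).trace := by noncomm_ring
      _ = (C x * D y).trace := by rw [hBA, mul_one]
  · rw [show (∑ x, A * C x * Aᴴ) = A * SC * Aᴴ by
      rw [hSCdef]; simp [Finset.mul_sum, Finset.sum_mul]]
    rw [← hRR, hAH, hAdef]
    calc W * star U * R⁻¹ * (R * R) * (R⁻¹ * (U * W))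
        = W * (star U * (((R⁻¹ * R) * (R * R⁻¹)) * (U * W))) := by noncomm_ring
      _ = W * (star U * (U * W)) := by rw [hinvR, hRinv, one_mul, one_mul]
      _ = W * W := by rw [← Matrix.mul_assoc (star U) U W, hU2, one_mul]
      _ = Λ := hWW
  · rw [show (∑ y, B * D y * Bᴴ) = B * SD * Bᴴ by
      rw [hSDdef]; simp [Finset.mul_sum, Finset.sum_mul]]
    have hM' : B * SD * Bᴴ = Wi * (star U * (E * E) * U) * Wi := by
      rw [hEE, hMdef, hBH, hBdef]; noncomm_ring
    rw [hM']
    have hUE2U : star U * (E * E) * U = Λ * Λ := by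
      calc star U * (E * E) * U = (star U * E * U) * (star U * E * U) := by
            rw [show star U * E * U * (star U * E * U)
                = star U * (E * ((U * star U) * (E * U))) by noncomm_ring, hU1, one_mul]
            noncomm_ring
        _ = Λ * Λ := by rw [hUEU]
    rw [hUE2U, hΛdef, hWidef]
    simp only [Matrix.diagonal_mul_diagonal]
    refine congrArg Matrix.diagonal (funext fun i => ?_)
    have h := hμ_ne i
    rw [← hμ_sq i]
    field_simp
  · exact Matrix.isDiag_diagonal _
  · refine Matrix.PosSemidef.diagonal ?_
    intro i
    simp only [Pi.zero_apply]
    exact_mod_cast hev_nonneg i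
  · intro R' E' hR' hE' hR'sq hE'sq
    have hR'eq : R' = R := (CFC.sqrt_unique hR'sq hR'.nonneg).symm
    rw [hR'eq] at hE'sq
    have hE'eq : E' = E := (CFC.sqrt_unique hE'sq hE'.nonneg).symm
    subst hE'eq
    have : hE'.1.eigenvalues = ev := rfl
    rw [this]
    congr 1
    funext i
    rw [hΛdef, Matrix.diagonal_apply_eq]
end

section
/- Let d ≥ 2 and let C_1,…,C_d and D_1,…,D_d be d×d complex positive semidefinite matrices such that tr(C_x D_y) = c·δ_{xy} for all x,y ∈ [d], where c > 0. Then every C_x and every D_y has rank exactly 1. -/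
open Matrix ComplexOrder

lemma trace_CTMS_zero {n : Type*} [Fintype n] (M : Matrix n n ℂ)
    (h : (Mᴴ * M).trace = 0) : M = 0 := by
  have key : (Mᴴ * M).trace = ((∑ i, ∑ j, Complex.normSq (M j i) : ℝ) : ℂ) := by
    simp only [Matrix.trace, Matrix.diag, Matrix.mul_apply, Matrix.conjTranspose_apply]
    push_cast
    congr 1; ext i; congr 1; ext j
    rw [Complex.star_def, Complex.normSq_eq_conj_mul_self]
  rw [key] at h
  norm_cast at h
  have h1 := (Finset.sum_eq_zero_iff_of_nonneg (fun i _ =>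
    Finset.sum_nonneg fun j _ => Complex.normSq_nonneg _)).mp h
  ext i j
  exact Complex.normSq_eq_zero.mp
    ((Finset.sum_eq_zero_iff_of_nonneg (fun k _ => Complex.normSq_nonneg _)).mp
      (h1 j (Finset.mem_univ j)) i (Finset.mem_univ i))

lemma psd_mul_eq_zero {n : Type*} [Fintype n] [DecidableEq n]
    {A B : Matrix n n ℂ} (hA : A.PosSemidef) (hB : B.PosSemidef)
    (h : (A * B).trace = 0) : A * B = 0 := by
  open scoped MatrixOrder in
  obtain ⟨S, hSH, hSS⟩ : ∃ S : Matrix n n ℂ, Sᴴ = S ∧ S * S = A :=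
    ⟨CFC.sqrt A, (CFC.sqrt_nonneg A).posSemidef.isHermitian,
      CFC.sqrt_mul_sqrt_self A hA.nonneg⟩
  open scoped MatrixOrder in
  obtain ⟨T, hTH, hTT⟩ : ∃ T : Matrix n n ℂ, Tᴴ = T ∧ T * T = B :=
    ⟨CFC.sqrt B, (CFC.sqrt_nonneg B).posSemidef.isHermitian,
      CFC.sqrt_mul_sqrt_self B hB.nonneg⟩
  have hST : S * T = 0 := by
    apply trace_CTMS_zero
    have e : (S * T)ᴴ * (S * T) = T * (A * T) := by
      rw [conjTranspose_mul, hSH, hTH, ← hSS]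
      noncomm_ring
    rw [e]
    calc (T * (A * T)).trace = (A * (T * T)).trace := by
          rw [Matrix.trace_mul_comm, Matrix.mul_assoc]
      _ = 0 := by rw [hTT, h]
  calc A * B = S * (S * T) * T := by rw [← hSS, ← hTT]; noncomm_ring
    _ = 0 := by rw [hST]; simp

lemma exists_mulVec_ne_zero {n : Type*} [Fintype n] [DecidableEq n]
    {M : Matrix n n ℂ} (h : M ≠ 0) : ∃ v, M.mulVec v ≠ 0 := by
  by_contra hc
  push_neg at hc
  apply h
  ext i j
  have := congrFun (hc (Pi.single j 1)) i
  simpa [Matrix.mulVec_single_one] using this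

lemma rank_eq_one_aux {d : ℕ} (hd : 2 ≤ d)
    (C D : Fin d → Matrix (Fin d) (Fin d) ℂ)
    (h0 : ∀ x y, x ≠ y → C x * D y = 0)
    (h1 : ∀ y, C y * D y ≠ 0) (x : Fin d) : (C x).rank = 1 := by
  have hv : ∀ y, ∃ v, (C y).mulVec ((D y).mulVec v) ≠ 0 := by
    intro y
    obtain ⟨v, hv⟩ := exists_mulVec_ne_zero (h1 y)
    exact ⟨v, by rwa [← Matrix.mulVec_mulVec] at hv⟩
  choose v hvne using hv
  set r : {y : Fin d // y ≠ x} → (Fin d → ℂ) := fun y => (D y.1).mulVec (v y.1) with hr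
  have hker : ∀ y : {y : Fin d // y ≠ x}, r y ∈ LinearMap.ker (C x).mulVecLin := by
    intro y
    simp only [LinearMap.mem_ker, Matrix.mulVecLin_apply, hr]
    rw [Matrix.mulVec_mulVec, h0 x y.1 (Ne.symm y.2), Matrix.zero_mulVec]
  have hli : LinearIndependent ℂ r := by
    rw [Fintype.linearIndependent_iff]
    intro g hg z
    have happ := congrArg ((C z.1).mulVecLin) hg
    rw [map_sum, map_zero] at happ
    have hterm : ∀ y : {y : Fin d // y ≠ x},
        (C z.1).mulVecLin (g y • r y) = if y = z then g z • (C z.1).mulVec (r z) else 0 := by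
      intro y
      rw [_root_.map_smul]
      by_cases hyz : y = z
      · subst hyz; simp [Matrix.mulVecLin_apply]
      · have : (C z.1).mulVecLin (r y) = 0 := by
          simp only [Matrix.mulVecLin_apply, hr]
          rw [Matrix.mulVec_mulVec, h0 z.1 y.1 (fun hh => hyz (Subtype.ext hh.symm)),
            Matrix.zero_mulVec]
        rw [this, smul_zero, if_neg hyz]
    rw [Finset.sum_congr rfl (fun y _ => hterm y), Finset.sum_ite_eq' Finset.univ z] at happ
    simp only [Finset.mem_univ, if_true] at happ
    rcases smul_eq_zero.mp happ with h | h
    · exact h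
    · exact absurd h (hvne z.1)
  -- linear independence inside the kernel
  set K := LinearMap.ker (C x).mulVecLin with hK
  have hli' : LinearIndependent ℂ (fun y : {y : Fin d // y ≠ x} => (⟨r y, hker y⟩ : K)) :=
    (hli.of_comp K.subtype)
  have hcard : Fintype.card {y : Fin d // y ≠ x} = d - 1 := by
    rw [Fintype.card_subtype_compl]
    simp
  have hk : d - 1 ≤ Module.finrank ℂ K := by
    have := hli'.fintype_card_le_finrank
    rwa [hcard] at this
  have hrn : (C x).rank + Module.finrank ℂ K = d := by
    rw [Matrix.rank, hK, LinearMap.finrank_range_add_finrank_ker]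
    simp
  have hKle : Module.finrank ℂ K ≤ d := by omega
  have hle : (C x).rank ≤ 1 := by omega
  have hne : (C x).rank ≠ 0 := by
    intro h
    rw [Matrix.rank, Submodule.finrank_eq_zero, LinearMap.range_eq_bot] at h
    apply h1 x
    have : C x = 0 := by
      by_contra hcx
      obtain ⟨w, hw⟩ := exists_mulVec_ne_zero hcx
      exact hw (by simpa using congrFun (congrArg DFunLike.coe h) w)
    rw [this, Matrix.zero_mul]
  omega

/-- if `d` PSD matrices `C_x` and `d` PSD matrices `D_y` of size `d × d` satisfy
`tr(C_x D_y) = c·δ_{xy}` with `c > 0`, then every `C_x` and every `D_y` has rank exactly 1. -/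
theorem stmt1 {d : ℕ} (hd : 2 ≤ d) (c : ℝ) (hc : 0 < c)
    (C D : Fin d → Matrix (Fin d) (Fin d) ℂ)
    (hC : ∀ x, (C x).PosSemidef) (hD : ∀ y, (D y).PosSemidef)
    (hfac : ∀ x y, (C x * D y).trace = if x = y then (c : ℂ) else 0) :
    (∀ x, (C x).rank = 1) ∧ (∀ y, (D y).rank = 1) := by
  have h0 : ∀ x y, x ≠ y → C x * D y = 0 := by
    intro x y hxy
    exact psd_mul_eq_zero (hC x) (hD y) (by rw [hfac x y, if_neg hxy])
  have h1 : ∀ y, C y * D y ≠ 0 := by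
    intro y h
    have := hfac y y
    rw [h, Matrix.trace_zero, if_pos rfl] at this
    exact_mod_cast hc.ne' (by exact_mod_cast this.symm)
  constructor
  · exact rank_eq_one_aux hd C D h0 h1
  · intro y
    apply rank_eq_one_aux hd D C
    · intro a b hab
      have := congrArg conjTranspose (h0 b a (Ne.symm hab))
      rwa [conjTranspose_mul, (hC b).isHermitian.eq, (hD a).isHermitian.eq,
        conjTranspose_zero] at this
    · intro z h
      apply h1 z
      have := congrArg conjTranspose h
      rwa [conjTranspose_mul, (hC z).isHermitian.eq, (hD z).isHermitian.eq,
        conjTranspose_zero] at this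
end

section
/- Fix d ≥ 2 and let ω = e^{2πi/d}. For x ∈ [d] let |γ_x⟩ ∈ ℂ^d be the unit vector with j-th entry (1/√d)·ω^{(x-1)j} (j = 0,…,d−1), and define the d×d positive semidefinite matrices C_x = D_x = (√d/(d+1))·|γ_x⟩⟨γ_x| for x ∈ [d], and C_{d+x} = D_{d+x} = (1/(√d(d+1)))·|x−1⟩⟨x−1| for x ∈ [d], where |i⟩ denotes the i-th computational basis vector. Then tr(C_x D_y) = P_{xy} for all x,y ∈ [2d], and ∑_{x=1}^{2d} C_x = ∑_{y=1}^{2d} D_y = (1/√d)·I_d; in particular {C_x},{D_y} is a canonical form of PSD factorization of P. -/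
open Matrix ComplexOrder

/-- The correlation `P` that semi-self-tests the maximally entangled state, as a `2d × 2d`
matrix indexed by `Fin d ⊕ Fin d` (with `Sum.inl x` the outcome `x ∈ [d]` and `Sum.inr x`
the outcome `d + x`), given in block form by
`P = (1/(d(d+1)²)) · [[d²·I_d, J_d], [J_d, I_d]]`. -/
noncomputable def Pmat (d : ℕ) : Matrix (Fin d ⊕ Fin d) (Fin d ⊕ Fin d) ℝ :=
  fun x y =>
    (1 / (d * (d + 1) ^ 2)) *
      match x, y with
      | Sum.inl i, Sum.inl j => if i = j then (d : ℝ) ^ 2 else 0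
      | Sum.inl _, Sum.inr _ => 1
      | Sum.inr _, Sum.inl _ => 1
      | Sum.inr i, Sum.inr j => if i = j then 1 else 0

/-- The Fourier vector `|γ_x⟩` with `j`-th entry `(1/√d)·e^{2πi·x·j/d}` (here `x : Fin d`
corresponds to `x - 1 ∈ {0, …, d-1}` for `x ∈ [d]`). -/
noncomputable def gammaVec (d : ℕ) (x : Fin d) : Fin d → ℂ :=
  fun j => (1 / Real.sqrt d : ℝ) *
    Complex.exp (2 * Real.pi * Complex.I * (x : ℕ) * (j : ℕ) / d)

/-- The explicit factorization: `C_x = (√d/(d+1))·|γ_x⟩⟨γ_x|` for `x ∈ [d]` and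
`C_{d+x} = (1/(√d(d+1)))·|x-1⟩⟨x-1|` for `x ∈ [d]`. -/
noncomputable def Cexp (d : ℕ) : Fin d ⊕ Fin d → Matrix (Fin d) (Fin d) ℂ
  | Sum.inl x => (Real.sqrt d / (d + 1) : ℝ) •
      Matrix.vecMulVec (gammaVec d x) (star (gammaVec d x))
  | Sum.inr x => (1 / (Real.sqrt d * (d + 1)) : ℝ) • Matrix.single x x 1

noncomputable def eC (d : ℕ) (k : ℤ) : ℂ := Complex.exp (2 * Real.pi * Complex.I * k / d)

lemma eC_add (d : ℕ) (k l : ℤ) : eC d k * eC d l = eC d (k + l) := by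
  rw [eC, eC, eC, ← Complex.exp_add]; congr 1; push_cast; ring

lemma eC_conj (d : ℕ) (k : ℤ) : (starRingEnd ℂ) (eC d k) = eC d (-k) := by
  rw [eC, eC, ← Complex.exp_conj]
  congr 1
  simp only [map_div₀, _root_.map_mul, Complex.conj_I, map_ofNat, Complex.conj_natCast,
    map_intCast, map_neg, Complex.conj_ofReal]
  push_cast; ring

lemma eC_sum (d : ℕ) (hd : 0 < d) (k : ℤ) :
    ∑ j : Fin d, eC d (k * j) = if (d : ℤ) ∣ k then (d : ℂ) else 0 := by
  have hde : (d : ℂ) ≠ 0 := Nat.cast_ne_zero.2 hd.ne'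
  have hterm : ∀ j : Fin d, eC d (k * j) = (eC d k) ^ (j : ℕ) := by
    intro j
    rw [eC, eC, ← Complex.exp_nat_mul]; congr 1; push_cast; ring
  simp only [hterm]
  rw [Fin.sum_univ_eq_sum_range (fun j => (eC d k) ^ j)]
  by_cases hdvd : (d : ℤ) ∣ k
  · obtain ⟨m, rfl⟩ := hdvd
    have h1 : eC d ((d : ℤ) * m) = 1 := by
      rw [eC]
      rw [show 2 * (Real.pi : ℂ) * Complex.I * (((d : ℤ) * m : ℤ) : ℂ) / d
            = m * (2 * Real.pi * Complex.I) by push_cast; field_simp]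
      exact Complex.exp_int_mul_two_pi_mul_I m
    simp [h1]
  · have h2 : (2 * (Real.pi : ℂ) * Complex.I) ≠ 0 := by
      simp [Real.pi_ne_zero, Complex.I_ne_zero]
    have hne : eC d k ≠ 1 := by
      intro h
      rw [eC, Complex.exp_eq_one_iff] at h
      obtain ⟨n, hn⟩ := h
      apply hdvd
      refine ⟨n, ?_⟩
      have h3 : (k : ℂ) * (2 * Real.pi * Complex.I)
          = ((d : ℂ) * n) * (2 * Real.pi * Complex.I) := by
        field_simp at hn; linear_combination (2 * Real.pi * Complex.I) * hn
      have h4 : (k : ℂ) = (d : ℂ) * n := mul_right_cancel₀ h2 h3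
      exact_mod_cast h4
    have hpow : (eC d k) ^ d = 1 := by
      rw [eC, ← Complex.exp_nat_mul]
      rw [show (d : ℂ) * (2 * Real.pi * Complex.I * k / d) = k * (2 * Real.pi * Complex.I) by
        field_simp]
      exact Complex.exp_int_mul_two_pi_mul_I k
    rw [geom_sum_eq hne, hpow]
    simp [hdvd]

lemma gamma_apply (d : ℕ) (x j : Fin d) :
    gammaVec d x j = ((1 / Real.sqrt d : ℝ) : ℂ) * eC d ((x : ℤ) * (j : ℤ)) := by
  rw [gammaVec, eC]
  congr 2
  push_cast; ring

lemma csq (d : ℕ) (hd : 0 < d) : (((1 / Real.sqrt d : ℝ)) : ℂ) ^ 2 = 1 / (d : ℂ) := by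
  have h1 : Real.sqrt d * Real.sqrt d = d := Real.mul_self_sqrt (by positivity)
  have h2 : ((1 / Real.sqrt d : ℝ)) ^ 2 = 1 / (d : ℝ) := by
    rw [div_pow, one_pow, sq, h1]
  calc (((1 / Real.sqrt d : ℝ)) : ℂ) ^ 2 = (((1 / Real.sqrt d : ℝ) ^ 2 : ℝ) : ℂ) := by push_cast; ring
    _ = ((1 / (d : ℝ) : ℝ) : ℂ) := by rw [h2]
    _ = 1 / (d : ℂ) := by push_cast; ring

lemma dvd_iff_eq (d : ℕ) (x y : Fin d) : (d : ℤ) ∣ ((y : ℤ) - (x : ℤ)) ↔ x = y := by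
  have hx : (x : ℤ) < d := by exact_mod_cast x.isLt
  have hy : (y : ℤ) < d := by exact_mod_cast y.isLt
  have hx0 : 0 ≤ (x : ℤ) := by positivity
  have hy0 : 0 ≤ (y : ℤ) := by positivity
  constructor
  · intro h
    have h0 : (y : ℤ) - (x : ℤ) = 0 := by
      refine Int.eq_zero_of_abs_lt_dvd h ?_
      rw [abs_sub_lt_iff]; omega
    have : (x : ℤ) = (y : ℤ) := by omega
    exact Fin.ext (by exact_mod_cast this)
  · rintro rfl; simp

lemma gamma_inner (d : ℕ) (hd : 0 < d) (x y : Fin d) :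
    ∑ j : Fin d, (starRingEnd ℂ) (gammaVec d x j) * gammaVec d y j
      = if x = y then 1 else 0 := by
  have hde : (d : ℂ) ≠ 0 := Nat.cast_ne_zero.2 hd.ne'
  have hterm : ∀ j : Fin d, (starRingEnd ℂ) (gammaVec d x j) * gammaVec d y j
      = (((1 / Real.sqrt d : ℝ)) : ℂ) ^ 2 * eC d (((y : ℤ) - (x : ℤ)) * (j : ℤ)) := by
    intro j
    rw [gamma_apply, gamma_apply, _root_.map_mul, Complex.conj_ofReal, eC_conj]
    rw [show (((1 / Real.sqrt d : ℝ)) : ℂ) * eC d (-((x : ℤ) * (j : ℤ))) *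
        ((((1 / Real.sqrt d : ℝ)) : ℂ) * eC d ((y : ℤ) * (j : ℤ)))
      = (((1 / Real.sqrt d : ℝ)) : ℂ) ^ 2 *
        (eC d (-((x : ℤ) * (j : ℤ))) * eC d ((y : ℤ) * (j : ℤ))) by ring]
    rw [eC_add]
    congr 2
    ring
  simp only [hterm]
  rw [← Finset.mul_sum, eC_sum d hd, csq d hd]
  rw [if_congr (dvd_iff_eq d x y) rfl rfl]
  split
  · field_simp
  · simp

lemma gamma_outer_sum (d : ℕ) (hd : 0 < d) (i j : Fin d) :
    ∑ x : Fin d, gammaVec d x i * (starRingEnd ℂ) (gammaVec d x j)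
      = if i = j then 1 else 0 := by
  have hde : (d : ℂ) ≠ 0 := Nat.cast_ne_zero.2 hd.ne'
  have hterm : ∀ x : Fin d, gammaVec d x i * (starRingEnd ℂ) (gammaVec d x j)
      = (((1 / Real.sqrt d : ℝ)) : ℂ) ^ 2 * eC d (((i : ℤ) - (j : ℤ)) * (x : ℤ)) := by
    intro x
    rw [gamma_apply, gamma_apply, _root_.map_mul, Complex.conj_ofReal, eC_conj]
    rw [show (((1 / Real.sqrt d : ℝ)) : ℂ) * eC d ((x : ℤ) * (i : ℤ)) *
        ((((1 / Real.sqrt d : ℝ)) : ℂ) * eC d (-((x : ℤ) * (j : ℤ))))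
      = (((1 / Real.sqrt d : ℝ)) : ℂ) ^ 2 *
        (eC d ((x : ℤ) * (i : ℤ)) * eC d (-((x : ℤ) * (j : ℤ)))) by ring]
    rw [eC_add]
    congr 2
    ring
  simp only [hterm]
  rw [← Finset.mul_sum, eC_sum d hd, csq d hd]
  rw [if_congr (dvd_iff_eq d j i) rfl rfl]
  split
  · rename_i h; subst h; rw [if_pos rfl]; field_simp
  · rename_i h; rw [if_neg (fun hh => h hh.symm)]; simp

lemma eC_zero (d : ℕ) : eC d 0 = 1 := by simp [eC]

lemma gamma_norm (d : ℕ) (hd : 0 < d) (x j : Fin d) :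
    gammaVec d x j * (starRingEnd ℂ) (gammaVec d x j) = 1 / (d : ℂ) := by
  rw [gamma_apply, _root_.map_mul, Complex.conj_ofReal, eC_conj]
  rw [show (((1 / Real.sqrt d : ℝ)) : ℂ) * eC d ((x : ℤ) * (j : ℤ)) *
      ((((1 / Real.sqrt d : ℝ)) : ℂ) * eC d (-((x : ℤ) * (j : ℤ))))
    = (((1 / Real.sqrt d : ℝ)) : ℂ) ^ 2 *
      (eC d ((x : ℤ) * (j : ℤ)) * eC d (-((x : ℤ) * (j : ℤ)))) by ring]
  rw [eC_add, add_neg_cancel, eC_zero, mul_one, csq d hd]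

lemma real_smul_mat {n : Type*} (r : ℝ) (M : Matrix n n ℂ) : r • M = ((r : ℂ)) • M := by
  ext i j
  simp [Matrix.smul_apply, Complex.real_smul]

lemma psd_smul {n : Type*} [Fintype n] {M : Matrix n n ℂ} (hM : M.PosSemidef) {r : ℝ}
    (hr : 0 ≤ r) : (r • M).PosSemidef := by
  rw [real_smul_mat]
  refine Matrix.PosSemidef.of_dotProduct_mulVec_nonneg ?_ fun x => ?_
  · show ((r : ℂ) • M)ᴴ = (r : ℂ) • M
    rw [Matrix.conjTranspose_smul, hM.1]
    congr 1
    exact Complex.conj_ofReal r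
  · rw [Matrix.smul_mulVec, dotProduct_smul, smul_eq_mul]
    exact mul_nonneg (by exact_mod_cast Complex.zero_le_real.mpr hr) (hM.dotProduct_mulVec_nonneg x)

lemma psd_outer {n : Type*} [Fintype n] [DecidableEq n] (u : n → ℂ) :
    (Matrix.vecMulVec u (star u)).PosSemidef := by
  have h : Matrix.vecMulVec u (star u) = Matrix.replicateCol Unit u * (Matrix.replicateCol Unit u)ᴴ := by
    rw [Matrix.vecMulVec_eq Unit]
    congr 1
  rw [h]
  exact Matrix.posSemidef_self_mul_conjTranspose _

lemma psd_std {n : Type*} [Fintype n] [DecidableEq n] (x : n) :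
    (Matrix.single x x (1 : ℂ)).PosSemidef := by
  have h : Matrix.single x x (1 : ℂ)
      = Matrix.diagonal (fun i => if x = i then 1 else 0) := by
    ext i j
    simp only [Matrix.single, Matrix.of_apply, Matrix.diagonal_apply]
    by_cases h1 : x = i <;> by_cases h2 : x = j <;> subst_vars <;> simp_all <;> aesop
  rw [h]
  refine Matrix.posSemidef_diagonal_iff.2 fun i => ?_
  split
  · exact zero_le_one
  · exact le_refl 0

lemma trace_outer_outer {n : Type*} [Fintype n] (u v : n → ℂ) :
    (Matrix.vecMulVec u (star u) * Matrix.vecMulVec v (star v)).trace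
      = (∑ i, u i * (starRingEnd ℂ) (v i)) * (∑ k, (starRingEnd ℂ) (u k) * v k) := by
  rw [Matrix.trace]
  simp only [Matrix.diag_apply, Matrix.mul_apply, Matrix.vecMulVec_apply, Pi.star_apply,
    Complex.star_def]
  rw [Finset.sum_mul_sum]
  refine Finset.sum_congr rfl fun i _ => Finset.sum_congr rfl fun k _ => by ring

lemma trace_mul_std {n : Type*} [Fintype n] [DecidableEq n] (A : Matrix n n ℂ) (i j : n) :
    (A * Matrix.single i j 1).trace = A j i := by
  rw [Matrix.trace]
  simp [Matrix.diag_apply, Matrix.mul_apply, Matrix.single, ite_and,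
    Finset.sum_ite_eq, Finset.sum_ite_eq']

lemma trace_std_mul {n : Type*} [Fintype n] [DecidableEq n] (A : Matrix n n ℂ) (i j : n) :
    (Matrix.single i j 1 * A).trace = A j i := by
  rw [Matrix.trace]
  simp [Matrix.diag_apply, Matrix.mul_apply, Matrix.single, ite_and,
    Finset.sum_ite_eq, Finset.sum_ite_eq']

lemma trace_std {n : Type*} [Fintype n] [DecidableEq n] (x : n) :
    (Matrix.single x x (1 : ℂ)).trace = 1 := by
  rw [Matrix.trace]
  simp [Matrix.diag_apply, Matrix.single, Finset.sum_ite_eq]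

set_option linter.unnecessarySeqFocus false in
/-- the explicit matrices `C_x = D_x = Cexp d x` form a canonical form of PSD
factorization of `P`: they are PSD, `tr(C_x D_y) = P_{xy}` for all `x, y ∈ [2d]`, and
`∑_x C_x = ∑_y D_y = (1/√d)·I_d`. -/
theorem stmt2 (d : ℕ) (hd : 2 ≤ d) :
    (∀ x, (Cexp d x).PosSemidef) ∧
    (∀ x y, (Cexp d x * Cexp d y).trace = (Pmat d x y : ℂ)) ∧
    (∑ x, Cexp d x) = (1 / Real.sqrt d : ℝ) • (1 : Matrix (Fin d) (Fin d) ℂ) := by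
  have hd0 : 0 < d := by omega
  have hdR : (0 : ℝ) < d := by exact_mod_cast hd0
  have hs : Real.sqrt d * Real.sqrt d = d := Real.mul_self_sqrt hdR.le
  have hs0 : (0 : ℝ) < Real.sqrt d := Real.sqrt_pos.2 hdR
  have hd1 : (0 : ℝ) < (d : ℝ) + 1 := by linarith
  refine ⟨?_, ?_, ?_⟩
  · rintro (x | x)
    · exact psd_smul (psd_outer _) (by positivity)
    · exact psd_smul (psd_std _) (by positivity)
  · rintro (x | x) (y | y) <;>
      simp only [Cexp, Pmat, smul_mul_assoc, Matrix.mul_smul, Matrix.trace_smul, smul_smul,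
        Complex.real_smul]
    · rw [trace_outer_outer, gamma_inner d hd0 x y,
        show (∑ i, gammaVec d x i * (starRingEnd ℂ) (gammaVec d y i))
          = ∑ i, (starRingEnd ℂ) (gammaVec d y i) * gammaVec d x i from
          Finset.sum_congr rfl fun i _ => mul_comm _ _,
        gamma_inner d hd0 y x]
      by_cases h : x = y
      · subst h
        have hr : (Real.sqrt d / ((d : ℝ) + 1)) * (Real.sqrt d / ((d : ℝ) + 1))
            = 1 / ((d : ℝ) * ((d : ℝ) + 1) ^ 2) * (d : ℝ) ^ 2 := by
          field_simp
          nlinarith [hs]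
        simp only [if_true, mul_one, one_mul]
        exact_mod_cast hr
      · simp [h, Ne.symm h]
    · rw [trace_mul_std, Matrix.vecMulVec_apply]
      have hg : gammaVec d x y * (star (gammaVec d x) : Fin d → ℂ) y = 1 / (d : ℂ) := by
        simpa [Pi.star_apply, Complex.star_def] using gamma_norm d hd0 x y
      rw [hg]
      have hr : (Real.sqrt d / ((d : ℝ) + 1)) * (1 / (Real.sqrt d * ((d : ℝ) + 1))) * (1 / (d : ℝ))
          = 1 / ((d : ℝ) * ((d : ℝ) + 1) ^ 2) * 1 := by
        field_simp
      rw [show ((1 : ℂ)/(d : ℂ)) = ((1/(d : ℝ) : ℝ) : ℂ) by push_cast; ring,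
        ← Complex.ofReal_mul, hr]
    · rw [trace_std_mul, Matrix.vecMulVec_apply]
      have hg : gammaVec d y x * (star (gammaVec d y) : Fin d → ℂ) x = 1 / (d : ℂ) := by
        simpa [Pi.star_apply, Complex.star_def] using gamma_norm d hd0 y x
      rw [hg]
      have hr : (1 / (Real.sqrt d * ((d : ℝ) + 1))) * (Real.sqrt d / ((d : ℝ) + 1)) * (1 / (d : ℝ))
          = 1 / ((d : ℝ) * ((d : ℝ) + 1) ^ 2) * 1 := by
        field_simp
      rw [show ((1 : ℂ)/(d : ℂ)) = ((1/(d : ℝ) : ℝ) : ℂ) by push_cast; ring,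
        ← Complex.ofReal_mul, hr]
    · by_cases h : x = y
      · subst h
        rw [Matrix.single_mul_single_same, one_mul, trace_std]
        have hr : (1 / (Real.sqrt d * ((d : ℝ) + 1))) * (1 / (Real.sqrt d * ((d : ℝ) + 1)))
            = 1 / ((d : ℝ) * ((d : ℝ) + 1) ^ 2) := by
          field_simp
          nlinarith [hs]
        simp only [if_true, mul_one, one_mul]
        exact_mod_cast hr
      · simp [h]
  · ext i j
    rw [Fintype.sum_sum_type]
    simp only [Cexp, Matrix.add_apply, Matrix.sum_apply, Matrix.smul_apply,
      Matrix.vecMulVec_apply, Pi.star_apply, Complex.star_def, Complex.real_smul,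
      Matrix.one_apply, Matrix.single, Matrix.of_apply]
    rw [← Finset.mul_sum, gamma_outer_sum d hd0 i j, ← Finset.mul_sum]
    have hstd : (∑ x : Fin d, if x = i ∧ x = j then (1 : ℂ) else 0)
        = if i = j then 1 else 0 := by
      by_cases h : i = j
      · subst h
        simp [Finset.sum_ite_eq']
      · have : ∀ x : Fin d, (if x = i ∧ x = j then (1 : ℂ) else 0) = 0 := by
          intro x
          rw [if_neg]
          rintro ⟨rfl, rfl⟩
          exact h rfl
        simp [this, h]
    rw [hstd]
    by_cases h : i = j
    · subst h
      simp only [if_true, if_pos rfl, mul_one]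
      have hr : Real.sqrt d / ((d : ℝ) + 1) + 1 / (Real.sqrt d * ((d : ℝ) + 1))
          = 1 / Real.sqrt d := by
        field_simp
        linear_combination hs
      calc ((Real.sqrt d / ((d : ℝ) + 1) : ℝ) : ℂ) + ((1 / (Real.sqrt d * ((d : ℝ) + 1)) : ℝ) : ℂ)
          = ((Real.sqrt d / ((d : ℝ) + 1) + 1 / (Real.sqrt d * ((d : ℝ) + 1)) : ℝ) : ℂ) := by
            push_cast; ring
        _ = ((1 / Real.sqrt d : ℝ) : ℂ) := by rw [hr]
        _ = _ := by norm_num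
    · simp [h]
end

section
/- Let d ≥ 2. Suppose ρ is a d×d bipartite quantum state and {A_x}_{x=1}^{2d}, {B_y}_{y=1}^{2d} are POVMs with 2d outcomes on each side such that tr(ρ·(A_x ⊗ B_y)) = P_{xy} for all x,y ∈ [2d]. Then both reduced states of ρ are maximally mixed: for all i,j ∈ Fin d, ∑_{k} ρ_{(i,k),(j,k)} = δ_{ij}/d and ∑_{k} ρ_{(k,i),(k,j)} = δ_{ij}/d. -/
open Matrix Kronecker ComplexOrder

namespace S5

open scoped MatrixOrder in
private lemma posSemidef_iff_eq_transpose_mul_self {n : Type*} [Fintype n] {M : Matrix n n ℂ} :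
    M.PosSemidef ↔ ∃ B : Matrix n n ℂ, M = Bᴴ * B := by
  classical
  refine ⟨fun h => ?_, fun ⟨B, hB⟩ => hB ▸ posSemidef_conjTranspose_mul_self B⟩
  obtain ⟨B, hB⟩ := CStarAlgebra.nonneg_iff_eq_star_mul_self.mp h.nonneg
  exact ⟨B, hB⟩

private lemma eq_zero_of_trace_conjTranspose_mul_self {m n : Type*} [Fintype m] [Fintype n]
    {Z : Matrix m n ℂ} (h : (Zᴴ * Z).trace = 0) : Z = 0 := by
  have h' : ∑ j, ∑ i, star (Z i j) * Z i j = 0 := by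
    simpa [Matrix.trace, Matrix.diag, Matrix.mul_apply, Matrix.conjTranspose_apply] using h
  have hz : ∀ j ∈ Finset.univ, (∑ i, star (Z i j) * Z i j) = 0 :=
    (Finset.sum_eq_zero_iff_of_nonneg
      (fun j _ => Finset.sum_nonneg fun i _ => star_mul_self_nonneg _)).mp h'
  ext i j
  have hz2 := (Finset.sum_eq_zero_iff_of_nonneg
      (fun i (_ : i ∈ Finset.univ) => star_mul_self_nonneg (Z i j))).mp
      (hz j (Finset.mem_univ j)) i (Finset.mem_univ i)
  have : Z i j = 0 ∨ Z i j = 0 := by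
    rcases mul_eq_zero.mp hz2 with h1 | h1
    · exact Or.inl (star_eq_zero.mp h1)
    · exact Or.inr h1
  simpa using this

private lemma psd_eq_zero_of_trace_zero {n : Type*} [Fintype n]
    {M : Matrix n n ℂ} (hM : M.PosSemidef) (h : M.trace = 0) : M = 0 := by
  obtain ⟨X, rfl⟩ := posSemidef_iff_eq_transpose_mul_self.mp hM
  rw [eq_zero_of_trace_conjTranspose_mul_self h]
  simp

private lemma mul_eq_zero_of_trace_mul_zero {n : Type*} [Fintype n]
    {ρ M : Matrix n n ℂ} (hρ : ρ.PosSemidef) (hM : M.PosSemidef)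
    (h : (ρ * M).trace = 0) : M * ρ = 0 := by
  obtain ⟨X, rfl⟩ := posSemidef_iff_eq_transpose_mul_self.mp hρ
  obtain ⟨Y, rfl⟩ := posSemidef_iff_eq_transpose_mul_self.mp hM
  have key : X * Yᴴ = 0 := by
    apply eq_zero_of_trace_conjTranspose_mul_self
    have e : (X * Yᴴ)ᴴ * (X * Yᴴ) = Y * (Xᴴ * X * Yᴴ) := by
      rw [conjTranspose_mul, conjTranspose_conjTranspose]
      noncomm_ring
    rw [e, Matrix.trace_mul_comm]
    simpa [Matrix.mul_assoc] using h
  have key' : Y * Xᴴ = 0 := by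
    have := congrArg conjTranspose key
    simpa using this
  calc Yᴴ * Y * (Xᴴ * X) = Yᴴ * (Y * Xᴴ) * X := by noncomm_ring
  _ = 0 := by rw [key']; simp

private lemma psd_sum {n ι : Type*} [Fintype n] [Fintype ι] (f : ι → Matrix n n ℂ)
    (hf : ∀ i, (f i).PosSemidef) : (∑ i, f i).PosSemidef := by
  classical
  exact Finset.sum_induction f _ (fun a b ha hb => ha.add hb) Matrix.PosSemidef.zero
    (fun i _ => hf i)

private lemma kron_conjTranspose {m n : Type*} (A : Matrix m m ℂ) (B : Matrix n n ℂ) :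
    (A ⊗ₖ B)ᴴ = Aᴴ ⊗ₖ Bᴴ := by
  ext ⟨i, k⟩ ⟨j, l⟩
  simp [conjTranspose_apply, kroneckerMap_apply, star_mul']

private lemma kron_psd {m n : Type*} [Fintype m] [Fintype n]
    {A : Matrix m m ℂ} {B : Matrix n n ℂ} (hA : A.PosSemidef) (hB : B.PosSemidef) :
    (A ⊗ₖ B).PosSemidef := by
  obtain ⟨C, rfl⟩ := posSemidef_iff_eq_transpose_mul_self.mp hA
  obtain ⟨D, rfl⟩ := posSemidef_iff_eq_transpose_mul_self.mp hB
  have e : (Cᴴ * C) ⊗ₖ (Dᴴ * D) = (C ⊗ₖ D)ᴴ * (C ⊗ₖ D) := by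
    rw [kron_conjTranspose, ← Matrix.mul_kronecker_mul]
  rw [e]
  exact posSemidef_conjTranspose_mul_self _


private lemma sum_mulVec {n ι : Type*} [Fintype n] [Fintype ι] (f : ι → Matrix n n ℂ)
    (x : n → ℂ) : (∑ i, f i) *ᵥ x = ∑ i, f i *ᵥ x := by
  funext j
  simp only [Matrix.mulVec, dotProduct, Finset.sum_apply, Matrix.sum_apply, Finset.sum_mul]
  exact Finset.sum_comm

private lemma core {d : ℕ} (hd : 0 < d) (B N : Fin d → Matrix (Fin d) (Fin d) ℂ)
    (hB : ∀ i, (B i).PosSemidef) (hN : ∀ i, (N i).PosSemidef)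
    (hzero : ∀ i j, i ≠ j → B j * N i = 0)
    {v : ℝ} (hv : 0 < v)
    (htr : ∀ i, (N i * B i).trace = (v : ℂ)) :
    (∑ i, N i * B i) = ((v : ℝ) : ℂ) • (1 : Matrix (Fin d) (Fin d) ℂ) := by
  classical
  haveI : Nonempty (Fin d) := ⟨⟨0, hd⟩⟩
  have hvC : ((v : ℝ) : ℂ) ≠ 0 := by
    simpa using hv.ne'
  have hBNB : ∀ j, B j * (N j * B j) ≠ 0 := by
    intro j hcon
    obtain ⟨C, hC⟩ := posSemidef_iff_eq_transpose_mul_self.mp (hN j)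
    have e : (C * B j)ᴴ * (C * B j) = B j * (N j * B j) := by
      rw [conjTranspose_mul, (hB j).1.eq, hC]
      noncomm_ring
    have hCB : C * B j = 0 := conjTranspose_mul_self_eq_zero.mp (by rw [e, hcon])
    have h0 : N j * B j = 0 := by rw [hC, Matrix.mul_assoc, hCB, Matrix.mul_zero]
    have h1 := htr j
    rw [h0, Matrix.trace_zero] at h1
    exact hvC h1.symm
  have hpick : ∀ j, ∃ q : Fin d → ℂ, (B j * (N j * B j)) *ᵥ q ≠ 0 := by
    intro j
    by_contra hcontra
    push_neg at hcontra
    apply hBNB j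
    ext k l
    have h2 := congrFun (hcontra (Pi.single l 1)) k
    simpa [Matrix.mulVec_single] using h2
  choose p hp using hpick
  set u : Fin d → (Fin d → ℂ) := fun j => (N j * B j) *ᵥ p j with hu_def
  have hBuj : ∀ j, B j *ᵥ u j ≠ 0 := by
    intro j
    rw [hu_def]
    dsimp only
    rw [Matrix.mulVec_mulVec, ← Matrix.mul_assoc]
    have := hp j
    rwa [← Matrix.mul_assoc] at this
  have hBu0 : ∀ i j, i ≠ j → B i *ᵥ u j = 0 := by
    intro i j hij
    rw [hu_def]
    dsimp only
    rw [Matrix.mulVec_mulVec, ← Matrix.mul_assoc, hzero j i (Ne.symm hij), Matrix.zero_mul,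
      Matrix.zero_mulVec]
  have hli : LinearIndependent ℂ u := by
    rw [Fintype.linearIndependent_iff]
    intro g hg k
    have h1 : ∑ i, g i • (B k *ᵥ u i) = 0 := by
      have h2 := congrArg (B k).mulVecLin hg
      simpa [map_sum, Matrix.mulVecLin_apply] using h2
    rw [Finset.sum_eq_single k] at h1
    · exact (smul_eq_zero.mp h1).resolve_right (hBuj k)
    · intro i _ hik
      rw [hBu0 k i (Ne.symm hik), smul_zero]
    · simp
  have hcard : Fintype.card (Fin d) = Module.finrank ℂ (Fin d → ℂ) := by
    simp [Module.finrank_fintype_fun_eq_card]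
  let bu : Module.Basis (Fin d) ℂ (Fin d → ℂ) := basisOfLinearIndependentOfCardEqFinrank hli hcard
  have hbu : ∀ k, bu k = u k := fun k => by
    rw [coe_basisOfLinearIndependentOfCardEqFinrank]
  have hrepr : ∀ w : Fin d → ℂ, ∑ i, bu.repr w i • u i = w := by
    intro w
    conv_rhs => rw [← bu.sum_repr w]
    exact Finset.sum_congr rfl fun i _ => by rw [hbu]
  have claim1 : ∀ (k : Fin d) (w : Fin d → ℂ), (∀ j, j ≠ k → B j *ᵥ w = 0) →
      w = bu.repr w k • u k := by
    intro k w hw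
    have hcoef : ∀ i, i ≠ k → bu.repr w i = 0 := by
      intro i hik
      have h2 : ∑ j, bu.repr w j • (B i *ᵥ u j) = 0 := by
        have h3 := congrArg (B i).mulVecLin (hrepr w)
        simpa [map_sum, Matrix.mulVecLin_apply, hw i hik] using h3
      rw [Finset.sum_eq_single i] at h2
      · exact (smul_eq_zero.mp h2).resolve_right (hBuj i)
      · intro j _ hji
        rw [hBu0 i j (Ne.symm hji), smul_zero]
      · simp
    calc w = ∑ i, bu.repr w i • u i := (hrepr w).symm
    _ = bu.repr w k • u k := by
        apply Finset.sum_eq_single k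
        · intro i _ hik
          rw [hcoef i hik, zero_smul]
        · simp
  have claim2 : ∀ (k : Fin d) (w : Fin d → ℂ), ∃ s : ℂ, N k *ᵥ w = s • u k := by
    intro k w
    refine ⟨bu.repr (N k *ᵥ w) k, claim1 k _ ?_⟩
    intro j hjk
    rw [Matrix.mulVec_mulVec, hzero k j (Ne.symm hjk), Matrix.zero_mulVec]
  have key : ∀ k, (N k * B k) *ᵥ u k = ((v : ℝ) : ℂ) • u k := by
    intro k
    have hu0 : u k ≠ 0 := by
      intro h
      exact hBuj k (by rw [h, Matrix.mulVec_zero])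
    obtain ⟨i₀, hi₀⟩ : ∃ i₀, u k i₀ ≠ 0 := by
      by_contra hcontra
      push_neg at hcontra
      exact hu0 (funext hcontra)
    choose s hs using fun l => claim2 k (Pi.single l 1)
    have hcol : ∀ i l, N k i l = s l * u k i := by
      intro i l
      have h2 := congrFun (hs l) i
      simpa [Matrix.mulVec_single] using h2
    set μ : ℂ := star (s i₀) / u k i₀ with hμ
    have hsl : ∀ l, s l = μ * star (u k l) := by
      intro l
      have e1 : N k i₀ l = s l * u k i₀ := hcol i₀ l
      have e2 : N k i₀ l = star (s i₀) * star (u k l) := by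
        rw [← (hN k).1.apply i₀ l, hcol l i₀, star_mul']
      rw [hμ]
      field_simp
      rw [← e1, e2]
    have hNform : ∀ i l, N k i l = μ * u k i * star (u k l) := by
      intro i l
      rw [hcol i l, hsl l]
      ring
    set w : Fin d → ℂ := B k *ᵥ u k with hw_def
    set q : ℂ := ∑ l, star (u k l) * w l with hq
    have htr' : (N k * B k).trace = μ * q := by
      simp only [Matrix.trace, Matrix.diag, Matrix.mul_apply]
      rw [hq, Finset.mul_sum, Finset.sum_comm]
      refine Finset.sum_congr rfl fun l _ => ?_
      rw [hw_def]
      simp only [Matrix.mulVec, dotProduct, hNform]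
      rw [Finset.mul_sum, Finset.mul_sum]
      refine Finset.sum_congr rfl fun i _ => by ring
    have hμq : μ * q = ((v : ℝ) : ℂ) := by rw [← htr', htr k]
    rw [← Matrix.mulVec_mulVec, ← hw_def]
    funext i
    have h3 : (N k *ᵥ w) i = μ * q * u k i := by
      simp only [Matrix.mulVec, dotProduct, hNform]
      rw [hq, Finset.mul_sum, Finset.sum_mul]
      refine Finset.sum_congr rfl fun l _ => by ring
    rw [h3, hμq]
    simp [mul_comm]
  have hTu : ∀ k, (∑ i, N i * B i) *ᵥ u k = ((v : ℝ) : ℂ) • u k := by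
    intro k
    rw [sum_mulVec]
    rw [Finset.sum_eq_single k]
    · exact key k
    · intro i _ hik
      rw [← Matrix.mulVec_mulVec, hBu0 i k hik, Matrix.mulVec_zero]
    · simp
  have hall : ∀ w : Fin d → ℂ, (∑ i, N i * B i) *ᵥ w = ((v : ℝ) : ℂ) • w := by
    intro w
    have h1 : (∑ i, N i * B i).mulVecLin (∑ i2, bu.repr w i2 • u i2)
        = ∑ i2, bu.repr w i2 • ((∑ i, N i * B i).mulVecLin (u i2)) := by
      rw [map_sum]
      exact Finset.sum_congr rfl fun i2 _ => LinearMap.map_smul _ _ _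
    calc (∑ i, N i * B i) *ᵥ w = ∑ i2, bu.repr w i2 • (((v : ℝ) : ℂ) • u i2) := by
          conv_lhs => rw [← hrepr w]
          rw [← Matrix.mulVecLin_apply, h1]
          refine Finset.sum_congr rfl fun i2 _ => ?_
          rw [Matrix.mulVecLin_apply, hTu i2]
    _ = ((v : ℝ) : ℂ) • ∑ i2, bu.repr w i2 • u i2 := by
          rw [Finset.smul_sum]
          exact Finset.sum_congr rfl fun i2 _ => (smul_comm _ _ _)
    _ = ((v : ℝ) : ℂ) • w := by rw [hrepr w]
  ext i j
  have h4 := congrFun (hall (Pi.single j 1)) i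
  simp only [Matrix.mulVec_single, mul_one, Pi.smul_apply, Pi.single_apply, smul_eq_mul,
    mul_ite, mul_one, mul_zero, MulOpposite.op_one, one_smul, Matrix.col_apply] at h4
  rw [Matrix.smul_apply, Matrix.one_apply, h4]
  by_cases hij : i = j <;> simp [hij]

open scoped MatrixOrder in
private lemma master {d : ℕ} (hd : 0 < d)
    (Bl Br Nl Nr : Fin d → Matrix (Fin d) (Fin d) ℂ)
    (hBl : ∀ i, (Bl i).PosSemidef) (hBr : ∀ i, (Br i).PosSemidef)
    (hNl : ∀ i, (Nl i).PosSemidef) (hNr : ∀ i, (Nr i).PosSemidef)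
    (hsum : (∑ j, Bl j) + (∑ j, Br j) = 1)
    (hzl : ∀ i j, i ≠ j → Bl j * Nl i = 0)
    (hzr : ∀ i j, i ≠ j → Br j * Nr i = 0)
    {c : ℝ} (hc : 0 < c)
    (htl : ∀ i, (Nl i * Bl i).trace = (((d : ℝ) ^ 2 * c : ℝ) : ℂ))
    (hc1 : ∀ i j, (Nl i * Br j).trace = ((c : ℝ) : ℂ))
    (hc2 : ∀ i j, (Nr i * Bl j).trace = ((c : ℝ) : ℂ))
    (htrr : ∀ i, (Nr i * Br i).trace = ((c : ℝ) : ℂ)) :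
    (∑ i, Nl i) + (∑ i, Nr i) = ((c * ((d : ℝ) + 1) ^ 2 : ℝ) : ℂ) • 1 := by
  classical
  have hdR : (0 : ℝ) < d := by exact_mod_cast hd
  have hdC : ((d : ℂ)) ≠ 0 := by exact_mod_cast hdR.ne'
  have hd1C : ((d : ℂ) + 1) ≠ 0 := by
    intro h
    have h1 : ((d : ℝ) + 1 : ℂ) = 0 := by push_cast at h ⊢; exact h
    have h2 : (d : ℝ) + 1 = 0 := by exact_mod_cast h1
    linarith
  set v : ℝ := (d : ℝ) ^ 2 * c with hv_def
  have hv : 0 < v := by positivity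
  have hvC : ((v : ℝ) : ℂ) ≠ 0 := by simpa using hv.ne'
  have hcC : ((c : ℝ) : ℂ) ≠ 0 := by simpa using hc.ne'
  set R := ∑ j, Bl j with hR_def
  set R' := ∑ j, Br j with hR'_def
  have hRpsd : R.PosSemidef := psd_sum _ hBl
  have hR'psd : R'.PosSemidef := psd_sum _ hBr
  have hzl' : ∀ i j, i ≠ j → Nl i * Bl j = 0 := by
    intro i j hij
    have h1 := congrArg conjTranspose (hzl i j hij)
    simpa [conjTranspose_mul, (hNl i).1.eq, (hBl j).1.eq] using h1
  have hzr' : ∀ i j, i ≠ j → Nr i * Br j = 0 := by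
    intro i j hij
    have h1 := congrArg conjTranspose (hzr i j hij)
    simpa [conjTranspose_mul, (hNr i).1.eq, (hBr j).1.eq] using h1
  have hTR : (∑ i, Nl i) * R = ((v : ℝ) : ℂ) • 1 := by
    rw [Matrix.sum_mul]
    calc ∑ i, Nl i * R = ∑ i, Nl i * Bl i := by
          refine Finset.sum_congr rfl fun i _ => ?_
          rw [hR_def, Matrix.mul_sum]
          rw [Finset.sum_eq_single i]
          · intro j _ hji
            exact hzl' i j (Ne.symm hji)
          · simp
    _ = ((v : ℝ) : ℂ) • 1 := core hd Bl Nl hBl hNl hzl hv htl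
  have hT'R' : (∑ i, Nr i) * R' = ((c : ℝ) : ℂ) • 1 := by
    rw [Matrix.sum_mul]
    calc ∑ i, Nr i * R' = ∑ i, Nr i * Br i := by
          refine Finset.sum_congr rfl fun i _ => ?_
          rw [hR'_def, Matrix.mul_sum]
          rw [Finset.sum_eq_single i]
          · intro j _ hji
            exact hzr' i j (Ne.symm hji)
          · simp
    _ = ((c : ℝ) : ℂ) • 1 := core hd Br Nr hBr hNr hzr hc htrr
  -- traces of the marginals
  have htrNl : ∀ i, (Nl i).trace = ((v + d * c : ℝ) : ℂ) := by
    intro i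
    have e : Nl i = Nl i * R + Nl i * R' := by
      rw [← Matrix.mul_add, hsum, Matrix.mul_one]
    rw [e, Matrix.trace_add]
    have e1 : (Nl i * R).trace = ((v : ℝ) : ℂ) := by
      rw [hR_def, Matrix.mul_sum, Matrix.trace_sum, Finset.sum_eq_single i]
      · exact htl i
      · intro j _ hji
        rw [hzl' i j (Ne.symm hji), Matrix.trace_zero]
      · simp
    have e2 : (Nl i * R').trace = ((d * c : ℝ) : ℂ) := by
      rw [hR'_def, Matrix.mul_sum, Matrix.trace_sum]
      rw [Finset.sum_congr rfl (fun j _ => hc1 i j)]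
      simp [Finset.sum_const, Fintype.card_fin]
      try push_cast
      try ring
    rw [e1, e2]
    push_cast
    ring
  have htrNr : ∀ i, (Nr i).trace = ((d * c + c : ℝ) : ℂ) := by
    intro i
    have e : Nr i = Nr i * R + Nr i * R' := by
      rw [← Matrix.mul_add, hsum, Matrix.mul_one]
    rw [e, Matrix.trace_add]
    have e1 : (Nr i * R).trace = ((d * c : ℝ) : ℂ) := by
      rw [hR_def, Matrix.mul_sum, Matrix.trace_sum]
      rw [Finset.sum_congr rfl (fun j _ => hc2 i j)]
      simp [Finset.sum_const, Fintype.card_fin]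
      try push_cast
      try ring
    have e2 : (Nr i * R').trace = ((c : ℝ) : ℂ) := by
      rw [hR'_def, Matrix.mul_sum, Matrix.trace_sum, Finset.sum_eq_single i]
      · exact htrr i
      · intro j _ hji
        rw [hzr' i j (Ne.symm hji), Matrix.trace_zero]
      · simp
    rw [e1, e2]
    push_cast
    ring
  -- the inverses
  set W := (((v : ℝ) : ℂ))⁻¹ • (∑ i, Nl i) with hW_def
  set W' := (((c : ℝ) : ℂ))⁻¹ • (∑ i, Nr i) with hW'_def
  have hWR : W * R = 1 := by
    rw [hW_def, smul_mul_assoc, hTR, smul_smul, inv_mul_cancel₀ hvC, one_smul]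
  have hW'R' : W' * R' = 1 := by
    rw [hW'_def, smul_mul_assoc, hT'R', smul_smul, inv_mul_cancel₀ hcC, one_smul]
  have htrW : W.trace = (d : ℂ) + 1 := by
    rw [hW_def, Matrix.trace_smul, Matrix.trace_sum]
    rw [Finset.sum_congr rfl (fun i _ => htrNl i)]
    simp only [Finset.sum_const, Finset.card_univ, Fintype.card_fin, nsmul_eq_mul, smul_eq_mul]
    rw [hv_def]
    push_cast
    field_simp
  have htrW' : W'.trace = (d : ℂ) ^ 2 + d := by
    rw [hW'_def, Matrix.trace_smul, Matrix.trace_sum]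
    rw [Finset.sum_congr rfl (fun i _ => htrNr i)]
    simp only [Finset.sum_const, Finset.card_univ, Fintype.card_fin, nsmul_eq_mul, smul_eq_mul]
    push_cast
    field_simp
  clear_value W W'
  clear hW_def hW'_def
  have hRW : R * W = 1 := mul_eq_one_comm.mp hWR
  have hR'W' : R' * W' = 1 := mul_eq_one_comm.mp hW'R'
  have hR'1 : R' = 1 - R := by
    rw [← hsum]; abel
  have hRR' : R * R' = R' * R := by
    rw [hR'1, Matrix.mul_sub, Matrix.sub_mul, Matrix.mul_one, Matrix.one_mul]
  have hQG : (R * R') * (W' * W) = 1 := by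
    calc (R * R') * (W' * W) = R * (R' * W') * W := by noncomm_ring
    _ = 1 := by rw [hR'W', Matrix.mul_one, hRW]
  have hQpsd : (R * R').PosSemidef := by
    set P := CFC.sqrt R with hP_def
    have hPP : P * P = R := by
      have h1 := CFC.sq_sqrt R hRpsd.nonneg
      rwa [pow_two] at h1
    have hPherm : Pᴴ = P := (CFC.sqrt_nonneg R).posSemidef.1
    have hPR' : P * R' = R' * P := by
      have hPR : P * R = R * P := by
        rw [← hPP]; noncomm_ring
      rw [hR'1, Matrix.mul_sub, Matrix.sub_mul, Matrix.mul_one, Matrix.one_mul, hPR]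
    have e : R * R' = Pᴴ * R' * P := by
      rw [hPherm, ← hPP]
      calc P * P * R' = P * (P * R') := by rw [Matrix.mul_assoc]
      _ = P * (R' * P) := by rw [hPR']
      _ = P * R' * P := by rw [Matrix.mul_assoc]
    rw [e]
    exact hR'psd.conjTranspose_mul_mul_same P
  have hGpsd : (W' * W).PosSemidef := by
    have e : W' * W = (R * R')⁻¹ := (inv_eq_right_inv hQG).symm
    rw [e]
    exact hQpsd.inv
  set S := ((d : ℂ) + 1) • R - (d : ℂ) • (1 : Matrix (Fin d) (Fin d) ℂ) with hS_def
  have hWQ : W * (R * R') = R' := by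
    rw [← Matrix.mul_assoc, hWR, Matrix.one_mul]
  have hW'Q : W' * (R * R') = R := by
    rw [hRR', ← Matrix.mul_assoc, hW'R', Matrix.one_mul]
  set Z := ((d : ℂ) ^ 2) • W + W' - (((d : ℂ) + 1) ^ 2) • (1 : Matrix (Fin d) (Fin d) ℂ)
    with hZ_def
  have hZQ : Z * (R * R') = S * S := by
    rw [hZ_def, Matrix.sub_mul, Matrix.add_mul, smul_mul_assoc, smul_mul_assoc, hWQ, hW'Q,
      hS_def, hR'1]
    have expand : ((d : ℂ) ^ 2) • (1 - R) + R - ((d : ℂ) + 1) ^ 2 • ((1 : Matrix (Fin d) (Fin d) ℂ) * (R * (1 - R)))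
        = (((d : ℂ) + 1) ^ 2) • (R * R) - (2 * d * ((d : ℂ) + 1)) • R
          + ((d : ℂ) ^ 2) • (1 : Matrix (Fin d) (Fin d) ℂ) := by
      rw [Matrix.one_mul, Matrix.mul_sub, Matrix.mul_one]
      module
    have expand2 : (((d : ℂ) + 1) • R - (d : ℂ) • (1 : Matrix (Fin d) (Fin d) ℂ))
        * (((d : ℂ) + 1) • R - (d : ℂ) • 1)
        = (((d : ℂ) + 1) ^ 2) • (R * R) - (2 * d * ((d : ℂ) + 1)) • R
          + ((d : ℂ) ^ 2) • (1 : Matrix (Fin d) (Fin d) ℂ) := by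
      simp only [Matrix.sub_mul, Matrix.mul_sub, smul_mul_assoc, Matrix.mul_smul,
        Matrix.one_mul, Matrix.mul_one, smul_smul]
      module
    rw [expand2, ← expand]
  have htrZ : Z.trace = 0 := by
    rw [hZ_def, Matrix.trace_sub, Matrix.trace_add, Matrix.trace_smul, Matrix.trace_smul,
      htrW, htrW', Matrix.trace_one]
    simp only [smul_eq_mul, Fintype.card_fin]
    push_cast
    ring
  have hZG : Z = S * S * (W' * W) := by
    calc Z = Z * ((R * R') * (W' * W)) := by rw [hQG, Matrix.mul_one]
    _ = (Z * (R * R')) * (W' * W) := (Matrix.mul_assoc Z (R * R') (W' * W)).symm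
    _ = S * S * (W' * W) := by rw [hZQ]
  have hSherm : Sᴴ = S := by
    rw [hS_def]
    simp only [conjTranspose_sub, conjTranspose_smul, conjTranspose_one, hRpsd.1.eq]
    congr 1 <;> simp [starRingEnd_apply]
  have hMpsd : (Sᴴ * (W' * W) * S).PosSemidef := hGpsd.conjTranspose_mul_mul_same S
  have hMtr : (Sᴴ * (W' * W) * S).trace = 0 := by
    rw [hSherm]
    calc (S * (W' * W) * S).trace = (S * S * (W' * W)).trace :=
          Matrix.trace_mul_cycle S (W' * W) S
    _ = Z.trace := by rw [← hZG]
    _ = 0 := htrZ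
  have hM0 : Sᴴ * (W' * W) * S = 0 := psd_eq_zero_of_trace_zero hMpsd hMtr
  obtain ⟨Y, hY⟩ := posSemidef_iff_eq_transpose_mul_self.mp hGpsd
  have hYS : Y * S = 0 := by
    apply conjTranspose_mul_self_eq_zero.mp
    have e : (Y * S)ᴴ * (Y * S) = Sᴴ * (W' * W) * S := by
      rw [conjTranspose_mul, hY]
      noncomm_ring
    rw [e, hM0]
  have hGS : (W' * W) * S = 0 := by
    rw [hY, Matrix.mul_assoc, hYS, Matrix.mul_zero]
  have hS0 : S = 0 := by
    calc S = ((R * R') * (W' * W)) * S := by rw [hQG, Matrix.one_mul]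
    _ = (R * R') * ((W' * W) * S) := by rw [Matrix.mul_assoc]
    _ = 0 := by rw [hGS, Matrix.mul_zero]
  have hReq : R = ((d : ℂ) / ((d : ℂ) + 1)) • 1 := by
    have e0 : ((d : ℂ) + 1) • R - (d : ℂ) • (1 : Matrix (Fin d) (Fin d) ℂ) = 0 := by
      rw [← hS_def]; exact hS0
    have e1 : ((d : ℂ) + 1) • R = (d : ℂ) • (1 : Matrix (Fin d) (Fin d) ℂ) :=
      sub_eq_zero.mp e0
    calc R = (((d : ℂ) + 1)⁻¹ * ((d : ℂ) + 1)) • R := by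
          rw [inv_mul_cancel₀ hd1C, one_smul]
    _ = ((d : ℂ) + 1)⁻¹ • (((d : ℂ) + 1) • R) := by rw [← smul_smul]
    _ = ((d : ℂ) + 1)⁻¹ • ((d : ℂ) • (1 : Matrix (Fin d) (Fin d) ℂ)) := by rw [e1]
    _ = ((d : ℂ) / ((d : ℂ) + 1)) • 1 := by
          rw [smul_smul]
          congr 1
          field_simp
  have hR'eq : R' = ((1 : ℂ) / ((d : ℂ) + 1)) • 1 := by
    rw [hR'1, hReq]
    have e : (1 : Matrix (Fin d) (Fin d) ℂ) - ((d : ℂ) / ((d : ℂ) + 1)) • 1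
        = ((1 : ℂ) - (d : ℂ) / ((d : ℂ) + 1)) • 1 := by
      rw [sub_smul, one_smul]
    rw [e]
    congr 1
    field_simp
    ring
  have hαne : ((d : ℂ) / ((d : ℂ) + 1)) ≠ 0 := div_ne_zero hdC hd1C
  have hβne : ((1 : ℂ) / ((d : ℂ) + 1)) ≠ 0 := div_ne_zero one_ne_zero hd1C
  rw [hReq] at hTR
  rw [Matrix.mul_smul, Matrix.mul_one] at hTR
  rw [hR'eq] at hT'R'
  rw [Matrix.mul_smul, Matrix.mul_one] at hT'R'
  have hT : (∑ i, Nl i) = (((d : ℂ) / ((d : ℂ) + 1))⁻¹ * ((v : ℝ) : ℂ)) • 1 := by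
    calc (∑ i, Nl i)
        = ((d : ℂ) / ((d : ℂ) + 1))⁻¹ • (((d : ℂ) / ((d : ℂ) + 1)) • (∑ i, Nl i)) := by
          rw [smul_smul, inv_mul_cancel₀ hαne, one_smul]
    _ = ((d : ℂ) / ((d : ℂ) + 1))⁻¹ • (((v : ℝ) : ℂ) • 1) := by rw [hTR]
    _ = _ := by rw [smul_smul]
  have hT' : (∑ i, Nr i) = (((1 : ℂ) / ((d : ℂ) + 1))⁻¹ * ((c : ℝ) : ℂ)) • 1 := by
    calc (∑ i, Nr i)
        = ((1 : ℂ) / ((d : ℂ) + 1))⁻¹ • (((1 : ℂ) / ((d : ℂ) + 1)) • (∑ i, Nr i)) := by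
          rw [smul_smul, inv_mul_cancel₀ hβne, one_smul]
    _ = ((1 : ℂ) / ((d : ℂ) + 1))⁻¹ • (((c : ℝ) : ℂ) • 1) := by rw [hT'R']
    _ = _ := by rw [smul_smul]
  rw [hT, hT', ← add_smul]
  congr 1
  rw [hv_def]
  push_cast
  field_simp

private lemma sum3 {α : Type*} [AddCommMonoid α] {n : Type*} [Fintype n]
    (f : n → n → n → α) :
    ∑ m, ∑ a, ∑ b, f m a b = ∑ b, ∑ a, ∑ m, f m a b := by
  calc ∑ m, ∑ a, ∑ b, f m a b = ∑ m, ∑ b, ∑ a, f m a b :=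
        Finset.sum_congr rfl fun m _ => Finset.sum_comm
  _ = ∑ b, ∑ m, ∑ a, f m a b := Finset.sum_comm
  _ = ∑ b, ∑ a, ∑ m, f m a b := Finset.sum_congr rfl fun b _ => Finset.sum_comm

private lemma sum4 {α : Type*} [AddCommMonoid α] {n : Type*} [Fintype n]
    (f : n → n → n → n → α) :
    ∑ k, ∑ l, ∑ a, ∑ b, f k l a b = ∑ a, ∑ k, ∑ b, ∑ l, f k l a b := by
  calc ∑ k, ∑ l, ∑ a, ∑ b, f k l a b = ∑ k, ∑ a, ∑ l, ∑ b, f k l a b :=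
        Finset.sum_congr rfl fun k _ => Finset.sum_comm
  _ = ∑ a, ∑ k, ∑ l, ∑ b, f k l a b := Finset.sum_comm
  _ = ∑ a, ∑ k, ∑ b, ∑ l, f k l a b :=
        Finset.sum_congr rfl fun a _ => Finset.sum_congr rfl fun k _ => Finset.sum_comm

private lemma sum5 {α : Type*} [AddCommMonoid α] {n : Type*} [Fintype n]
    (f : n → n → n → n → n → α) :
    ∑ k, ∑ l, ∑ a, ∑ b, ∑ s, f k l a b s = ∑ s, ∑ a, ∑ k, ∑ b, ∑ l, f k l a b s := by
  calc ∑ k, ∑ l, ∑ a, ∑ b, ∑ s, f k l a b s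
      = ∑ k, ∑ l, ∑ a, ∑ s, ∑ b, f k l a b s :=
        Finset.sum_congr rfl fun k _ => Finset.sum_congr rfl fun l _ =>
          Finset.sum_congr rfl fun a _ => Finset.sum_comm
  _ = ∑ k, ∑ l, ∑ s, ∑ a, ∑ b, f k l a b s :=
        Finset.sum_congr rfl fun k _ => Finset.sum_congr rfl fun l _ => Finset.sum_comm
  _ = ∑ k, ∑ s, ∑ l, ∑ a, ∑ b, f k l a b s :=
        Finset.sum_congr rfl fun k _ => Finset.sum_comm
  _ = ∑ s, ∑ k, ∑ l, ∑ a, ∑ b, f k l a b s := Finset.sum_comm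
  _ = ∑ s, ∑ k, ∑ a, ∑ l, ∑ b, f k l a b s :=
        Finset.sum_congr rfl fun s _ => Finset.sum_congr rfl fun k _ => Finset.sum_comm
  _ = ∑ s, ∑ a, ∑ k, ∑ l, ∑ b, f k l a b s :=
        Finset.sum_congr rfl fun s _ => Finset.sum_comm
  _ = ∑ s, ∑ a, ∑ k, ∑ b, ∑ l, f k l a b s :=
        Finset.sum_congr rfl fun s _ => Finset.sum_congr rfl fun a _ =>
          Finset.sum_congr rfl fun k _ => Finset.sum_comm

private theorem marginalB (d : ℕ) (hd : 2 ≤ d)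
    (ρ : Matrix (Fin d × Fin d) (Fin d × Fin d) ℂ) (hρ : ρ.PosSemidef)
    (A B : Fin d ⊕ Fin d → Matrix (Fin d) (Fin d) ℂ)
    (hA : ∀ x, (A x).PosSemidef) (hB : ∀ y, (B y).PosSemidef)
    (hAsum : (∑ x, A x) = 1) (hBsum : (∑ y, B y) = 1)
    (hcorr : ∀ x y, (ρ * (A x ⊗ₖ B y)).trace = (Pmat d x y : ℂ)) :
    ∀ i j : Fin d, (∑ k : Fin d, ρ (k, i) (k, j)) = if i = j then ((1 / d : ℝ) : ℂ) else 0 := by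
  classical
  have hd0 : 0 < d := by omega
  have hdR : (0 : ℝ) < d := by exact_mod_cast hd0
  set c : ℝ := 1 / (d * ((d : ℝ) + 1) ^ 2) with hc_def
  have hc : 0 < c := by rw [hc_def]; positivity
  set N : (Fin d ⊕ Fin d) → Matrix (Fin d) (Fin d) ℂ :=
    fun x => Matrix.of fun k l => ∑ a, ∑ b, (A x) b a * ρ (a, k) (b, l) with hN_def
  -- trace identity
  have hNtr : ∀ x y, (N x * B y).trace = (ρ * (A x ⊗ₖ B y)).trace := by
    intro x y
    have l1 : (N x * B y).trace
        = ∑ k, ∑ l, ∑ a, ∑ b, A x b a * ρ (a, k) (b, l) * B y l k := by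
      simp only [Matrix.trace, Matrix.diag, Matrix.mul_apply, hN_def, Matrix.of_apply]
      refine Finset.sum_congr rfl fun k _ => Finset.sum_congr rfl fun l _ => ?_
      rw [Finset.sum_mul]
      exact Finset.sum_congr rfl fun a _ => by rw [Finset.sum_mul]
    have l2 : (ρ * (A x ⊗ₖ B y)).trace
        = ∑ a, ∑ k, ∑ b, ∑ l, A x b a * ρ (a, k) (b, l) * B y l k := by
      simp only [Matrix.trace, Matrix.diag, Matrix.mul_apply, kroneckerMap_apply,
        Fintype.sum_prod_type]
      refine Finset.sum_congr rfl fun a _ => Finset.sum_congr rfl fun k _ =>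
        Finset.sum_congr rfl fun b _ => Finset.sum_congr rfl fun l _ => by ring
    rw [l1, l2]
    exact sum4 fun k l a b => A x b a * ρ (a, k) (b, l) * B y l k
  -- Hermitian
  have hNherm : ∀ x, (N x).IsHermitian := by
    intro x
    show (N x)ᴴ = N x
    ext k l
    simp only [conjTranspose_apply, hN_def, Matrix.of_apply, star_sum, star_mul']
    rw [Finset.sum_comm]
    refine Finset.sum_congr rfl fun o _ => Finset.sum_congr rfl fun i2 _ => ?_
    rw [hρ.1.apply, (hA x).1.apply]
    try ring
  -- PSD
  have hNpsd : ∀ x, (N x).PosSemidef := by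
    intro x
    obtain ⟨C, hC⟩ := posSemidef_iff_eq_transpose_mul_self.mp (hA x)
    refine Matrix.PosSemidef.of_dotProduct_mulVec_nonneg (hNherm x) ?_
    intro xv
    set w : Fin d → (Fin d × Fin d → ℂ) := fun s => fun p => star (C s p.1) * xv p.2 with hw_def
    have e : dotProduct (star xv) ((N x) *ᵥ xv)
        = ∑ s, dotProduct (star (w s)) (ρ *ᵥ (w s)) := by
      have l1 : dotProduct (star xv) ((N x) *ᵥ xv)
          = ∑ k, ∑ l, ∑ a, ∑ b, ∑ s,
              star (xv k) * (star (C s b) * C s a) * ρ (a, k) (b, l) * xv l := by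
        simp only [dotProduct, Matrix.mulVec, hN_def, Matrix.of_apply, Pi.star_apply,
          hC, Matrix.mul_apply, conjTranspose_apply]
        refine Finset.sum_congr rfl fun k _ => ?_
        rw [Finset.mul_sum]
        refine Finset.sum_congr rfl fun l _ => ?_
        rw [Finset.sum_mul, Finset.mul_sum]
        refine Finset.sum_congr rfl fun a _ => ?_
        rw [Finset.sum_mul, Finset.mul_sum]
        refine Finset.sum_congr rfl fun b _ => ?_
        rw [Finset.sum_mul, Finset.sum_mul, Finset.mul_sum]
        refine Finset.sum_congr rfl fun s _ => by ring
      have l2 : ∑ s, dotProduct (star (w s)) (ρ *ᵥ (w s))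
          = ∑ s, ∑ a, ∑ k, ∑ b, ∑ l,
              star (xv k) * (star (C s b) * C s a) * ρ (a, k) (b, l) * xv l := by
        refine Finset.sum_congr rfl fun s _ => ?_
        simp only [dotProduct, Matrix.mulVec, hw_def, Pi.star_apply,
          Fintype.sum_prod_type, star_mul', star_star]
        refine Finset.sum_congr rfl fun a _ => Finset.sum_congr rfl fun k _ => ?_
        rw [Finset.mul_sum]
        refine Finset.sum_congr rfl fun b _ => ?_
        rw [Finset.mul_sum]
        refine Finset.sum_congr rfl fun l _ => by ring
      rw [l1, l2]
      exact sum5 fun k l a b s => star (xv k) * (star (C s b) * C s a) * ρ (a, k) (b, l) * xv l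
    rw [e]
    exact Finset.sum_nonneg fun s _ => hρ.dotProduct_mulVec_nonneg (w s)
  -- zero entries kill
  have hzero : ∀ x y, (ρ * (A x ⊗ₖ B y)).trace = 0 → B y * N x = 0 := by
    intro x y h
    have hz : (A x ⊗ₖ B y) * ρ = 0 :=
      mul_eq_zero_of_trace_mul_zero hρ (kron_psd (hA x) (hB y)) h
    ext k l
    have e : (B y * N x) k l = ∑ b, ((A x ⊗ₖ B y) * ρ) (b, k) (b, l) := by
      simp only [Matrix.mul_apply, hN_def, Matrix.of_apply, kroneckerMap_apply,
        Fintype.sum_prod_type]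
      have l1 : ∑ m, B y k m * (∑ a, ∑ b, A x b a * ρ (a, m) (b, l))
          = ∑ m, ∑ a, ∑ b, A x b a * B y k m * ρ (a, m) (b, l) := by
        refine Finset.sum_congr rfl fun m _ => ?_
        rw [Finset.mul_sum]
        refine Finset.sum_congr rfl fun a _ => ?_
        rw [Finset.mul_sum]
        refine Finset.sum_congr rfl fun b _ => by ring
      rw [l1, sum3 fun m a b => A x b a * B y k m * ρ (a, m) (b, l)]
    rw [e, hz]
    simp
  -- the marginal
  have hNsum : (∑ x, N x) = Matrix.of fun k l => ∑ a, ρ (a, k) (a, l) := by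
    ext k l
    simp only [Matrix.sum_apply, hN_def, Matrix.of_apply]
    rw [Finset.sum_comm]
    refine Finset.sum_congr rfl fun a _ => ?_
    rw [Finset.sum_comm]
    calc ∑ b, ∑ x, A x b a * ρ (a, k) (b, l)
        = ∑ b, (1 : Matrix (Fin d) (Fin d) ℂ) b a * ρ (a, k) (b, l) := by
          refine Finset.sum_congr rfl fun b _ => ?_
          rw [← Finset.sum_mul, ← Matrix.sum_apply, hAsum]
    _ = ρ (a, k) (a, l) := by
          simp [Matrix.one_apply]
  -- instantiate master
  have hzl : ∀ i j, i ≠ j → B (Sum.inl j) * N (Sum.inl i) = 0 := by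
    intro i j hij
    apply hzero
    rw [hcorr]
    simp [Pmat, hij]
  have hzr : ∀ i j, i ≠ j → B (Sum.inr j) * N (Sum.inr i) = 0 := by
    intro i j hij
    apply hzero
    rw [hcorr]
    simp [Pmat, hij]
  have htl : ∀ i, (N (Sum.inl i) * B (Sum.inl i)).trace = (((d : ℝ) ^ 2 * c : ℝ) : ℂ) := by
    intro i
    rw [hNtr, hcorr]
    have e : Pmat d (Sum.inl i) (Sum.inl i) = (d : ℝ) ^ 2 * c := by
      simp [Pmat, hc_def]
      ring
    rw [e]
  have hc1 : ∀ i j, (N (Sum.inl i) * B (Sum.inr j)).trace = ((c : ℝ) : ℂ) := by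
    intro i j
    rw [hNtr, hcorr]
    have e : Pmat d (Sum.inl i) (Sum.inr j) = c := by
      simp [Pmat, hc_def]
    rw [e]
  have hc2 : ∀ i j, (N (Sum.inr i) * B (Sum.inl j)).trace = ((c : ℝ) : ℂ) := by
    intro i j
    rw [hNtr, hcorr]
    have e : Pmat d (Sum.inr i) (Sum.inl j) = c := by
      simp [Pmat, hc_def]
    rw [e]
  have htrr : ∀ i, (N (Sum.inr i) * B (Sum.inr i)).trace = ((c : ℝ) : ℂ) := by
    intro i
    rw [hNtr, hcorr]
    have e : Pmat d (Sum.inr i) (Sum.inr i) = c := by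
      simp [Pmat, hc_def]
    rw [e]
  have hsum' : (∑ j, B (Sum.inl j)) + (∑ j, B (Sum.inr j)) = 1 := by
    rw [← Fintype.sum_sum_type]
    exact hBsum
  have happ := master hd0 (fun j => B (Sum.inl j)) (fun j => B (Sum.inr j))
    (fun i => N (Sum.inl i)) (fun i => N (Sum.inr i))
    (fun i => hB _) (fun i => hB _) (fun i => hNpsd _) (fun i => hNpsd _)
    hsum' hzl hzr hc htl hc1 hc2 htrr
  have e1 : (∑ x, N x) = ((c * ((d : ℝ) + 1) ^ 2 : ℝ) : ℂ) • 1 := by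
    rw [Fintype.sum_sum_type]
    exact happ
  rw [hNsum] at e1
  intro i j
  have hent := congrFun (congrFun e1 i) j
  simp only [Matrix.of_apply, Matrix.smul_apply, Matrix.one_apply, smul_eq_mul] at hent
  have hscalar : (c * ((d : ℝ) + 1) ^ 2 : ℝ) = 1 / d := by
    rw [hc_def]
    field_simp
  rw [hscalar] at hent
  rw [hent]
  by_cases hij : i = j <;> simp [hij]

end S5

/-- if a `d × d` bipartite quantum state `ρ` together with POVMs
`{A_x}`, `{B_y}` (`2d` outcomes each) generates the correlation `P`, then both reduced
states of `ρ` are maximally mixed. -/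
theorem stmt5 (d : ℕ) (hd : 2 ≤ d)
    (ρ : Matrix (Fin d × Fin d) (Fin d × Fin d) ℂ)
    (hρ : ρ.PosSemidef) (hρtr : ρ.trace = 1)
    (A B : Fin d ⊕ Fin d → Matrix (Fin d) (Fin d) ℂ)
    (hA : ∀ x, (A x).PosSemidef) (hB : ∀ y, (B y).PosSemidef)
    (hAsum : (∑ x, A x) = 1) (hBsum : (∑ y, B y) = 1)
    (hcorr : ∀ x y, (ρ * (A x ⊗ₖ B y)).trace = (Pmat d x y : ℂ)) :
    ∀ i j : Fin d,
      (∑ k : Fin d, ρ (i, k) (j, k) = if i = j then ((1 / d : ℝ) : ℂ) else 0) ∧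
      (∑ k : Fin d, ρ (k, i) (k, j) = if i = j then ((1 / d : ℝ) : ℂ) else 0) := by
  intro i j
  refine ⟨?_, S5.marginalB d hd ρ hρ A B hA hB hAsum hBsum hcorr i j⟩
  have hsym : ∀ x y, Pmat d x y = Pmat d y x := by
    intro x y
    rcases x with xi | xi <;> rcases y with yi | yi <;> simp [Pmat, eq_comm]
  set ρ' : Matrix (Fin d × Fin d) (Fin d × Fin d) ℂ := ρ.submatrix Prod.swap Prod.swap
    with hρ'_def
  have hρ'psd : ρ'.PosSemidef := hρ.submatrix _
  have hcorr' : ∀ x y, (ρ' * (B x ⊗ₖ A y)).trace = (Pmat d x y : ℂ) := by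
    intro x y
    have e : (ρ' * (B x ⊗ₖ A y)).trace = (ρ * (A y ⊗ₖ B x)).trace := by
      simp only [Matrix.trace, Matrix.diag, Matrix.mul_apply, hρ'_def, Matrix.submatrix_apply,
        kroneckerMap_apply, Fintype.sum_prod_type, Prod.swap_prod_mk]
      rw [Finset.sum_comm]
      refine Finset.sum_congr rfl fun a _ => Finset.sum_congr rfl fun k _ => ?_
      rw [Finset.sum_comm]
      refine Finset.sum_congr rfl fun b _ => Finset.sum_congr rfl fun l _ => by ring
    rw [e, hcorr y x]
    exact_mod_cast hsym y x
  have h2 := S5.marginalB d hd ρ' hρ'psd B A hB hA hBsum hAsum hcorr' i j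
  simpa [hρ'_def, Matrix.submatrix_apply] using h2
end

section
/- Let d ≥ 2. Suppose ρ is a d×d bipartite quantum state and {A_x}_{x=1}^{2d}, {B_y}_{y=1}^{2d} are POVMs with 2d outcomes on each side such that tr(ρ·(A_x ⊗ B_y)) = P_{xy} for all x,y ∈ [2d]. Then every measurement operator A_x and B_y (x,y ∈ [2d]) has rank exactly 1. -/
open Matrix Kronecker ComplexOrder

section Aux

/-- trace (Aᴴ * A) = 0 implies A = 0 over ℂ -/
lemma trace_conjT_mul_self_eq_zero {m n : Type*} [Fintype m] [Fintype n]
    {A : Matrix m n ℂ} (h : (Aᴴ * A).trace = 0) : A = 0 := by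
  have h1 : (Aᴴ * A).trace = ((∑ j, ∑ i, Complex.normSq (A i j) : ℝ) : ℂ) := by
    simp only [Matrix.trace, Matrix.diag, Matrix.mul_apply, Matrix.conjTranspose_apply]
    push_cast
    refine Finset.sum_congr rfl fun j _ => Finset.sum_congr rfl fun i _ => ?_
    rw [Complex.star_def, mul_comm, Complex.mul_conj]
  rw [h1] at h
  have h2 : (∑ j, ∑ i, Complex.normSq (A i j) : ℝ) = 0 := by exact_mod_cast h
  ext i j
  have h3 : ∀ j' ∈ Finset.univ, (0:ℝ) ≤ ∑ i, Complex.normSq (A i j') :=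
    fun j' _ => Finset.sum_nonneg fun i _ => Complex.normSq_nonneg _
  have h4 := (Finset.sum_eq_zero_iff_of_nonneg h3).mp h2 j (Finset.mem_univ _)
  have h5 := (Finset.sum_eq_zero_iff_of_nonneg
    (fun i _ => Complex.normSq_nonneg (A i j))).mp h4 i (Finset.mem_univ _)
  simpa using Complex.normSq_eq_zero.mp h5

open scoped MatrixOrder in
/-- product of PSD matrices with zero trace is zero -/
lemma psd_mul_eq_zero_of_trace_zero {n : Type*} [Fintype n] [DecidableEq n]
    {ρ M : Matrix n n ℂ} (hρ : ρ.PosSemidef) (hM : M.PosSemidef)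
    (h : (ρ * M).trace = 0) : ρ * M = 0 := by
  set R := CFC.sqrt ρ with hRdef
  set S := CFC.sqrt M with hSdef
  have hR : R * R = ρ := CFC.sqrt_mul_sqrt_self ρ hρ.nonneg
  have hS : S * S = M := CFC.sqrt_mul_sqrt_self M hM.nonneg
  have hRH : Rᴴ = R := (CFC.sqrt_nonneg ρ).posSemidef.1
  have hSH : Sᴴ = S := (CFC.sqrt_nonneg M).posSemidef.1
  have key : (R * S)ᴴ * (R * S) = S * ρ * S := by
    rw [conjTranspose_mul, hRH, hSH, Matrix.mul_assoc, ← Matrix.mul_assoc R R S, hR,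
      ← Matrix.mul_assoc]
  have htr : ((R * S)ᴴ * (R * S)).trace = 0 := by
    rw [key, Matrix.trace_mul_cycle, hS, Matrix.trace_mul_comm, h]
  have hRS : R * S = 0 := trace_conjT_mul_self_eq_zero htr
  have hfact : ρ * M = R * R * (S * S) := by rw [hR, hS]
  rw [hfact, Matrix.mul_assoc R R (S * S), ← Matrix.mul_assoc R S S, hRS]
  simp

/-- conjTranspose of Kronecker product -/
lemma kron_conjTranspose {m n p q : Type*} (X : Matrix m n ℂ) (Y : Matrix p q ℂ) :
    (X ⊗ₖ Y)ᴴ = Xᴴ ⊗ₖ Yᴴ := by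
  ext ⟨i1, i2⟩ ⟨j1, j2⟩
  simp [Matrix.conjTranspose_apply, Matrix.kroneckerMap_apply, star_mul']

open scoped MatrixOrder in
/-- Kronecker product of PSD matrices is PSD -/
lemma kron_posSemidef {m p : Type*} [Fintype m] [Fintype p] [DecidableEq m] [DecidableEq p]
    {X : Matrix m m ℂ} {Y : Matrix p p ℂ} (hX : X.PosSemidef) (hY : Y.PosSemidef) :
    (X ⊗ₖ Y).PosSemidef := by
  have hX' : CFC.sqrt X * CFC.sqrt X = X := CFC.sqrt_mul_sqrt_self X hX.nonneg
  have hY' : CFC.sqrt Y * CFC.sqrt Y = Y := CFC.sqrt_mul_sqrt_self Y hY.nonneg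
  have key : X ⊗ₖ Y = (CFC.sqrt X ⊗ₖ CFC.sqrt Y)ᴴ * (CFC.sqrt X ⊗ₖ CFC.sqrt Y) := by
    rw [kron_conjTranspose, (CFC.sqrt_nonneg X).posSemidef.1, (CFC.sqrt_nonneg Y).posSemidef.1,
      ← Matrix.mul_kronecker_mul, hX', hY']
  rw [key]
  exact Matrix.posSemidef_conjTranspose_mul_self _

end Aux

section PTr

variable {d : ℕ}

/-- partial trace over the first factor -/
noncomputable def ptrA (Z : Matrix (Fin d × Fin d) (Fin d × Fin d) ℂ) :
    Matrix (Fin d) (Fin d) ℂ :=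
  fun k l => ∑ m, Z (m, k) (m, l)

/-- partial trace over the second factor -/
noncomputable def ptrB (Z : Matrix (Fin d × Fin d) (Fin d × Fin d) ℂ) :
    Matrix (Fin d) (Fin d) ℂ :=
  fun k l => ∑ m, Z (k, m) (l, m)

lemma ptrA_zero : ptrA (0 : Matrix (Fin d × Fin d) (Fin d × Fin d) ℂ) = 0 := by
  ext k l; simp [ptrA]

lemma ptrB_zero : ptrB (0 : Matrix (Fin d × Fin d) (Fin d × Fin d) ℂ) = 0 := by
  ext k l; simp [ptrB]

lemma trace_ptrA (Z : Matrix (Fin d × Fin d) (Fin d × Fin d) ℂ) :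
    (ptrA Z).trace = Z.trace := by
  simp only [Matrix.trace, Matrix.diag, ptrA, Fintype.sum_prod_type]
  exact Finset.sum_comm

lemma trace_ptrB (Z : Matrix (Fin d × Fin d) (Fin d × Fin d) ℂ) :
    (ptrB Z).trace = Z.trace := by
  simp only [Matrix.trace, Matrix.diag, ptrB, Fintype.sum_prod_type]

lemma ptrA_one_kron_mul (b : Matrix (Fin d) (Fin d) ℂ)
    (Z : Matrix (Fin d × Fin d) (Fin d × Fin d) ℂ) :
    ptrA ((1 ⊗ₖ b) * Z) = b * ptrA Z := by
  ext k l
  simp only [ptrA, Matrix.mul_apply, Fintype.sum_prod_type, Matrix.kroneckerMap_apply,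
    Matrix.one_apply, ite_mul, one_mul, zero_mul, mul_ite, mul_zero, mul_one,
    Finset.sum_ite_irrel, Finset.sum_ite_eq, Finset.sum_ite_eq', Finset.mem_univ, if_true,
    Finset.sum_const_zero, Finset.mul_sum]
  exact Finset.sum_comm

lemma ptrB_kron_one_mul (a : Matrix (Fin d) (Fin d) ℂ)
    (Z : Matrix (Fin d × Fin d) (Fin d × Fin d) ℂ) :
    ptrB ((a ⊗ₖ 1) * Z) = a * ptrB Z := by
  ext k l
  simp only [ptrB, Matrix.mul_apply, Fintype.sum_prod_type, Matrix.kroneckerMap_apply,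
    Matrix.one_apply, ite_mul, one_mul, zero_mul, mul_ite, mul_zero, mul_one,
    Finset.sum_ite_irrel, Finset.sum_ite_eq, Finset.sum_ite_eq', Finset.mem_univ, if_true,
    Finset.sum_const_zero, Finset.mul_sum]
  exact Finset.sum_comm

lemma ptrA_cyc (a : Matrix (Fin d) (Fin d) ℂ)
    (Z : Matrix (Fin d × Fin d) (Fin d × Fin d) ℂ) :
    ptrA (Z * (a ⊗ₖ 1)) = ptrA ((a ⊗ₖ 1) * Z) := by
  ext k l
  simp only [ptrA, Matrix.mul_apply, Fintype.sum_prod_type, Matrix.kroneckerMap_apply,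
    Matrix.one_apply, ite_mul, one_mul, zero_mul, mul_ite, mul_zero, mul_one,
    Finset.sum_ite_irrel, Finset.sum_ite_eq, Finset.sum_ite_eq', Finset.mem_univ, if_true,
    Finset.sum_const_zero]
  rw [Finset.sum_comm]
  exact Finset.sum_congr rfl fun m _ => Finset.sum_congr rfl fun n _ => mul_comm _ _

lemma ptrB_cyc (b : Matrix (Fin d) (Fin d) ℂ)
    (Z : Matrix (Fin d × Fin d) (Fin d × Fin d) ℂ) :
    ptrB (Z * (1 ⊗ₖ b)) = ptrB ((1 ⊗ₖ b) * Z) := by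
  ext k l
  simp only [ptrB, Matrix.mul_apply, Fintype.sum_prod_type, Matrix.kroneckerMap_apply,
    Matrix.one_apply, ite_mul, one_mul, zero_mul, mul_ite, mul_zero, mul_one,
    Finset.sum_ite_irrel, Finset.sum_ite_eq, Finset.sum_ite_eq', Finset.mem_univ, if_true,
    Finset.sum_const_zero]
  rw [Finset.sum_comm]
  exact Finset.sum_congr rfl fun m _ => Finset.sum_congr rfl fun n _ => mul_comm _ _

end PTr

open Module in
/-- If `b j * τ j ≠ 0` but `b l * τ j = 0` for `l ≠ j`, then every `b i` has rank 1. -/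
lemma rank_one_core {d : ℕ} (b τ : Fin d → Matrix (Fin d) (Fin d) ℂ)
    (hzero : ∀ l j, l ≠ j → b l * τ j = 0)
    (hne : ∀ j, b j * τ j ≠ 0) (i : Fin d) : (b i).rank = 1 := by
  classical
  have hcol : ∀ j, ∃ c, b j *ᵥ (fun r => τ j r c) ≠ 0 := by
    intro j
    by_contra hc
    push_neg at hc
    apply hne j
    ext k c
    have h1 := congrFun (hc c) k
    simpa [Matrix.mulVec, dotProduct, Matrix.mul_apply] using h1
  choose c hc using hcol
  set u : Fin d → (Fin d → ℂ) := fun j => fun r => τ j r (c j) with hu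
  have hmv : ∀ l j, b l *ᵥ u j = fun k => (b l * τ j) k (c j) := by
    intro l j
    ext k
    simp [hu, Matrix.mulVec, dotProduct, Matrix.mul_apply]
  have hu0 : ∀ l j, l ≠ j → b l *ᵥ u j = 0 := by
    intro l j hlj
    rw [hmv, hzero l j hlj]
    ext k; simp
  have hu1 : ∀ j, b j *ᵥ u j ≠ 0 := fun j => hc j
  have hli : LinearIndependent ℂ u := by
    rw [Fintype.linearIndependent_iff]
    intro g hg l
    have h2 : (b l).mulVecLin (∑ j, g j • u j) = 0 := by rw [hg]; simp
    rw [map_sum] at h2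
    simp only [Matrix.mulVecLin_apply, Matrix.mulVec_smul] at h2
    rw [Finset.sum_eq_single l] at h2
    · rcases smul_eq_zero.mp h2 with h | h
      · exact h
      · exact absurd h (hu1 l)
    · intro j _ hjl
      rw [hu0 l j (Ne.symm hjl), smul_zero]
    · intro h; exact absurd (Finset.mem_univ l) h
  have hker : Submodule.span ℂ (Set.range (fun j : {j : Fin d // j ≠ i} => u j.1)) ≤
      LinearMap.ker (b i).mulVecLin := by
    rw [Submodule.span_le]
    rintro _ ⟨⟨j, hj⟩, rfl⟩
    exact LinearMap.mem_ker.mpr (by simpa using hu0 i j (Ne.symm hj))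
  have hli' : LinearIndependent ℂ (fun j : {j : Fin d // j ≠ i} => u j.1) :=
    hli.comp _ Subtype.val_injective
  have hcard : Fintype.card {j : Fin d // j ≠ i} = d - 1 := by
    simp [Fintype.card_subtype_compl]
  have hspan : finrank ℂ (Submodule.span ℂ
      (Set.range (fun j : {j : Fin d // j ≠ i} => u j.1))) = d - 1 := by
    rw [finrank_span_eq_card hli', hcard]
  have hkge : d - 1 ≤ finrank ℂ (LinearMap.ker (b i).mulVecLin) := by
    rw [← hspan]; exact Submodule.finrank_mono hker
  have hrn : (b i).rank + finrank ℂ (LinearMap.ker (b i).mulVecLin) = d := by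
    have h3 := LinearMap.finrank_range_add_finrank_ker (b i).mulVecLin
    rwa [Module.finrank_fintype_fun_eq_card, Fintype.card_fin] at h3
  have hrpos : (b i).rank ≠ 0 := by
    intro h0
    have hbot : LinearMap.range (b i).mulVecLin = ⊥ := Submodule.finrank_eq_zero.mp h0
    have hmem : b i *ᵥ u i ∈ LinearMap.range (b i).mulVecLin := ⟨u i, rfl⟩
    rw [hbot, Submodule.mem_bot] at hmem
    exact hu1 i hmem
  have hd1 : 1 ≤ d := by
    rcases Nat.eq_zero_or_pos d with h | h
    · exact absurd i.2 (by omega)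
    · exact h
  omega

/-- B-side rank-1 certification from a perfectly-correlated block. -/
lemma rank_B_side {d : ℕ} (ρ : Matrix (Fin d × Fin d) (Fin d × Fin d) ℂ) (hρ : ρ.PosSemidef)
    (a b : Fin d → Matrix (Fin d) (Fin d) ℂ)
    (ha : ∀ j, (a j).PosSemidef) (hb : ∀ l, (b l).PosSemidef)
    (hz : ∀ j l, j ≠ l → (ρ * (a j ⊗ₖ b l)).trace = 0)
    (hnz : ∀ j, (ρ * (a j ⊗ₖ b j)).trace ≠ 0) :
    ∀ i, (b i).rank = 1 := by
  have hz0 : ∀ j l, j ≠ l → ρ * (a j ⊗ₖ b l) = 0 := fun j l hjl =>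
    psd_mul_eq_zero_of_trace_zero hρ (kron_posSemidef (ha j) (hb l)) (hz j l hjl)
  have hz0' : ∀ j l, j ≠ l → (a j ⊗ₖ b l) * ρ = 0 := by
    intro j l hjl
    have h := congrArg Matrix.conjTranspose (hz0 j l hjl)
    rwa [Matrix.conjTranspose_mul, hρ.1, kron_conjTranspose, (ha j).1, (hb l).1,
      Matrix.conjTranspose_zero] at h
  set τ : Fin d → Matrix (Fin d) (Fin d) ℂ := fun j => ptrA (ρ * (a j ⊗ₖ 1)) with hτ
  have key : ∀ l j, b l * τ j = ptrA ((a j ⊗ₖ b l) * ρ) := by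
    intro l j
    rw [hτ]
    calc b l * ptrA (ρ * (a j ⊗ₖ 1))
        = ptrA ((1 ⊗ₖ b l) * (ρ * (a j ⊗ₖ 1))) := (ptrA_one_kron_mul _ _).symm
      _ = ptrA (((1 ⊗ₖ b l) * ρ) * (a j ⊗ₖ 1)) := by rw [Matrix.mul_assoc]
      _ = ptrA ((a j ⊗ₖ 1) * ((1 ⊗ₖ b l) * ρ)) := ptrA_cyc _ _
      _ = ptrA (((a j ⊗ₖ 1) * (1 ⊗ₖ b l)) * ρ) := by rw [Matrix.mul_assoc]
      _ = ptrA ((a j ⊗ₖ b l) * ρ) := by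
          rw [← Matrix.mul_kronecker_mul, Matrix.mul_one, Matrix.one_mul]
  apply rank_one_core b τ
  · intro l j hlj
    rw [key, hz0' j l (Ne.symm hlj), ptrA_zero]
  · intro j h0
    apply hnz j
    have h1 : (b j * τ j).trace = 0 := by rw [h0, Matrix.trace_zero]
    rwa [key, trace_ptrA, Matrix.trace_mul_comm] at h1

/-- A-side rank-1 certification from a perfectly-correlated block. -/
lemma rank_A_side {d : ℕ} (ρ : Matrix (Fin d × Fin d) (Fin d × Fin d) ℂ) (hρ : ρ.PosSemidef)
    (a b : Fin d → Matrix (Fin d) (Fin d) ℂ)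
    (ha : ∀ j, (a j).PosSemidef) (hb : ∀ l, (b l).PosSemidef)
    (hz : ∀ j l, j ≠ l → (ρ * (a j ⊗ₖ b l)).trace = 0)
    (hnz : ∀ j, (ρ * (a j ⊗ₖ b j)).trace ≠ 0) :
    ∀ i, (a i).rank = 1 := by
  have hz0 : ∀ j l, j ≠ l → ρ * (a j ⊗ₖ b l) = 0 := fun j l hjl =>
    psd_mul_eq_zero_of_trace_zero hρ (kron_posSemidef (ha j) (hb l)) (hz j l hjl)
  have hz0' : ∀ j l, j ≠ l → (a j ⊗ₖ b l) * ρ = 0 := by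
    intro j l hjl
    have h := congrArg Matrix.conjTranspose (hz0 j l hjl)
    rwa [Matrix.conjTranspose_mul, hρ.1, kron_conjTranspose, (ha j).1, (hb l).1,
      Matrix.conjTranspose_zero] at h
  set σ : Fin d → Matrix (Fin d) (Fin d) ℂ := fun j => ptrB (ρ * (1 ⊗ₖ b j)) with hσ
  have key : ∀ l j, a l * σ j = ptrB ((a l ⊗ₖ b j) * ρ) := by
    intro l j
    rw [hσ]
    calc a l * ptrB (ρ * (1 ⊗ₖ b j))
        = ptrB ((a l ⊗ₖ 1) * (ρ * (1 ⊗ₖ b j))) := (ptrB_kron_one_mul _ _).symm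
      _ = ptrB (((a l ⊗ₖ 1) * ρ) * (1 ⊗ₖ b j)) := by rw [Matrix.mul_assoc]
      _ = ptrB ((1 ⊗ₖ b j) * ((a l ⊗ₖ 1) * ρ)) := ptrB_cyc _ _
      _ = ptrB (((1 ⊗ₖ b j) * (a l ⊗ₖ 1)) * ρ) := by rw [Matrix.mul_assoc]
      _ = ptrB ((a l ⊗ₖ b j) * ρ) := by
          rw [← Matrix.mul_kronecker_mul, Matrix.mul_one, Matrix.one_mul]
  apply rank_one_core a σ
  · intro l j hlj
    rw [key, hz0' l j hlj, ptrB_zero]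
  · intro j h0
    apply hnz j
    have h1 : (a j * σ j).trace = 0 := by rw [h0, Matrix.trace_zero]
    rwa [key, trace_ptrB, Matrix.trace_mul_comm] at h1

/-- if a `d × d` bipartite quantum state `ρ` together with POVMs
`{A_x}`, `{B_y}` (`2d` outcomes each) generates the correlation `P`, then every measurement
operator `A_x` and `B_y` has rank exactly 1. -/
theorem stmt6 (d : ℕ) (hd : 2 ≤ d)
    (ρ : Matrix (Fin d × Fin d) (Fin d × Fin d) ℂ)
    (hρ : ρ.PosSemidef) (hρtr : ρ.trace = 1)
    (A B : Fin d ⊕ Fin d → Matrix (Fin d) (Fin d) ℂ)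
    (hA : ∀ x, (A x).PosSemidef) (hB : ∀ y, (B y).PosSemidef)
    (hAsum : (∑ x, A x) = 1) (hBsum : (∑ y, B y) = 1)
    (hcorr : ∀ x y, (ρ * (A x ⊗ₖ B y)).trace = (Pmat d x y : ℂ)) :
    (∀ x, (A x).rank = 1) ∧ (∀ y, (B y).rank = 1) := by
  have hd0 : 0 < d := by omega
  have hdR : (0:ℝ) < d := by exact_mod_cast hd0
  have hX : (0:ℝ) < 1 / (d * (d + 1) ^ 2) := by positivity
  -- inl-block correlations
  have hzl : ∀ j l : Fin d, j ≠ l → (ρ * (A (Sum.inl j) ⊗ₖ B (Sum.inl l))).trace = 0 := by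
    intro j l hjl
    rw [hcorr]
    have : Pmat d (Sum.inl j) (Sum.inl l) = 0 := by
      show (1 / (d * (d + 1) ^ 2) : ℝ) * (if j = l then (d : ℝ)^2 else 0) = 0
      rw [if_neg hjl, mul_zero]
    rw [this]
    simp
  have hnzl : ∀ j : Fin d, (ρ * (A (Sum.inl j) ⊗ₖ B (Sum.inl j))).trace ≠ 0 := by
    intro j
    rw [hcorr]
    have : Pmat d (Sum.inl j) (Sum.inl j) = (1 / (d * (d + 1) ^ 2) : ℝ) * (d : ℝ)^2 := by
      show (1 / (d * (d + 1) ^ 2) : ℝ) * (if j = j then (d : ℝ)^2 else 0) = _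
      rw [if_pos rfl]
    rw [this]
    have hpos : (0:ℝ) < (1 / (d * (d + 1) ^ 2) : ℝ) * (d : ℝ)^2 := by positivity
    exact_mod_cast Complex.ofReal_ne_zero.mpr (ne_of_gt hpos)
  -- inr-block correlations
  have hzr : ∀ j l : Fin d, j ≠ l → (ρ * (A (Sum.inr j) ⊗ₖ B (Sum.inr l))).trace = 0 := by
    intro j l hjl
    rw [hcorr]
    have : Pmat d (Sum.inr j) (Sum.inr l) = 0 := by
      show (1 / (d * (d + 1) ^ 2) : ℝ) * (if j = l then 1 else 0) = 0
      rw [if_neg hjl, mul_zero]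
    rw [this]
    simp
  have hnzr : ∀ j : Fin d, (ρ * (A (Sum.inr j) ⊗ₖ B (Sum.inr j))).trace ≠ 0 := by
    intro j
    rw [hcorr]
    have : Pmat d (Sum.inr j) (Sum.inr j) = (1 / (d * (d + 1) ^ 2) : ℝ) := by
      show (1 / (d * (d + 1) ^ 2) : ℝ) * (if j = j then 1 else 0) = _
      rw [if_pos rfl, mul_one]
    rw [this]
    exact_mod_cast Complex.ofReal_ne_zero.mpr (ne_of_gt hX)
  constructor
  · intro x
    cases x with
    | inl i =>
      exact rank_A_side ρ hρ (fun j => A (Sum.inl j)) (fun j => B (Sum.inl j))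
        (fun j => hA _) (fun j => hB _) hzl hnzl i
    | inr i =>
      exact rank_A_side ρ hρ (fun j => A (Sum.inr j)) (fun j => B (Sum.inr j))
        (fun j => hA _) (fun j => hB _) hzr hnzr i
  · intro y
    cases y with
    | inl i =>
      exact rank_B_side ρ hρ (fun j => A (Sum.inl j)) (fun j => B (Sum.inl j))
        (fun j => hA _) (fun j => hB _) hzl hnzl i
    | inr i =>
      exact rank_B_side ρ hρ (fun j => A (Sum.inr j)) (fun j => B (Sum.inr j))
        (fun j => hA _) (fun j => hB _) hzr hnzr i
end

section
/- Let d ≥ 2. Suppose ρ is a d×d bipartite quantum state and {A_x}_{x=1}^{2d}, {B_y}_{y=1}^{2d} are POVMs with 2d outcomes on each side such that tr(ρ·(A_x ⊗ B_y)) = P_{xy} for all x,y ∈ [2d]. Then for all i,j ∈ [d] with i ≠ j, the matrix products satisfy A_i·A_j = 0, B_i·B_j = 0, A_{d+i}·A_{d+j} = 0, and B_{d+i}·B_{d+j} = 0. -/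
set_option linter.unusedSectionVars false
set_option linter.unusedVariables false
set_option maxHeartbeats 1000000

open Matrix Kronecker ComplexOrder

section
variable {n : Type*} [Fintype n] [DecidableEq n]
open scoped MatrixOrder

lemma Matrix.PosSemidef.exists_sqrt_aux {A : Matrix n n ℂ} (hA : A.PosSemidef) :
    ∃ B : Matrix n n ℂ, B.PosSemidef ∧ B * B = A :=
  ⟨CFC.sqrt A, Matrix.nonneg_iff_posSemidef.mp (CFC.sqrt_nonneg A),
    CFC.sqrt_mul_sqrt_self A hA.nonneg⟩

noncomputable def Matrix.PosSemidef.sqrt {A : Matrix n n ℂ} (hA : A.PosSemidef) :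
    Matrix n n ℂ :=
  hA.exists_sqrt_aux.choose

lemma Matrix.PosSemidef.posSemidef_sqrt {A : Matrix n n ℂ} (hA : A.PosSemidef) :
    hA.sqrt.PosSemidef :=
  hA.exists_sqrt_aux.choose_spec.1

lemma Matrix.PosSemidef.sqrt_mul_self {A : Matrix n n ℂ} (hA : A.PosSemidef) :
    hA.sqrt * hA.sqrt = A :=
  hA.exists_sqrt_aux.choose_spec.2

lemma Matrix.PosSemidef.exists_eq_ctm_aux {A : Matrix n n ℂ} (hA : A.PosSemidef) :
    ∃ B : Matrix n n ℂ, A = Bᴴ * B :=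
  ⟨hA.sqrt, by rw [hA.posSemidef_sqrt.isHermitian.eq, hA.sqrt_mul_self]⟩

end

namespace Stmt7Proof

variable {m n : Type*} [Fintype m] [Fintype n] [DecidableEq m] [DecidableEq n]

/-! ### Generalities on traces of products of positive semidefinite matrices -/

lemma trace_ctms (N : Matrix n n ℂ) :
    (Nᴴ * N).trace = ((∑ j, ∑ i, Complex.normSq (N i j) : ℝ) : ℂ) := by
  push_cast
  simp only [Matrix.trace, Matrix.diag, Matrix.mul_apply, Matrix.conjTranspose_apply]
  congr 1; funext j; congr 1; funext i
  rw [Complex.normSq_eq_conj_mul_self]; rfl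

lemma trace_ctms_nonneg (N : Matrix n n ℂ) : 0 ≤ ((Nᴴ * N).trace).re := by
  rw [trace_ctms]
  simp only [Complex.ofReal_re]
  apply Finset.sum_nonneg; intro j _
  exact Finset.sum_nonneg fun i _ => Complex.normSq_nonneg _

lemma trace_ctms_real (N : Matrix n n ℂ) :
    (Nᴴ * N).trace = (((Nᴴ * N).trace.re : ℝ) : ℂ) := by
  rw [trace_ctms]; simp

lemma trace_ctms_eq_zero {N : Matrix n n ℂ} (h : ((Nᴴ * N).trace).re = 0) : N = 0 := by
  rw [trace_ctms] at h
  simp only [Complex.ofReal_re] at h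
  have hz : ∀ j ∈ Finset.univ, (∑ i, Complex.normSq (N i j)) = 0 := by
    rw [← Finset.sum_eq_zero_iff_of_nonneg]
    · exact h
    · intro j _; exact Finset.sum_nonneg fun i _ => Complex.normSq_nonneg _
  ext i j
  have hj := hz j (Finset.mem_univ j)
  have hz2 : ∀ i ∈ Finset.univ, Complex.normSq (N i j) = 0 := by
    rw [← Finset.sum_eq_zero_iff_of_nonneg]
    · exact hj
    · intro i _; exact Complex.normSq_nonneg _
  have := hz2 i (Finset.mem_univ i)
  simpa using Complex.normSq_eq_zero.mp this

lemma psd_mul_trace_eq {X Y : Matrix n n ℂ} (hX : X.PosSemidef) (hY : Y.PosSemidef) :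
    (X * Y).trace
      = ((hY.sqrt * hX.sqrt)ᴴ * (hY.sqrt * hX.sqrt)).trace := by
  have hx : (hX.sqrt)ᴴ = hX.sqrt := hX.posSemidef_sqrt.isHermitian.eq
  have hy : (hY.sqrt)ᴴ = hY.sqrt := hY.posSemidef_sqrt.isHermitian.eq
  have key : (hY.sqrt * hX.sqrt)ᴴ * (hY.sqrt * hX.sqrt)
      = hX.sqrt * (hY.sqrt * hY.sqrt) * hX.sqrt := by
    rw [Matrix.conjTranspose_mul, hx, hy]; noncomm_ring
  rw [key, hY.sqrt_mul_self, Matrix.trace_mul_cycle, hX.sqrt_mul_self]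

lemma trace_mul_re_nonneg {X Y : Matrix n n ℂ} (hX : X.PosSemidef) (hY : Y.PosSemidef) :
    0 ≤ ((X * Y).trace).re := by
  rw [psd_mul_trace_eq hX hY]; exact trace_ctms_nonneg _

lemma trace_mul_real {X Y : Matrix n n ℂ} (hX : X.PosSemidef) (hY : Y.PosSemidef) :
    (X * Y).trace = (((X * Y).trace).re : ℂ) := by
  conv_lhs => rw [psd_mul_trace_eq hX hY, trace_ctms_real]
  rw [← psd_mul_trace_eq hX hY]

lemma trace_mul_eq_zero {X Y : Matrix n n ℂ} (hX : X.PosSemidef) (hY : Y.PosSemidef)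
    (h : ((X * Y).trace).re = 0) : X * Y = 0 := by
  rw [psd_mul_trace_eq hX hY] at h
  have hN := trace_ctms_eq_zero h
  have hxy : hX.sqrt * hY.sqrt = 0 := by
    have := congrArg Matrix.conjTranspose hN
    simpa [Matrix.conjTranspose_mul, hX.posSemidef_sqrt.isHermitian.eq,
      hY.posSemidef_sqrt.isHermitian.eq] using this
  have e1 : hX.sqrt * (hX.sqrt * hY.sqrt) * hY.sqrt = X * Y := by
    calc hX.sqrt * (hX.sqrt * hY.sqrt) * hY.sqrt
        = (hX.sqrt * hX.sqrt) * (hY.sqrt * hY.sqrt) := by noncomm_ring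
      _ = X * Y := by rw [hX.sqrt_mul_self, hY.sqrt_mul_self]
  rw [← e1, hxy]
  simp

/-- Rayleigh-type bound packaged as positive semidefiniteness of `tr(Y)•1 - Y`. -/
lemma smul_one_sub_psd {Y : Matrix n n ℂ} (hY : Y.PosSemidef) :
    ((((Y.trace).re : ℝ) : ℂ) • (1 : Matrix n n ℂ) - Y).PosSemidef := by
  set s : Matrix n n ℂ := hY.sqrt with hs
  have hsh : sᴴ = s := hY.posSemidef_sqrt.isHermitian.eq
  have hYs : s * s = Y := hY.sqrt_mul_self
  have htr : (Y.trace).re = ∑ j, ∑ i, Complex.normSq (s i j) := by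
    have h1 : (sᴴ * s).trace = ((∑ j, ∑ i, Complex.normSq (s i j) : ℝ) : ℂ) := trace_ctms s
    rw [hsh, hYs] at h1
    rw [h1]; simp
  refine Matrix.PosSemidef.of_dotProduct_mulVec_nonneg ?_ ?_
  · have h2 : ((((Y.trace).re : ℝ) : ℂ) • (1 : Matrix n n ℂ) - Y)ᴴ
        = ((((Y.trace).re : ℝ) : ℂ) • (1 : Matrix n n ℂ)) - Yᴴ := by
      rw [Matrix.conjTranspose_sub, Matrix.conjTranspose_smul]
      simp [Complex.conj_ofReal]
    rw [Matrix.IsHermitian, h2, hY.isHermitian.eq]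
  · intro x
    have hYv : Y *ᵥ x = s *ᵥ (s *ᵥ x) := by rw [Matrix.mulVec_mulVec, hYs]
    set u : n → ℂ := s *ᵥ x with hu
    have hdot : star x ⬝ᵥ (Y *ᵥ x) = ((∑ i, Complex.normSq (u i) : ℝ) : ℂ) := by
      rw [hYv, Matrix.dotProduct_mulVec]
      have hsu : star x ᵥ* s = star u := by
        rw [hu, Matrix.star_mulVec, hsh]
      rw [hsu]
      push_cast
      simp only [dotProduct, Pi.star_apply]
      congr 1; funext i
      rw [Complex.normSq_eq_conj_mul_self]; rfl
    have hxx : star x ⬝ᵥ x = ((∑ i, Complex.normSq (x i) : ℝ) : ℂ) := by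
      push_cast
      simp only [dotProduct, Pi.star_apply]
      congr 1; funext i
      rw [Complex.normSq_eq_conj_mul_self]; rfl
    have expand : star x ⬝ᵥ (((((Y.trace).re : ℝ) : ℂ) • (1 : Matrix n n ℂ) - Y) *ᵥ x)
        = (((Y.trace).re : ℝ) : ℂ) * (star x ⬝ᵥ x) - star x ⬝ᵥ (Y *ᵥ x) := by
      rw [Matrix.sub_mulVec, dotProduct_sub, Matrix.smul_mulVec,
        Matrix.one_mulVec, dotProduct_smul]
      simp [smul_eq_mul]
    rw [expand, hdot, hxx, htr]
    rw [← Complex.ofReal_mul, ← Complex.ofReal_sub, Complex.zero_le_real, sub_nonneg]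
    have key : ∑ i, Complex.normSq (u i)
        ≤ (∑ j, ∑ i, Complex.normSq (s i j)) * ∑ i, Complex.normSq (x i) := by
      have hper : ∀ i, Complex.normSq (u i)
          ≤ (∑ j, Complex.normSq (s i j)) * ∑ j, Complex.normSq (x j) := by
        intro i
        have hu_i : u i = ∑ j, s i j * x j := by
          rw [hu]; rfl
        have h1 : ‖u i‖ ≤ ∑ j, ‖s i j‖ * ‖x j‖ := by
          rw [hu_i]
          refine le_trans (norm_sum_le _ _) ?_
          apply le_of_eq
          exact Finset.sum_congr rfl fun j _ => norm_mul _ _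
        have h2 : (∑ j, ‖s i j‖ * ‖x j‖)^2
            ≤ (∑ j, ‖s i j‖^2) * ∑ j, ‖x j‖^2 :=
          Finset.sum_mul_sq_le_sq_mul_sq _ _ _
        have h3 : Complex.normSq (u i) = ‖u i‖ ^ 2 := (Complex.sq_norm _).symm
        have h4 : ‖u i‖ ^ 2 ≤ (∑ j, ‖s i j‖ * ‖x j‖)^2 := by
          apply pow_le_pow_left₀ (norm_nonneg _) h1
        calc Complex.normSq (u i) = ‖u i‖ ^ 2 := h3
          _ ≤ (∑ j, ‖s i j‖ * ‖x j‖)^2 := h4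
          _ ≤ (∑ j, ‖s i j‖^2) * ∑ j, ‖x j‖^2 := h2
          _ = (∑ j, Complex.normSq (s i j)) * ∑ j, Complex.normSq (x j) := by
              simp [Complex.sq_norm]
      calc ∑ i, Complex.normSq (u i)
          ≤ ∑ i, ((∑ j, Complex.normSq (s i j)) * ∑ j, Complex.normSq (x j)) :=
            Finset.sum_le_sum fun i _ => hper i
        _ = (∑ i, ∑ j, Complex.normSq (s i j)) * ∑ j, Complex.normSq (x j) := by
            rw [Finset.sum_mul]
        _ = (∑ j, ∑ i, Complex.normSq (s i j)) * ∑ i, Complex.normSq (x i) := by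
            rw [Finset.sum_comm]
    exact key

lemma trace_mul_le {X Y : Matrix n n ℂ} (hX : X.PosSemidef) (hY : Y.PosSemidef) :
    ((X * Y).trace).re ≤ (X.trace).re * (Y.trace).re := by
  have h := trace_mul_re_nonneg hX (smul_one_sub_psd hY)
  have expand : X * ((((Y.trace).re : ℝ) : ℂ) • (1 : Matrix n n ℂ) - Y)
      = (((Y.trace).re : ℝ) : ℂ) • X - X * Y := by
    rw [Matrix.mul_sub, Matrix.mul_smul, Matrix.mul_one]
  rw [expand] at h
  rw [Matrix.trace_sub, Matrix.trace_smul] at h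
  simp only [Complex.sub_re, smul_eq_mul, Complex.re_ofReal_mul] at h
  linarith

lemma herm_cs {X Y : Matrix n n ℂ} (hX : X.IsHermitian) (hY : Y.IsHermitian) :
    ((X * Y).trace).re ^ 2 ≤ ((X * X).trace).re * ((Y * Y).trace).re := by
  set a := ((Y * Y).trace).re with ha
  set b := ((X * Y).trace).re with hb
  set c := ((X * X).trace).re with hc
  have key : ∀ t : ℝ, 0 ≤ a * (t * t) + (2 * b) * t + c := by
    intro t
    set M := X + ((t : ℝ) : ℂ) • Y with hM
    have hMh : Mᴴ = M := by
      rw [hM, Matrix.conjTranspose_add, Matrix.conjTranspose_smul, hX.eq, hY.eq]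
      simp [Complex.conj_ofReal]
    have h0 : 0 ≤ ((Mᴴ * M).trace).re := trace_ctms_nonneg M
    rw [hMh] at h0
    have expand : M * M = X * X + ((t : ℝ) : ℂ) • (X * Y)
        + ((t : ℝ) : ℂ) • (Y * X) + (((t : ℝ) : ℂ) * ((t : ℝ) : ℂ)) • (Y * Y) := by
      rw [hM]
      rw [Matrix.add_mul, Matrix.mul_add, Matrix.mul_add, Matrix.smul_mul, Matrix.mul_smul,
        Matrix.mul_smul, Matrix.smul_mul]
      rw [smul_smul]
      abel
    rw [expand, Matrix.trace_add, Matrix.trace_add, Matrix.trace_add,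
      Matrix.trace_smul, Matrix.trace_smul, Matrix.trace_smul] at h0
    have hyx : (Y * X).trace = (X * Y).trace := Matrix.trace_mul_comm Y X
    rw [hyx] at h0
    simp only [Complex.add_re, smul_eq_mul, Complex.re_ofReal_mul, ← Complex.ofReal_mul] at h0
    nlinarith [h0]
  have hd := discrim_le_zero key
  rw [discrim] at hd
  nlinarith [hd]

lemma psd_trace_re_nonneg {X : Matrix n n ℂ} (hX : X.PosSemidef) : 0 ≤ (X.trace).re := by
  have := trace_mul_re_nonneg hX (Matrix.PosSemidef.one (n := n) (R := ℂ))
  rwa [Matrix.mul_one] at this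

lemma psd_eq_smul {τ C : Matrix n n ℂ} (hτ : τ.PosSemidef) (hC : C.PosSemidef)
    (heq : ((τ * C).trace).re = (τ.trace).re * (C.trace).re)
    (hτpos : 0 < (τ.trace).re) :
    ∃ r : ℝ, 0 ≤ r ∧ C = (r : ℂ) • τ := by
  set T := (τ.trace).re with hT
  set S := (C.trace).re with hS
  set a := ((τ * τ).trace).re with haa
  set b := ((τ * C).trace).re with hbb
  set c := ((C * C).trace).re with hcc
  have hSnn : 0 ≤ S := psd_trace_re_nonneg hC
  have ha0 : 0 ≤ a := trace_mul_re_nonneg hτ hτ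
  have hc0 : 0 ≤ c := trace_mul_re_nonneg hC hC
  have haT : a ≤ T * T := trace_mul_le hτ hτ
  have hcS : c ≤ S * S := trace_mul_le hC hC
  have hb2 : b ^ 2 ≤ a * c := herm_cs hτ.isHermitian hC.isHermitian
  have hac : a * c ≤ (T * T) * (S * S) := by nlinarith
  have hbTS : b = T * S := heq
  have hb2eq : b ^ 2 = T * T * (S * S) := by rw [hbTS]; ring
  have haceq : a * c = b ^ 2 := le_antisymm (by rw [hb2eq]; exact hac) hb2
  have hapos : 0 < a := by
    rcases lt_or_eq_of_le ha0 with h | h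
    · exact h
    · exfalso
      have hzz : τ * τ = 0 := trace_mul_eq_zero hτ hτ h.symm
      have hτ0 : τ = 0 := by
        have h3 : τᴴ * τ = 0 := by rw [hτ.isHermitian.eq]; exact hzz
        exact Matrix.conjTranspose_mul_self_eq_zero.mp h3
      have hTz : T = 0 := by rw [hT, hτ0]; simp
      rw [hTz] at hτpos
      exact lt_irrefl 0 hτpos
  set M := ((a : ℝ) : ℂ) • C - ((b : ℝ) : ℂ) • τ with hM
  have hMh : Mᴴ = M := by
    rw [hM, Matrix.conjTranspose_sub, Matrix.conjTranspose_smul, Matrix.conjTranspose_smul,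
      hτ.isHermitian.eq, hC.isHermitian.eq]
    simp [Complex.conj_ofReal]
  have hMM : ((Mᴴ * M).trace).re = 0 := by
    rw [hMh]
    have expand : M * M = ((a*a : ℝ) : ℂ) • (C * C) - ((a*b : ℝ) : ℂ) • (C * τ)
        - ((b*a : ℝ) : ℂ) • (τ * C) + ((b*b : ℝ) : ℂ) • (τ * τ) := by
      rw [hM]
      simp only [Matrix.sub_mul, Matrix.mul_sub, Matrix.smul_mul, Matrix.mul_smul, smul_smul]
      push_cast
      module
    rw [expand]
    rw [Matrix.trace_add, Matrix.trace_sub, Matrix.trace_sub,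
      Matrix.trace_smul, Matrix.trace_smul, Matrix.trace_smul, Matrix.trace_smul]
    have hctc : (C * τ).trace = (τ * C).trace := Matrix.trace_mul_comm C τ
    rw [hctc]
    simp only [Complex.add_re, Complex.sub_re, smul_eq_mul, Complex.re_ofReal_mul]
    rw [← haa, ← hbb, ← hcc]
    nlinarith [haceq]
  have hM0 : M = 0 := trace_ctms_eq_zero hMM
  have hbnn : 0 ≤ b := by rw [hbTS]; exact mul_nonneg (le_of_lt hτpos) hSnn
  refine ⟨b / a, div_nonneg hbnn (le_of_lt hapos), ?_⟩
  have hsub : ((a : ℝ) : ℂ) • C = ((b : ℝ) : ℂ) • τ := sub_eq_zero.mp (hM ▸ hM0)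
  have hane : ((a : ℝ) : ℂ) ≠ 0 := by
    simp only [ne_eq, Complex.ofReal_eq_zero]
    exact ne_of_gt hapos
  calc C = (((a : ℝ) : ℂ))⁻¹ • (((a : ℝ) : ℂ) • C) := by rw [inv_smul_smul₀ hane]
    _ = (((a : ℝ) : ℂ))⁻¹ • (((b : ℝ) : ℂ) • τ) := by rw [hsub]
    _ = ((b / a : ℝ) : ℂ) • τ := by
        rw [smul_smul]
        congr 1
        push_cast
        field_simp

/-! ### Kronecker products and partial traces -/

lemma kron_conjTranspose (a : Matrix m m ℂ) (b : Matrix n n ℂ) :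
    (a ⊗ₖ b)ᴴ = aᴴ ⊗ₖ bᴴ := by
  ext ⟨i, j⟩ ⟨k, l⟩
  simp [Matrix.conjTranspose_apply, Matrix.kroneckerMap_apply]

lemma kron_psd {X : Matrix m m ℂ} {Y : Matrix n n ℂ}
    (hX : X.PosSemidef) (hY : Y.PosSemidef) : (X ⊗ₖ Y).PosSemidef := by
  obtain ⟨a, rfl⟩ := hX.exists_eq_ctm_aux
  obtain ⟨b, rfl⟩ := hY.exists_eq_ctm_aux
  have key : (aᴴ * a) ⊗ₖ (bᴴ * b) = (a ⊗ₖ b)ᴴ * (a ⊗ₖ b) := by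
    calc (aᴴ * a) ⊗ₖ (bᴴ * b) = (aᴴ ⊗ₖ bᴴ) * (a ⊗ₖ b) := Matrix.mul_kronecker_mul _ _ _ _
      _ = (a ⊗ₖ b)ᴴ * (a ⊗ₖ b) := by rw [kron_conjTranspose]
  rw [key]
  exact Matrix.posSemidef_conjTranspose_mul_self _

lemma sum4_reorder {α : Type*} [AddCommMonoid α] (f : m → n → m → n → α) :
    ∑ b : n, ∑ b' : n, ∑ a : m, ∑ a' : m, f a b a' b'
      = ∑ a : m, ∑ b : n, ∑ a' : m, ∑ b' : n, f a b a' b' := by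
  have h1 : ∀ b : n, ∑ b' : n, ∑ a : m, ∑ a' : m, f a b a' b'
      = ∑ a : m, ∑ a' : m, ∑ b' : n, f a b a' b' := by
    intro b
    rw [Finset.sum_comm]
    congr 1; funext a
    rw [Finset.sum_comm]
  calc ∑ b : n, ∑ b' : n, ∑ a : m, ∑ a' : m, f a b a' b'
      = ∑ b : n, ∑ a : m, ∑ a' : m, ∑ b' : n, f a b a' b' :=
        Finset.sum_congr rfl fun b _ => h1 b
    _ = ∑ a : m, ∑ b : n, ∑ a' : m, ∑ b' : n, f a b a' b' := Finset.sum_comm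

/-- Partial trace over the first factor, weighted by `X`. -/
noncomputable def tauB (ρ : Matrix (m × n) (m × n) ℂ) (X : Matrix m m ℂ) :
    Matrix n n ℂ :=
  fun b b' => ∑ a, ∑ a', ρ (a, b) (a', b') * X a' a

/-- Partial trace over the second factor, weighted by `Y`. -/
noncomputable def tauA (ρ : Matrix (m × n) (m × n) ℂ) (Y : Matrix n n ℂ) :
    Matrix m m ℂ :=
  fun a a' => ∑ b, ∑ b', ρ (a, b) (a', b') * Y b' b

lemma tauB_mul_trace (ρ : Matrix (m × n) (m × n) ℂ) (X : Matrix m m ℂ)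
    (B : Matrix n n ℂ) :
    ((tauB ρ X) * B).trace = (ρ * (X ⊗ₖ B)).trace := by
  have L : ((tauB ρ X) * B).trace
      = ∑ b : n, ∑ b' : n, ∑ a : m, ∑ a' : m, ρ (a, b) (a', b') * X a' a * B b' b := by
    simp only [Matrix.trace, Matrix.diag, Matrix.mul_apply, tauB, Finset.sum_mul]
  have R : (ρ * (X ⊗ₖ B)).trace
      = ∑ a : m, ∑ b : n, ∑ a' : m, ∑ b' : n, ρ (a, b) (a', b') * X a' a * B b' b := by
    simp only [Matrix.trace, Matrix.diag, Matrix.mul_apply,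
      Matrix.kroneckerMap_apply, Fintype.sum_prod_type]
    congr 1; funext a; congr 1; funext b; congr 1; funext a'; congr 1; funext b'
    ring
  rw [L, R, sum4_reorder (fun a b a' b' => ρ (a, b) (a', b') * X a' a * B b' b)]

lemma tauA_mul_trace (ρ : Matrix (m × n) (m × n) ℂ) (Y : Matrix n n ℂ)
    (X : Matrix m m ℂ) :
    ((tauA ρ Y) * X).trace = (ρ * (X ⊗ₖ Y)).trace := by
  have L : ((tauA ρ Y) * X).trace
      = ∑ a : m, ∑ a' : m, ∑ b : n, ∑ b' : n, ρ (a, b) (a', b') * Y b' b * X a' a := by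
    simp only [Matrix.trace, Matrix.diag, Matrix.mul_apply, tauA, Finset.sum_mul]
  have R : (ρ * (X ⊗ₖ Y)).trace
      = ∑ a : m, ∑ b : n, ∑ a' : m, ∑ b' : n, ρ (a, b) (a', b') * Y b' b * X a' a := by
    simp only [Matrix.trace, Matrix.diag, Matrix.mul_apply,
      Matrix.kroneckerMap_apply, Fintype.sum_prod_type]
    congr 1; funext a; congr 1; funext b; congr 1; funext a'; congr 1; funext b'
    ring
  rw [L, R]
  congr 1; funext a
  rw [Finset.sum_comm]

lemma dot_eq_trace (M : Matrix n n ℂ) (v : n → ℂ) :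
    star v ⬝ᵥ (M *ᵥ v) = (M * Matrix.vecMulVec v (star v)).trace := by
  simp only [Matrix.trace, Matrix.diag, Matrix.mul_apply, Matrix.vecMulVec_apply,
    dotProduct, Matrix.mulVec, Pi.star_apply]
  congr 1; funext b
  simp only [dotProduct, Finset.sum_mul, Finset.mul_sum]
  congr 1; funext b'
  ring

lemma vecMulVec_psd (v : n → ℂ) : (Matrix.vecMulVec v (star v)).PosSemidef := by
  rw [Matrix.vecMulVec_eq (Fin 1)]
  have h : Matrix.replicateRow (Fin 1) (star v) = (Matrix.replicateCol (Fin 1) v)ᴴ := by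
    rw [Matrix.conjTranspose_replicateCol]
  rw [h]
  exact Matrix.posSemidef_self_mul_conjTranspose _

lemma tauB_psd {ρ : Matrix (m × n) (m × n) ℂ} {X : Matrix m m ℂ}
    (hρ : ρ.PosSemidef) (hX : X.PosSemidef) : (tauB ρ X).PosSemidef := by
  refine Matrix.PosSemidef.of_dotProduct_mulVec_nonneg ?_ ?_
  · show (tauB ρ X)ᴴ = tauB ρ X
    ext b b'
    simp only [Matrix.conjTranspose_apply, tauB, star_sum, star_mul']
    rw [Finset.sum_comm]
    refine Finset.sum_congr rfl fun a _ => Finset.sum_congr rfl fun a' _ => ?_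
    have hXs : star (X a a') = X a' a := by
      rw [← Matrix.conjTranspose_apply, hX.isHermitian.eq]
    have hρs : star (ρ (a', b') (a, b)) = ρ (a, b) (a', b') := by
      rw [← Matrix.conjTranspose_apply, hρ.isHermitian.eq]
    rw [hXs, hρs]
  · intro v
    rw [dot_eq_trace, tauB_mul_trace]
    have hkr := kron_psd hX (vecMulVec_psd v)
    have h1 := trace_mul_re_nonneg hρ hkr
    have h2 := trace_mul_real hρ hkr
    rw [h2]
    exact Complex.zero_le_real.mpr h1

lemma tauA_psd {ρ : Matrix (m × n) (m × n) ℂ} {Y : Matrix n n ℂ}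
    (hρ : ρ.PosSemidef) (hY : Y.PosSemidef) : (tauA ρ Y).PosSemidef := by
  refine Matrix.PosSemidef.of_dotProduct_mulVec_nonneg ?_ ?_
  · show (tauA ρ Y)ᴴ = tauA ρ Y
    ext a a'
    simp only [Matrix.conjTranspose_apply, tauA, star_sum, star_mul']
    rw [Finset.sum_comm]
    refine Finset.sum_congr rfl fun b _ => Finset.sum_congr rfl fun b' _ => ?_
    have hYs : star (Y b b') = Y b' b := by
      rw [← Matrix.conjTranspose_apply, hY.isHermitian.eq]
    have hρs : star (ρ (a', b') (a, b)) = ρ (a, b) (a', b') := by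
      rw [← Matrix.conjTranspose_apply, hρ.isHermitian.eq]
    rw [hYs, hρs]
  · intro v
    rw [dot_eq_trace, tauA_mul_trace]
    have hkr := kron_psd (vecMulVec_psd v) hY
    have h1 := trace_mul_re_nonneg hρ hkr
    have h2 := trace_mul_real hρ hkr
    rw [h2]
    exact Complex.zero_le_real.mpr h1

/-! ### The correlation matrix `Pmat` -/

lemma Pmat_symm (d : ℕ) (x y : Fin d ⊕ Fin d) : Pmat d x y = Pmat d y x := by
  rcases x with i | i <;> rcases y with j | j <;> simp only [Pmat]
  · by_cases h : i = j
    · subst h; rfl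
    · rw [if_neg h, if_neg (Ne.symm h)]
  · by_cases h : i = j
    · subst h; rfl
    · rw [if_neg h, if_neg (Ne.symm h)]

lemma Pmat_sum_inl {d : ℕ} (hd : 2 ≤ d) (i : Fin d) :
    ∑ y, Pmat d (Sum.inl i) y
      = (1 / (d * (d + 1) ^ 2)) * (d ^ 2) + d * (1 / (d * (d + 1) ^ 2)) := by
  rw [Fintype.sum_sum_type]
  simp [Pmat, mul_ite, mul_zero, mul_one, Finset.sum_ite_eq, Finset.card_univ, mul_comm]

lemma Pmat_sum_inr {d : ℕ} (hd : 2 ≤ d) (i : Fin d) :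
    ∑ y, Pmat d (Sum.inr i) y
      = d * (1 / (d * (d + 1) ^ 2)) + (1 / (d * (d + 1) ^ 2)) := by
  rw [Fintype.sum_sum_type]
  simp [Pmat, mul_ite, mul_zero, mul_one, Finset.sum_ite_eq, Finset.card_univ, mul_comm]

/-! ### The one-sided rigidity argument -/

lemma main {d : ℕ} (hd : 2 ≤ d) (τ C : Fin d ⊕ Fin d → Matrix (Fin d) (Fin d) ℂ)
    (hτ : ∀ x, (τ x).PosSemidef) (hC : ∀ x, (C x).PosSemidef)
    (hCsum : ∑ y, C y = 1)
    (hcorr : ∀ x y, ((τ x) * (C y)).trace = ((Pmat d x y : ℝ) : ℂ)) :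
    ∀ i j : Fin d, i ≠ j →
      C (Sum.inl i) * C (Sum.inl j) = 0 ∧ C (Sum.inr i) * C (Sum.inr j) = 0 := by
  have hd0 : (0 : ℝ) < d := by
    have : (2 : ℝ) ≤ d := by exact_mod_cast hd
    linarith
  have hd1 : (0 : ℝ) < (d : ℝ) + 1 := by linarith
  set q : ℝ := 1 / (d * (d + 1) ^ 2) with hq_def
  have hq : 0 < q := by rw [hq_def]; positivity
  have hcre : ∀ x y, ((τ x * C y).trace).re = Pmat d x y := by
    intro x y; rw [hcorr x y]; simp
  have hτtr : ∀ x, ((τ x).trace).re = ∑ y, Pmat d x y := by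
    intro x
    have h1 : (τ x).trace = ∑ y, (τ x * C y).trace := by
      rw [← Matrix.trace_sum, ← Matrix.mul_sum, hCsum, Matrix.mul_one]
    rw [h1, Complex.re_sum]
    exact Finset.sum_congr rfl fun y _ => hcre x y
  have hτtr_l : ∀ i, ((τ (Sum.inl i)).trace).re = q * d * (d + 1) := by
    intro i; rw [hτtr, Pmat_sum_inl hd]; rw [hq_def]; ring
  have hτtr_r : ∀ i, ((τ (Sum.inr i)).trace).re = q * (d + 1) := by
    intro i; rw [hτtr, Pmat_sum_inr hd]; rw [hq_def]; ring
  set Sf : Fin d ⊕ Fin d → ℝ := fun y => ((C y).trace).re with hSf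
  set mf : Fin d ⊕ Fin d → ℝ :=
    Sum.elim (fun _ => (d : ℝ) / (d + 1)) (fun _ => 1 / ((d : ℝ) + 1)) with hmf
  have hlow : ∀ y, mf y ≤ Sf y := by
    intro y
    have hle := trace_mul_le (hτ y) (hC y)
    rcases y with i | i
    · rw [hcre, hτtr_l i] at hle
      have hPd : Pmat d (Sum.inl i) (Sum.inl i) = q * d ^ 2 := by
        simp [Pmat, hq_def, mul_comm]
      rw [hPd] at hle
      show (d : ℝ) / (d + 1) ≤ Sf (Sum.inl i)
      rw [div_le_iff₀ hd1]
      nlinarith [mul_pos hq hd0]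
    · rw [hcre, hτtr_r i] at hle
      have hPd : Pmat d (Sum.inr i) (Sum.inr i) = q := by
        simp [Pmat, hq_def]
      rw [hPd] at hle
      show 1 / ((d : ℝ) + 1) ≤ Sf (Sum.inr i)
      rw [div_le_iff₀ hd1]
      nlinarith [hq]
  have hsum_S : ∑ y, Sf y = d := by
    rw [hSf]
    simp only
    rw [← Complex.re_sum, ← Matrix.trace_sum, hCsum, Matrix.trace_one]
    simp
  have hsum_m : ∑ y, mf y = d := by
    rw [hmf, Fintype.sum_sum_type]
    simp only [Sum.elim_inl, Sum.elim_inr, Finset.sum_const, Finset.card_univ,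
      Fintype.card_fin, nsmul_eq_mul]
    field_simp
  have hSm : ∀ y, Sf y = mf y := by
    have hzero : ∑ y, (Sf y - mf y) = 0 := by
      rw [Finset.sum_sub_distrib, hsum_S, hsum_m, sub_self]
    have hterm := (Finset.sum_eq_zero_iff_of_nonneg
      (fun y _ => sub_nonneg.mpr (hlow y))).mp hzero
    intro y
    have := hterm y (Finset.mem_univ y)
    linarith [this]
  have heqq : ∀ y, ((τ y * C y).trace).re = ((τ y).trace).re * ((C y).trace).re := by
    intro y
    rcases y with i | i
    · rw [hcre, hτtr_l i]
      have h2 : ((C (Sum.inl i)).trace).re = (d : ℝ) / (d + 1) := hSm (Sum.inl i)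
      rw [h2]
      have hPd : Pmat d (Sum.inl i) (Sum.inl i) = q * d ^ 2 := by
        simp [Pmat, hq_def, mul_comm]
      rw [hPd]
      field_simp
    · rw [hcre, hτtr_r i]
      have h2 : ((C (Sum.inr i)).trace).re = 1 / ((d : ℝ) + 1) := hSm (Sum.inr i)
      rw [h2]
      have hPd : Pmat d (Sum.inr i) (Sum.inr i) = q := by
        simp [Pmat, hq_def]
      rw [hPd]
      field_simp
  have hτpos : ∀ y, 0 < ((τ y).trace).re := by
    intro y
    rcases y with i | i
    · rw [hτtr_l i]; positivity
    · rw [hτtr_r i]; positivity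
  have hsmul : ∀ y, ∃ r : ℝ, 0 ≤ r ∧ C y = (r : ℂ) • τ y :=
    fun y => psd_eq_smul (hτ y) (hC y) (heqq y) (hτpos y)
  intro i j hij
  constructor
  · obtain ⟨r, _, hr⟩ := hsmul (Sum.inl i)
    apply trace_mul_eq_zero (hC (Sum.inl i)) (hC (Sum.inl j))
    rw [hr, Matrix.smul_mul, Matrix.trace_smul]
    have h0 : ((τ (Sum.inl i) * C (Sum.inl j)).trace).re = 0 := by
      rw [hcre]
      simp [Pmat, hij]
    simp only [smul_eq_mul, Complex.re_ofReal_mul, h0, mul_zero]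
  · obtain ⟨r, _, hr⟩ := hsmul (Sum.inr i)
    apply trace_mul_eq_zero (hC (Sum.inr i)) (hC (Sum.inr j))
    rw [hr, Matrix.smul_mul, Matrix.trace_smul]
    have h0 : ((τ (Sum.inr i) * C (Sum.inr j)).trace).re = 0 := by
      rw [hcre]
      simp [Pmat, hij]
    simp only [smul_eq_mul, Complex.re_ofReal_mul, h0, mul_zero]

end Stmt7Proof

open Stmt7Proof in
/-- if a `d × d` bipartite quantum state `ρ` together with POVMs
`{A_x}`, `{B_y}` (`2d` outcomes each) generates the correlation `P`, then for `i ≠ j` in `[d]`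
the products `A_i A_j`, `B_i B_j`, `A_{d+i} A_{d+j}`, `B_{d+i} B_{d+j}` all vanish. -/
theorem stmt7 (d : ℕ) (hd : 2 ≤ d)
    (ρ : Matrix (Fin d × Fin d) (Fin d × Fin d) ℂ)
    (hρ : ρ.PosSemidef) (hρtr : ρ.trace = 1)
    (A B : Fin d ⊕ Fin d → Matrix (Fin d) (Fin d) ℂ)
    (hA : ∀ x, (A x).PosSemidef) (hB : ∀ y, (B y).PosSemidef)
    (hAsum : (∑ x, A x) = 1) (hBsum : (∑ y, B y) = 1)
    (hcorr : ∀ x y, (ρ * (A x ⊗ₖ B y)).trace = (Pmat d x y : ℂ)) :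
    ∀ i j : Fin d, i ≠ j →
      A (Sum.inl i) * A (Sum.inl j) = 0 ∧ B (Sum.inl i) * B (Sum.inl j) = 0 ∧
      A (Sum.inr i) * A (Sum.inr j) = 0 ∧ B (Sum.inr i) * B (Sum.inr j) = 0 := by
  have hτB : ∀ x, (tauB ρ (A x)).PosSemidef := fun x => tauB_psd hρ (hA x)
  have hcorrB : ∀ x y, ((tauB ρ (A x)) * B y).trace = ((Pmat d x y : ℝ) : ℂ) := by
    intro x y
    rw [tauB_mul_trace]
    exact hcorr x y
  have hBres := main hd (fun x => tauB ρ (A x)) B hτB hB hBsum hcorrB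
  have hτA : ∀ x, (tauA ρ (B x)).PosSemidef := fun x => tauA_psd hρ (hB x)
  have hcorrA : ∀ x y, ((tauA ρ (B x)) * A y).trace = ((Pmat d x y : ℝ) : ℂ) := by
    intro x y
    rw [tauA_mul_trace, hcorr y x]
    exact congrArg _ (Pmat_symm d y x)
  have hAres := main hd (fun x => tauA ρ (B x)) A hτA hA hAsum hcorrA
  intro i j hij
  exact ⟨(hAres i j hij).1, (hBres i j hij).1, (hAres i j hij).2, (hBres i j hij).2⟩
end

section
/- Let d ≥ 2 and let ρ be a complex positive semidefinite matrix indexed by Fin d × Fin d with trace 1 such that the range of ρ is contained in span{|0⟩⊗|0⟩, |1⟩⊗|1⟩, …, |d−1⟩⊗|d−1⟩} and ⟨ii|ρ|ii⟩ = 1/d for every i ∈ {0,…,d−1}. Let B be a rank-1 d×d complex positive semidefinite matrix such that for every i ∈ {0,…,d−1}, tr(ρ·((d/(d+1))|i⟩⟨i| ⊗ B)) = 1/(d(d+1)²). Then every entry of B has absolute value 1/(d(d+1)); that is, |⟨i|B|j⟩| = 1/(d(d+1)) for all i,j ∈ {0,…,d−1}. -/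
open Matrix Kronecker ComplexOrder

/-- if `ρ` is a PSD matrix on `ℂ^d ⊗ ℂ^d` of trace 1 whose range lies in
`span{|ii⟩ : i}`, with `⟨ii|ρ|ii⟩ = 1/d` for all `i`, and `B` is a rank-1 `d × d` PSD matrix
with `tr(ρ·((d/(d+1))|i⟩⟨i| ⊗ B)) = 1/(d(d+1)²)` for all `i`, then every entry of `B` has
absolute value `1/(d(d+1))`. -/
theorem stmt8 (d : ℕ) (hd : 2 ≤ d)
    (ρ : Matrix (Fin d × Fin d) (Fin d × Fin d) ℂ)
    (hρ : ρ.PosSemidef) (hρtr : ρ.trace = 1)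
    (hrange : LinearMap.range ρ.mulVecLin ≤
      Submodule.span ℂ (Set.range fun i : Fin d => (Pi.single (i, i) 1 : Fin d × Fin d → ℂ)))
    (hdiag : ∀ i : Fin d, ρ (i, i) (i, i) = ((1 / d : ℝ) : ℂ))
    (B : Matrix (Fin d) (Fin d) ℂ) (hB : B.PosSemidef) (hBrank : B.rank = 1)
    (hBtr : ∀ i : Fin d,
      (ρ * ((((d : ℝ) / (d + 1) : ℝ) • Matrix.single i i (1 : ℂ)) ⊗ₖ B)).trace =
        ((1 / (d * (d + 1) ^ 2) : ℝ) : ℂ)) :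
    ∀ i j : Fin d, ‖B i j‖ = 1 / (d * (d + 1)) := by
  have hd0 : (d : ℂ) ≠ 0 := Nat.cast_ne_zero.mpr (by omega)
  have hd1 : (d : ℂ) + 1 ≠ 0 := by
    have := Nat.cast_add_one_ne_zero (R := ℂ) d
    push_cast at this
    exact this
  -- ρ vanishes whenever the row index is off the diagonal
  have hz : ∀ x : Fin d × Fin d, ∀ a b : Fin d, a ≠ b → ρ (a, b) x = 0 := by
    intro x a b hab
    have hmem : ρ.mulVecLin (Pi.single x 1) ∈ Submodule.span ℂ
        (Set.range fun i : Fin d => (Pi.single (i, i) 1 : Fin d × Fin d → ℂ)) :=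
      hrange ⟨_, rfl⟩
    have hsub : Submodule.span ℂ
        (Set.range fun i : Fin d => (Pi.single (i, i) 1 : Fin d × Fin d → ℂ)) ≤
        LinearMap.ker (LinearMap.proj (R := ℂ) (φ := fun _ : Fin d × Fin d => ℂ) (a, b)) := by
      rw [Submodule.span_le]
      rintro _ ⟨i, rfl⟩
      have hne : ((a, b) : Fin d × Fin d) ≠ (i, i) := by
        intro h
        rw [Prod.mk.injEq] at h
        exact hab (h.1.trans h.2.symm)
      simp [LinearMap.mem_ker, Pi.single_eq_of_ne hne]
    have := hsub hmem
    simp only [LinearMap.mem_ker, LinearMap.proj_apply] at this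
    simpa [Matrix.mulVecLin_apply] using this
  have hz' : ∀ x : Fin d × Fin d, ∀ a b : Fin d, a ≠ b → ρ x (a, b) = 0 := by
    intro x a b hab
    have h := hρ.isHermitian.apply x (a, b)
    rw [hz x a b hab] at h
    simpa using h.symm
  -- compute the trace
  have key : ∀ i : Fin d,
      (ρ * ((((d : ℝ) / (d + 1) : ℝ) • Matrix.single i i (1 : ℂ)) ⊗ₖ B)).trace =
        ρ (i, i) (i, i) * ((((d : ℝ) / (d + 1) : ℝ) : ℂ) * B i i) := by
    intro i
    set M := ((((d : ℝ) / (d + 1) : ℝ) • Matrix.single i i (1 : ℂ)) ⊗ₖ B) with hMdef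
    have hM : ∀ y x : Fin d × Fin d,
        M y x = (if i = y.1 ∧ i = x.1 then ((((d : ℝ) / (d + 1) : ℝ)) : ℂ) else 0) * B y.2 x.2 := by
      intro y x
      by_cases h : i = y.1 ∧ i = x.1 <;>
        simp [hMdef, Matrix.kroneckerMap_apply, Matrix.single, Matrix.smul_apply, h]
    have htr : (ρ * M).trace = ∑ x : Fin d × Fin d, ∑ y : Fin d × Fin d, ρ x y * M y x := by
      simp [Matrix.trace, Matrix.diag, Matrix.mul_apply]
    rw [htr]
    rw [Finset.sum_eq_single ((i, i) : Fin d × Fin d)]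
    · rw [Finset.sum_eq_single ((i, i) : Fin d × Fin d)]
      · rw [hM]
        simp
      · rintro ⟨y1, y2⟩ - hy
        by_cases h12 : y1 = y2
        · subst h12
          have hy1 : i ≠ y1 := by rintro rfl; exact hy rfl
          rw [hM]
          simp [hy1]
        · rw [hz' _ _ _ h12, zero_mul]
      · intro h; exact absurd (Finset.mem_univ _) h
    · rintro ⟨x1, x2⟩ - hx
      apply Finset.sum_eq_zero
      intro y _
      by_cases h12 : x1 = x2
      · subst h12
        have hx1 : i ≠ x1 := by rintro rfl; exact hx rfl
        rw [hM]
        simp [hx1]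
      · rw [hz _ _ _ h12, zero_mul]
    · intro h; exact absurd (Finset.mem_univ _) h
  -- diagonal entries of B
  have hBdiag : ∀ i : Fin d, B i i = ((1 / (d * (d + 1)) : ℝ) : ℂ) := by
    intro i
    have h := (key i).symm.trans (hBtr i)
    rw [hdiag i] at h
    push_cast at h ⊢
    field_simp at h
    rw [eq_div_iff (mul_ne_zero hd0 hd1)]
    linear_combination h
  -- rank-one structure of B
  have hfin : Module.finrank ℂ (LinearMap.range B.mulVecLin) = 1 := hBrank
  obtain ⟨v, hv0, hv⟩ := finrank_eq_one_iff'.mp hfin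
  have hcol : ∀ j : Fin d, ∃ c : ℂ, ∀ i2 : Fin d, B i2 j = c * (v : Fin d → ℂ) i2 := by
    intro j
    have hmem : B.mulVecLin (Pi.single j 1) ∈ LinearMap.range B.mulVecLin := ⟨_, rfl⟩
    obtain ⟨c, hc⟩ := hv ⟨_, hmem⟩
    refine ⟨c, fun i2 => ?_⟩
    have := congrArg (fun w : LinearMap.range B.mulVecLin => (w : Fin d → ℂ) i2) hc
    simpa [Matrix.mulVecLin_apply] using this.symm
  have hmulid : ∀ i j : Fin d, B i j * B j i = B i i * B j j := by
    intro i j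
    obtain ⟨ci, hci⟩ := hcol i
    obtain ⟨cj, hcj⟩ := hcol j
    rw [hci i, hci j, hcj i, hcj j]
    ring
  intro i j
  have hherm : B j i = (starRingEnd ℂ) (B i j) := (hB.isHermitian.apply j i).symm
  have h1 : B i j * (starRingEnd ℂ) (B i j) = ((1 / (d * (d + 1)) : ℝ) : ℂ) ^ 2 := by
    rw [← hherm, hmulid i j, hBdiag i, hBdiag j, sq]
  rw [Complex.mul_conj] at h1
  have h2 : Complex.normSq (B i j) = (1 / (d * (d + 1)) : ℝ) ^ 2 := by
    have := h1
    rw [show (((1 / (d * (d + 1)) : ℝ) : ℂ)) ^ 2 = (((1 / (d * (d + 1)) : ℝ) ^ 2 : ℝ) : ℂ) by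
      push_cast; ring] at this
    exact_mod_cast this
  rw [Complex.norm_def, h2]
  rw [Real.sqrt_sq (by positivity)]
end

section
/- Let d ≥ 2 and let ρ be a complex positive semidefinite matrix indexed by Fin d × Fin d with trace 1 such that the range of ρ is contained in span{|0⟩⊗|0⟩, …, |d−1⟩⊗|d−1⟩} and ⟨ii|ρ|ii⟩ = 1/d for every i ∈ {0,…,d−1}. Let A and B be rank-1 d×d complex positive semidefinite matrices all of whose entries have absolute value 1/(d(d+1)), and suppose tr(ρ·(A ⊗ B)) = 1/(d(d+1)²). Then ρ has rank 1, i.e. ρ is a pure state. -/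
open Matrix Kronecker ComplexOrder

section Stmt9Aux

open scoped MatrixOrder in
lemma aux_psd_trace_zero {n : Type*} [Fintype n] [DecidableEq n] {M : Matrix n n ℂ}
    (hM : M.PosSemidef) (h : M.trace = 0) : M = 0 := by
  obtain ⟨B, rfl⟩ : ∃ B : Matrix n n ℂ, M = Bᴴ * B :=
    CStarAlgebra.nonneg_iff_eq_star_mul_self.mp hM.nonneg
  suffices hB : B = 0 by simp [hB]
  have h2 : ∑ j : n, ∑ k : n, Complex.normSq (B k j) = 0 := by
    have : (Bᴴ * B).trace = ∑ j : n, ∑ k : n, ((Complex.normSq (B k j) : ℝ) : ℂ) := by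
      simp [Matrix.trace, Matrix.diag, Matrix.mul_apply, Matrix.conjTranspose_apply,
        Complex.normSq_eq_conj_mul_self]
    rw [this] at h
    exact_mod_cast h
  ext k j
  have h3 := (Finset.sum_eq_zero_iff_of_nonneg (fun j _ =>
    Finset.sum_nonneg fun k _ => Complex.normSq_nonneg (B k j))).mp h2 j (Finset.mem_univ j)
  have h4 := (Finset.sum_eq_zero_iff_of_nonneg (fun k _ =>
    Complex.normSq_nonneg (B k j))).mp h3 k (Finset.mem_univ k)
  simpa using Complex.normSq_eq_zero.mp h4

lemma aux_rank_pos {m n : Type*} [Fintype m] [Fintype n] [DecidableEq n]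
    {A : Matrix m n ℂ} (h : A ≠ 0) : 0 < A.rank := by
  rw [Nat.pos_iff_ne_zero]
  intro h0
  apply h
  have hbot : LinearMap.range A.mulVecLin = ⊥ := Submodule.finrank_eq_zero.mp h0
  ext i j
  have hv : A.mulVec (Pi.single j 1) = 0 := by
    have : A.mulVecLin (Pi.single j 1) ∈ (⊥ : Submodule ℂ (m → ℂ)) :=
      hbot ▸ LinearMap.mem_range_self _ _
    simpa using this
  have := congrFun hv i
  simpa [Matrix.mulVec_single] using this

lemma aux_psd_rank_one {n : Type*} [Fintype n] [DecidableEq n] {A : Matrix n n ℂ}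
    (hA : A.PosSemidef) (h : A.rank = 1) : ∃ u : n → ℂ, A = vecMulVec u (star u) := by
  have h1 : Module.finrank ℂ (LinearMap.range A.mulVecLin) = 1 := h
  obtain ⟨x₀, hx0ne, hall⟩ := finrank_eq_one_iff'.mp h1
  set x : n → ℂ := (x₀ : n → ℂ) with hx
  have hcol : ∀ j : n, ∃ c : ℂ, ∀ i, A i j = c * x i := by
    intro j
    have hmem : A.mulVec (Pi.single j 1) ∈ LinearMap.range A.mulVecLin :=
      LinearMap.mem_range_self _ _
    obtain ⟨c, hc⟩ := hall ⟨A.mulVec (Pi.single j 1), hmem⟩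
    refine ⟨c, fun i => ?_⟩
    have := congrFun (congrArg (Subtype.val) hc) i
    simpa [Matrix.mulVec_single, hx] using this.symm
  choose c hc using hcol
  have hxne : x ≠ 0 := fun hcontra => hx0ne (Subtype.ext hcontra)
  obtain ⟨i0, hi0⟩ := Function.ne_iff.mp hxne
  have hi0' : (x i0 : ℂ) ≠ 0 := by simpa using hi0
  have hherm : ∀ i j, A i j = star (A j i) := fun i j => (hA.1.apply i j).symm
  set t : ℂ := star (c i0) / x i0 with ht
  have hAij : ∀ i j, A i j = t * x i * star (x j) := by
    intro i j
    have h2 : A i0 j = c j * x i0 := hc j i0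
    have h3 : A j i0 = c i0 * x j := hc i0 j
    have h5 : c j * x i0 = star (c i0) * star (x j) := by
      have h6 := hherm i0 j
      rw [h2, h3] at h6
      rw [h6, star_mul']
    have h4 : c j = star (x j) * t := by
      rw [ht, show star (x j) * (star (c i0) / x i0) = (star (c i0) * star (x j)) / x i0
        from by ring, ← h5, mul_div_assoc, div_self hi0', mul_one]
    rw [hc j i, h4]; ring
  have hdiag : A i0 i0 = t * (Complex.normSq (x i0) : ℂ) := by
    rw [hAij i0 i0, Complex.normSq_eq_conj_mul_self]
    simp only [Complex.star_def]
    ring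
  have hnn : 0 ≤ A i0 i0 := by
    have := hA.dotProduct_mulVec_nonneg (Pi.single i0 1)
    simpa [Matrix.mulVec_single, dotProduct, Pi.single_apply, Finset.sum_ite_eq,
      apply_ite] using this
  have hns : (Complex.normSq (x i0) : ℂ) ≠ 0 := by
    simpa using Complex.normSq_eq_zero.not.mpr hi0'
  have ht' : t = A i0 i0 / (Complex.normSq (x i0) : ℂ) := by
    rw [hdiag]; field_simp
  have hreal : ∃ r : ℝ, 0 ≤ r ∧ t = (r : ℂ) := by
    obtain ⟨r0, hr0, hr0'⟩ : ∃ r0 : ℝ, 0 ≤ r0 ∧ A i0 i0 = (r0 : ℂ) := by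
      rw [Complex.le_def] at hnn
      exact ⟨(A i0 i0).re, by simpa using hnn.1, by
        apply Complex.ext <;> simp [← hnn.2]⟩
    refine ⟨r0 / Complex.normSq (x i0), div_nonneg hr0 (Complex.normSq_nonneg _), ?_⟩
    rw [ht', hr0']; push_cast; ring
  obtain ⟨r, hr, hrt⟩ := hreal
  refine ⟨fun i => (Real.sqrt r : ℂ) * x i, ?_⟩
  ext i j
  rw [Matrix.vecMulVec_apply, hAij i j, hrt]
  have hss : ((Real.sqrt r : ℂ)) * ((Real.sqrt r : ℂ)) = (r : ℂ) := by
    rw [← Complex.ofReal_mul, Real.mul_self_sqrt hr]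
  have hs : star ((Real.sqrt r : ℂ)) = (Real.sqrt r : ℂ) := by
    rw [Complex.star_def, Complex.conj_ofReal]
  simp only [Pi.star_apply, star_mul', hs]
  rw [← hss]
  ring

open scoped MatrixOrder in
lemma aux_pure {n : Type*} [Fintype n] [DecidableEq n] {c : Matrix n n ℂ}
    (hc : c.PosSemidef) (htr : c.trace = 1) (w : n → ℂ)
    (hw : star w ⬝ᵥ w = 1) (hcw : star w ⬝ᵥ c.mulVec w = 1) :
    c = vecMulVec w (star w) := by
  set Q : Matrix n n ℂ := vecMulVec w (star w) with hQ
  have hQH : Qᴴ = Q := by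
    ext i j
    simp only [hQ, Matrix.conjTranspose_apply, Matrix.vecMulVec_apply, Pi.star_apply,
      star_mul', star_star]
    exact mul_comm _ _
  have hQQ : Q * Q = Q := by
    ext i j
    simp only [hQ, Matrix.mul_apply, Matrix.vecMulVec_apply, Pi.star_apply]
    calc ∑ k, w i * star (w k) * (w k * star (w j))
        = (w i * star (w j)) * ∑ k, star (w k) * w k := by
          rw [Finset.mul_sum]; exact Finset.sum_congr rfl fun k _ => by ring
      _ = w i * star (w j) := by
          have : ∑ k, star (w k) * w k = 1 := hw
          rw [this, mul_one]
  have hQctr : (Q * c).trace = 1 := by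
    rw [← hcw]
    simp only [hQ, Matrix.trace, Matrix.diag, Matrix.mul_apply, Matrix.vecMulVec_apply,
      dotProduct, Matrix.mulVec, Pi.star_apply]
    rw [Finset.sum_comm]
    exact Finset.sum_congr rfl fun k _ => by
      rw [Finset.mul_sum]; exact Finset.sum_congr rfl fun i _ => by ring
  set P : Matrix n n ℂ := 1 - Q with hP
  have hPH : Pᴴ = P := by rw [hP, Matrix.conjTranspose_sub, Matrix.conjTranspose_one, hQH]
  have hPP : P * P = P := by
    rw [hP, sub_mul, one_mul, mul_sub, mul_one, hQQ]; abel
  have hPSD : (P * c * P).PosSemidef := by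
    have := hc.conjTranspose_mul_mul_same P
    rwa [hPH] at this
  have htr0 : (P * c * P).trace = 0 := by
    rw [Matrix.trace_mul_cycle, hPP, hP, Matrix.sub_mul, Matrix.one_mul, Matrix.trace_sub,
      htr, hQctr, sub_self]
  have hPcP : P * c * P = 0 := aux_psd_trace_zero hPSD htr0
  have hSP : CFC.sqrt c * P = 0 := by
    have h1 : (CFC.sqrt c * P)ᴴ * (CFC.sqrt c * P) = 0 := by
      rw [Matrix.conjTranspose_mul, hPH, (CFC.sqrt_nonneg c).posSemidef.1.eq]
      calc P * CFC.sqrt c * (CFC.sqrt c * P) = P * (CFC.sqrt c * CFC.sqrt c) * P := by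
            rw [Matrix.mul_assoc, Matrix.mul_assoc, Matrix.mul_assoc]
        _ = P * c * P := by rw [CFC.sqrt_mul_sqrt_self c hc.nonneg]
        _ = 0 := hPcP
    exact Matrix.conjTranspose_mul_self_eq_zero.mp h1
  have hcP : c * P = 0 := by
    rw [← CFC.sqrt_mul_sqrt_self c hc.nonneg, Matrix.mul_assoc, hSP, Matrix.mul_zero]
  have hcQ : c = c * Q := by
    have : c * (1 - Q) = 0 := hcP
    rw [Matrix.mul_sub, Matrix.mul_one, sub_eq_zero] at this
    exact this
  have hQc : c = Q * c := by
    conv_lhs => rw [← hc.1.eq]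
    conv_lhs => rw [hcQ]
    rw [Matrix.conjTranspose_mul, hQH, hc.1.eq]
  have hQcQ : Q * c * Q = c := by rw [← hQc, ← hcQ]
  have hfin : Q * c * Q = Q := by
    ext i j
    have hent : (Q * c * Q) i j = (star w ⬝ᵥ c.mulVec w) * (w i * star (w j)) := by
      simp only [hQ, Matrix.mul_apply, Matrix.vecMulVec_apply, dotProduct, Matrix.mulVec,
        Pi.star_apply, Finset.sum_mul, Finset.mul_sum]
      rw [Finset.sum_comm]
      exact Finset.sum_congr rfl fun k _ => Finset.sum_congr rfl fun l _ => by ring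
    rw [hent, hcw, one_mul]
    simp [hQ, Matrix.vecMulVec_apply]
  show c = Q
  rw [← hQcQ, hfin]

end Stmt9Aux

/-- if `ρ` is a PSD matrix on `ℂ^d ⊗ ℂ^d` of trace 1 whose range lies in
`span{|ii⟩ : i}`, with `⟨ii|ρ|ii⟩ = 1/d` for all `i`, and `A`, `B` are rank-1 `d × d` PSD
matrices all of whose entries have absolute value `1/(d(d+1))` such that
`tr(ρ·(A ⊗ B)) = 1/(d(d+1)²)`, then `ρ` has rank 1, i.e. `ρ` is a pure state. -/
theorem stmt9 (d : ℕ) (hd : 2 ≤ d)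
    (ρ : Matrix (Fin d × Fin d) (Fin d × Fin d) ℂ)
    (hρ : ρ.PosSemidef) (hρtr : ρ.trace = 1)
    (hrange : LinearMap.range ρ.mulVecLin ≤
      Submodule.span ℂ (Set.range fun i : Fin d => (Pi.single (i, i) 1 : Fin d × Fin d → ℂ)))
    (hdiag : ∀ i : Fin d, ρ (i, i) (i, i) = ((1 / d : ℝ) : ℂ))
    (A B : Matrix (Fin d) (Fin d) ℂ)
    (hA : A.PosSemidef) (hArank : A.rank = 1)
    (hB : B.PosSemidef) (hBrank : B.rank = 1)
    (hAent : ∀ i j : Fin d, ‖A i j‖ = 1 / (d * (d + 1)))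
    (hBent : ∀ i j : Fin d, ‖B i j‖ = 1 / (d * (d + 1)))
    (htr : (ρ * (A ⊗ₖ B)).trace = ((1 / (d * (d + 1) ^ 2) : ℝ) : ℂ)) :
    ρ.rank = 1 := by
  have hd0 : (0 : ℝ) < (d : ℝ) := by exact_mod_cast Nat.pos_of_ne_zero (by omega)
  have hd1 : (0 : ℝ) < (d : ℝ) + 1 := by linarith
  -- zero structure of ρ
  have hzero : ∀ p q : Fin d × Fin d, p.1 ≠ p.2 → ρ p q = 0 := by
    intro p q hp
    have hmem : ρ.mulVec (Pi.single q 1) ∈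
        Submodule.span ℂ (Set.range fun i : Fin d => (Pi.single (i, i) 1 : Fin d × Fin d → ℂ)) :=
      hrange (LinearMap.mem_range_self _ _)
    have hker : Submodule.span ℂ
        (Set.range fun i : Fin d => (Pi.single (i, i) 1 : Fin d × Fin d → ℂ)) ≤
        LinearMap.ker (LinearMap.proj p : (Fin d × Fin d → ℂ) →ₗ[ℂ] ℂ) := by
      rw [Submodule.span_le]
      rintro _ ⟨i, rfl⟩
      simp only [SetLike.mem_coe, LinearMap.mem_ker, LinearMap.proj_apply]
      exact Pi.single_eq_of_ne (fun h => hp (by rw [h])) 1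
    have := hker hmem
    simp only [LinearMap.mem_ker, LinearMap.proj_apply] at this
    simpa [Matrix.mulVec_single] using this
  have hzero' : ∀ p q : Fin d × Fin d, q.1 ≠ q.2 → ρ p q = 0 := by
    intro p q hq
    rw [← hρ.1.apply p q, hzero q p hq, star_zero]
  -- the compressed matrix and embedding
  set c : Matrix (Fin d) (Fin d) ℂ := ρ.submatrix (fun k => (k, k)) (fun k => (k, k)) with hcdef
  set E : Matrix (Fin d × Fin d) (Fin d) ℂ :=
    Matrix.of fun p k => if p.1 = k ∧ p.2 = k then (1 : ℂ) else 0 with hEdef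
  have hEX : ∀ (X : Matrix (Fin d × Fin d) (Fin d × Fin d) ℂ) (k l : Fin d),
      (Eᴴ * X * E) k l = X (k, k) (l, l) := by
    intro X k l
    simp only [Matrix.mul_apply, Matrix.conjTranspose_apply, hEdef, Matrix.of_apply,
      apply_ite (starRingEnd ℂ), _root_.map_one, _root_.map_zero, ite_mul, one_mul, zero_mul,
      mul_ite, mul_one, mul_zero, Fintype.sum_prod_type, ite_and]
    simp [apply_ite (starRingEnd ℂ), Finset.sum_ite_eq, Finset.sum_ite_eq']
  have hρE : ρ = E * c * Eᴴ := by
    ext p q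
    obtain ⟨a, b⟩ := p; obtain ⟨x, y⟩ := q
    by_cases hab : a = b
    · by_cases hxy : x = y
      · subst hab; subst hxy
        show ρ (a, a) (x, x) = _
        simp only [Matrix.mul_apply, Matrix.conjTranspose_apply, hEdef, Matrix.of_apply, hcdef,
          Matrix.submatrix_apply, apply_ite (starRingEnd ℂ), _root_.map_one, _root_.map_zero,
          ite_mul, one_mul, zero_mul, mul_ite, mul_one, mul_zero, and_self]
        simp [Finset.sum_ite_eq, Finset.sum_ite_eq']
      · rw [hzero' (a, b) (x, y) (by simpa using hxy)]
        symm
        simp only [Matrix.mul_apply, Matrix.conjTranspose_apply, hEdef, Matrix.of_apply]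
        have hz : ∀ l : Fin d, ((if (x, y).1 = l ∧ (x, y).2 = l then (1 : ℂ) else 0)) = 0 := by
          intro l
          rw [if_neg]
          rintro ⟨h1, h2⟩
          exact hxy (h1.trans h2.symm)
        simp [hz]
    · rw [hzero (a, b) (x, y) (by simpa using hab)]
      symm
      simp only [Matrix.mul_apply, hEdef, Matrix.of_apply]
      have hz : ∀ k : Fin d, ((if (a, b).1 = k ∧ (a, b).2 = k then (1 : ℂ) else 0)) = 0 := by
        intro k
        rw [if_neg]
        rintro ⟨h1, h2⟩
        exact hab (h1.trans h2.symm)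
      simp [hz]
  have hcPSD : c.PosSemidef := hρ.submatrix _
  have hctr : c.trace = 1 := by
    have h1 : c.trace = ∑ k : Fin d, ((1 / (d : ℝ) : ℝ) : ℂ) := by
      apply Finset.sum_congr rfl
      intro k _
      show ρ (k, k) (k, k) = _
      exact hdiag k
    rw [h1, Finset.sum_const, Finset.card_univ, Fintype.card_fin, nsmul_eq_mul]
    push_cast
    field_simp
  -- rank-one decompositions
  obtain ⟨u, hu⟩ := aux_psd_rank_one hA hArank
  obtain ⟨v, hv⟩ := aux_psd_rank_one hB hBrank
  set w : Fin d → ℂ := fun k => u k * v k with hwdef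
  have hMent : ∀ k l : Fin d, (Eᴴ * (A ⊗ₖ B) * E) l k = w l * star (w k) := by
    intro k l
    rw [hEX, Matrix.kroneckerMap_apply, hu, hv]
    simp only [Matrix.vecMulVec_apply, Pi.star_apply, hwdef, star_mul']
    ring
  -- main trace identity in compressed form
  have htrc : (c * (Eᴴ * (A ⊗ₖ B) * E)).trace = ((1 / (d * (d + 1) ^ 2) : ℝ) : ℂ) := by
    rw [← htr]
    conv_rhs => rw [hρE, Matrix.mul_assoc (E * c) Eᴴ (A ⊗ₖ B),
      Matrix.trace_mul_cycle E c (Eᴴ * (A ⊗ₖ B))]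
    rw [Matrix.trace_mul_comm]
  have hkey : star w ⬝ᵥ c.mulVec w = ((1 / (d * (d + 1) ^ 2) : ℝ) : ℂ) := by
    rw [← htrc]
    simp only [Matrix.trace, Matrix.diag, Matrix.mul_apply, dotProduct, Matrix.mulVec,
      Pi.star_apply, hMent]
    apply Finset.sum_congr rfl
    intro k _
    rw [Finset.mul_sum]
    apply Finset.sum_congr rfl
    intro l _
    ring
  -- norm of w
  have hent : ∀ k : Fin d, Complex.normSq (w k) = 1 / ((d : ℝ) * ((d : ℝ) + 1)) * (1 / ((d : ℝ) * ((d : ℝ) + 1))) := by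
    intro k
    have hAkk : A k k = ((Complex.normSq (u k) : ℝ) : ℂ) := by
      rw [hu]
      simp only [Matrix.vecMulVec_apply, Pi.star_apply]
      rw [Complex.star_def, Complex.mul_conj]
    have hBkk : B k k = ((Complex.normSq (v k) : ℝ) : ℂ) := by
      rw [hv]
      simp only [Matrix.vecMulVec_apply, Pi.star_apply]
      rw [Complex.star_def, Complex.mul_conj]
    have h2 := hAent k k
    have h3 := hBent k k
    rw [hAkk, Complex.norm_real, Real.norm_eq_abs, abs_of_nonneg (Complex.normSq_nonneg _)] at h2
    rw [hBkk, Complex.norm_real, Real.norm_eq_abs, abs_of_nonneg (Complex.normSq_nonneg _)] at h3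
    rw [hwdef]
    rw [Complex.normSq_mul, h2, h3]
  have hnorm : star w ⬝ᵥ w = ((1 / (d * (d + 1) ^ 2) : ℝ) : ℂ) := by
    have h1 : star w ⬝ᵥ w = ∑ k : Fin d, ((Complex.normSq (w k) : ℝ) : ℂ) := by
      apply Finset.sum_congr rfl
      intro k _
      simp only [Pi.star_apply, Complex.star_def]
      exact Complex.normSq_eq_conj_mul_self.symm
    rw [h1]
    have h2 : ∀ k : Fin d, ((Complex.normSq (w k) : ℝ) : ℂ) =
        ((1 / ((d : ℝ) * ((d : ℝ) + 1)) * (1 / ((d : ℝ) * ((d : ℝ) + 1))) : ℝ) : ℂ) := by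
      intro k; rw [hent k]
    rw [Finset.sum_congr rfl fun k _ => h2 k, Finset.sum_const, Finset.card_univ,
      Fintype.card_fin, nsmul_eq_mul]
    rw [← Complex.ofReal_natCast, ← Complex.ofReal_mul]
    congr 1
    field_simp
  -- normalization
  set s : ℝ := 1 / ((d : ℝ) * ((d : ℝ) + 1) ^ 2) with hsdef
  have hs_pos : (0 : ℝ) < s := by rw [hsdef]; positivity
  set r : ℝ := Real.sqrt s with hrdef
  have hr_pos : (0 : ℝ) < r := Real.sqrt_pos.mpr hs_pos
  have hrr : r * r = s := Real.mul_self_sqrt hs_pos.le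
  have hscal : ((r⁻¹ : ℝ) : ℂ) * ((r⁻¹ : ℝ) : ℂ) * ((s : ℝ) : ℂ) = 1 := by
    rw [← Complex.ofReal_mul, ← Complex.ofReal_mul, ← Complex.ofReal_one]
    congr 1
    rw [← hrr]
    field_simp
  set w' : Fin d → ℂ := fun k => ((r⁻¹ : ℝ) : ℂ) * w k with hw'def
  have hw'1 : star w' ⬝ᵥ w' = 1 := by
    have h1 : star w' ⬝ᵥ w' = ((r⁻¹ : ℝ) : ℂ) * ((r⁻¹ : ℝ) : ℂ) * (star w ⬝ᵥ w) := by
      simp only [dotProduct, hw'def, Pi.star_apply, star_mul', Complex.star_def,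
        Complex.conj_ofReal, Finset.mul_sum]
      apply Finset.sum_congr rfl
      intro k _
      ring
    rw [h1, hnorm]
    exact hscal
  have hw'2 : star w' ⬝ᵥ c.mulVec w' = 1 := by
    have hmv : c.mulVec w' = fun k => ((r⁻¹ : ℝ) : ℂ) * c.mulVec w k := by
      funext k
      simp only [Matrix.mulVec, dotProduct, hw'def, Finset.mul_sum]
      apply Finset.sum_congr rfl
      intro l _
      ring
    have h1 : star w' ⬝ᵥ c.mulVec w' = ((r⁻¹ : ℝ) : ℂ) * ((r⁻¹ : ℝ) : ℂ) * (star w ⬝ᵥ c.mulVec w) := by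
      rw [hmv]
      simp only [dotProduct, hw'def, Pi.star_apply, star_mul', Complex.star_def,
        Complex.conj_ofReal, Finset.mul_sum]
      apply Finset.sum_congr rfl
      intro k _
      ring
    rw [h1, hkey]
    exact hscal
  have hceq : c = vecMulVec w' (star w') := aux_pure hcPSD hctr w' hw'1 hw'2
  -- rank bounds
  have hcrank : c.rank ≤ 1 := by
    rw [hceq, Matrix.vecMulVec_eq (Fin 1)]
    refine le_trans (Matrix.rank_mul_le_left _ _) ?_
    exact le_of_le_of_eq (Matrix.rank_le_card_width (Matrix.replicateCol (Fin 1) w')) (by simp)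
  have hle : ρ.rank ≤ 1 := by
    calc ρ.rank = (E * c * Eᴴ).rank := by rw [← hρE]
      _ = (E * (c * Eᴴ)).rank := by rw [Matrix.mul_assoc]
      _ ≤ (c * Eᴴ).rank := Matrix.rank_mul_le_right _ _
      _ ≤ c.rank := Matrix.rank_mul_le_left _ _
      _ ≤ 1 := hcrank
  have hne : ρ ≠ 0 := by
    intro h0
    rw [h0, Matrix.trace_zero] at hρtr
    exact one_ne_zero hρtr.symm
  exact le_antisymm hle (aux_rank_pos hne)
end

section
/- Let d ≥ 2 and let C_1,…,C_d and D_1,…,D_d be d×d complex positive semidefinite matrices such that tr(C_x D_y) = (d/(d+1)²)·δ_{xy} for all x,y ∈ [d], and such that every diagonal entry of every C_x and every D_y equals 1/(√d(d+1)). Then C_x = D_x for every x ∈ [d], and ∑_{x=1}^d C_x = (√d/(d+1))·I_d. -/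
open Matrix ComplexOrder

/-- For a Hermitian complex matrix `H`, `tr(H²)` is the sum of `|H i j|²`. -/
lemma herm_trace_mul_self {n : Type*} [Fintype n] {H : Matrix n n ℂ} (hH : H.IsHermitian) :
    (H * H).trace = ((∑ i, ∑ j, Complex.normSq (H i j) : ℝ) : ℂ) := by
  push_cast
  simp only [Matrix.trace, Matrix.diag, Matrix.mul_apply]
  refine Finset.sum_congr rfl fun i _ => Finset.sum_congr rfl fun j _ => ?_
  have : H j i = star (H i j) := by rw [← hH.apply i j, star_star]
  rw [this]
  simpa using (Complex.mul_conj (H i j))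

/-- If the sum of squared moduli of the entries of a matrix vanishes, the matrix is zero. -/
lemma normSq_sum_eq_zero {n : Type*} [Fintype n] {H : Matrix n n ℂ}
    (h : ∑ i, ∑ j, Complex.normSq (H i j) = 0) : H = 0 := by
  ext i j
  have h1 := (Finset.sum_eq_zero_iff_of_nonneg (fun i _ => Finset.sum_nonneg
    (fun j _ => Complex.normSq_nonneg _))).mp h i (Finset.mem_univ i)
  have h2 := (Finset.sum_eq_zero_iff_of_nonneg
    (fun j _ => Complex.normSq_nonneg _)).mp h1 j (Finset.mem_univ j)
  simpa using Complex.normSq_eq_zero.mp h2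

/-- Entrywise Cauchy–Schwarz for PSD matrices: `|A i j|² ≤ A i i * A j j`. -/
lemma psd_normSq_entry_le {n : Type*} [Fintype n] [DecidableEq n] {A : Matrix n n ℂ}
    (hA : A.PosSemidef) (i j : n) :
    Complex.normSq (A i j) ≤ (A i i).re * (A j j).re := by
  open scoped MatrixOrder in
  obtain ⟨B, rfl⟩ := CStarAlgebra.nonneg_iff_eq_star_mul_self.mp hA.nonneg
  simp only [Matrix.star_eq_conjTranspose]
  set u : EuclideanSpace ℂ n := WithLp.toLp 2 (fun k => B k i) with hu
  set v : EuclideanSpace ℂ n := WithLp.toLp 2 (fun k => B k j) with hv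
  have hij : (Bᴴ * B) i j = inner ℂ u v := by
    simp [Matrix.mul_apply, Matrix.conjTranspose_apply, PiLp.inner_apply, u, v, mul_comm]
  have hii : ((Bᴴ * B) i i).re = ‖u‖ ^ 2 := by
    have h1 : (Bᴴ * B) i i = inner ℂ u u := by
      simp [Matrix.mul_apply, Matrix.conjTranspose_apply, PiLp.inner_apply, u, mul_comm, -inner_self_eq_norm_sq_to_K]
    rw [h1]
    exact inner_self_eq_norm_sq (𝕜 := ℂ) u
  have hjj : ((Bᴴ * B) j j).re = ‖v‖ ^ 2 := by
    have h1 : (Bᴴ * B) j j = inner ℂ v v := by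
      simp [Matrix.mul_apply, Matrix.conjTranspose_apply, PiLp.inner_apply, v, mul_comm, -inner_self_eq_norm_sq_to_K]
    rw [h1]
    exact inner_self_eq_norm_sq (𝕜 := ℂ) v
  have hcs := norm_inner_le_norm (𝕜 := ℂ) u v
  rw [hij, hii, hjj]
  calc Complex.normSq (inner ℂ u v) = ‖(inner ℂ u v)‖ ^ 2 := by
        rw [Complex.sq_norm]
    _ ≤ (‖u‖ * ‖v‖) ^ 2 := by
        apply pow_le_pow_left₀ (norm_nonneg _) hcs
    _ = ‖u‖ ^ 2 * ‖v‖ ^ 2 := by ring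

/-- if `d × d` PSD matrices `C_1, …, C_d` and `D_1, …, D_d` satisfy
`tr(C_x D_y) = (d/(d+1)²)·δ_{xy}` and every diagonal entry of every `C_x` and `D_y` equals
`1/(√d(d+1))`, then `C_x = D_x` for every `x` and `∑_x C_x = (√d/(d+1))·I_d`. -/
theorem stmt10 (d : ℕ) (hd : 2 ≤ d)
    (C D : Fin d → Matrix (Fin d) (Fin d) ℂ)
    (hC : ∀ x, (C x).PosSemidef) (hD : ∀ y, (D y).PosSemidef)
    (hfac : ∀ x y, (C x * D y).trace =
      if x = y then (((d : ℝ) / (d + 1 : ℝ) ^ 2 : ℝ) : ℂ) else 0)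
    (hCdiag : ∀ x i, C x i i = ((1 / (Real.sqrt d * (d + 1)) : ℝ) : ℂ))
    (hDdiag : ∀ y i, D y i i = ((1 / (Real.sqrt d * (d + 1)) : ℝ) : ℂ)) :
    (∀ x, C x = D x) ∧
    (∑ x, C x) = (Real.sqrt d / (d + 1) : ℝ) • (1 : Matrix (Fin d) (Fin d) ℂ) := by
  have hd0 : (0:ℝ) < (d:ℝ) := by
    have : (2:ℝ) ≤ (d:ℝ) := by exact_mod_cast hd
    linarith
  have hd1 : (0:ℝ) < (d:ℝ) + 1 := by linarith
  set sd : ℝ := Real.sqrt d with hsddef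
  have hsd2 : sd * sd = d := Real.mul_self_sqrt hd0.le
  have hsd0 : 0 < sd := Real.sqrt_pos.mpr hd0
  set α : ℝ := 1 / (sd * ((d:ℝ) + 1)) with hαdef
  set c : ℝ := (d:ℝ) / ((d:ℝ) + 1) ^ 2 with hcdef
  set r : ℝ := sd / ((d:ℝ) + 1) with hrdef
  have hdac : (d:ℝ) * ((d:ℝ) * (α * α)) = c := by
    rw [hαdef, hcdef, ← hsd2]
    field_simp
  have hdar : (d:ℝ) * α = r := by
    rw [hαdef, hrdef, ← hsd2]
    field_simp
  have hrc : r * r = c := by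
    rw [hrdef, hcdef, ← hsd2]
    field_simp
  -- entrywise bounds
  have hboundC : ∀ x, (∑ i, ∑ j, Complex.normSq (C x i j)) ≤ c := by
    intro x
    calc (∑ i, ∑ j, Complex.normSq (C x i j))
        ≤ ∑ i : Fin d, ∑ j : Fin d, α * α := by
          refine Finset.sum_le_sum fun i _ => Finset.sum_le_sum fun j _ => ?_
          have h := psd_normSq_entry_le (hC x) i j
          rwa [hCdiag x i, hCdiag x j, Complex.ofReal_re] at h
      _ = (d:ℝ) * ((d:ℝ) * (α * α)) := by
          simp [Finset.sum_const, Finset.card_univ, mul_assoc]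
      _ = c := hdac
  have hboundD : ∀ y, (∑ i, ∑ j, Complex.normSq (D y i j)) ≤ c := by
    intro y
    calc (∑ i, ∑ j, Complex.normSq (D y i j))
        ≤ ∑ i : Fin d, ∑ j : Fin d, α * α := by
          refine Finset.sum_le_sum fun i _ => Finset.sum_le_sum fun j _ => ?_
          have h := psd_normSq_entry_le (hD y) i j
          rwa [hDdiag y i, hDdiag y j, Complex.ofReal_re] at h
      _ = (d:ℝ) * ((d:ℝ) * (α * α)) := by
          simp [Finset.sum_const, Finset.card_univ, mul_assoc]
      _ = c := hdac
  -- Step 1: C x = D x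
  have hCDeq : ∀ x, C x = D x := by
    intro x
    have hHerm : (C x - D x).IsHermitian := ((hC x).1).sub ((hD x).1)
    have h3 : (C x * D x).trace = ((c:ℝ):ℂ) := by simpa using hfac x x
    have h4 : (D x * C x).trace = ((c:ℝ):ℂ) := by rw [Matrix.trace_mul_comm]; exact h3
    have htr : ((C x - D x) * (C x - D x)).trace
        = (C x * C x).trace - (C x * D x).trace - (D x * C x).trace + (D x * D x).trace := by
      rw [sub_mul, mul_sub, mul_sub, Matrix.trace_sub, Matrix.trace_sub, Matrix.trace_sub]
      ring
    have hreal : (∑ i, ∑ j, Complex.normSq ((C x - D x) i j))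
        = (∑ i, ∑ j, Complex.normSq (C x i j)) + (∑ i, ∑ j, Complex.normSq (D x i j)) - 2 * c := by
      have hcmplx : ((∑ i, ∑ j, Complex.normSq ((C x - D x) i j) : ℝ) : ℂ)
          = (((∑ i, ∑ j, Complex.normSq (C x i j))
              + (∑ i, ∑ j, Complex.normSq (D x i j)) - 2 * c : ℝ) : ℂ) := by
        rw [← herm_trace_mul_self hHerm, htr, herm_trace_mul_self (hC x).1,
          herm_trace_mul_self (hD x).1, h3, h4]
        push_cast
        ring
      exact_mod_cast hcmplx
    have hnn : 0 ≤ ∑ i, ∑ j, Complex.normSq ((C x - D x) i j) :=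
      Finset.sum_nonneg fun i _ => Finset.sum_nonneg fun j _ => Complex.normSq_nonneg _
    have hle : (∑ i, ∑ j, Complex.normSq ((C x - D x) i j)) ≤ 0 := by
      rw [hreal]
      have := hboundC x
      have := hboundD x
      linarith
    have h0 := normSq_sum_eq_zero (le_antisymm hle hnn)
    exact sub_eq_zero.mp h0
  refine ⟨hCDeq, ?_⟩
  -- Step 2: the sum
  set S : Matrix (Fin d) (Fin d) ℂ := ∑ x, C x with hSdef
  set M : Matrix (Fin d) (Fin d) ℂ := r • (1 : Matrix (Fin d) (Fin d) ℂ) with hMdef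
  have htrCx : ∀ x, (C x).trace = ((r:ℝ):ℂ) := by
    intro x
    have : (C x).trace = ∑ i : Fin d, ((α:ℝ):ℂ) := by
      simp [Matrix.trace, Matrix.diag, hCdiag x]
    rw [this, Finset.sum_const, Finset.card_univ]
    simp only [Fintype.card_fin, nsmul_eq_mul]
    rw [← hdar]
    push_cast
    ring
  have htrS : S.trace = ((d:ℝ) * r : ℝ) := by
    rw [hSdef, Matrix.trace_sum]
    simp [htrCx]
  have htrSS : (S * S).trace = ((d:ℝ) * c : ℝ) := by
    rw [hSdef, Finset.sum_mul_sum]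
    rw [Matrix.trace_sum]
    have : ∀ x : Fin d, (∑ y, C x * C y).trace = ((c:ℝ):ℂ) := by
      intro x
      rw [Matrix.trace_sum]
      have heach : ∀ y : Fin d, (C x * C y).trace
          = if x = y then ((c:ℝ):ℂ) else 0 := by
        intro y
        rw [hCDeq y]
        exact hfac x y
      simp [heach]
    rw [Finset.sum_congr rfl fun x _ => this x]
    simp [Finset.sum_const, Finset.card_univ]
  have hSM : S * M = r • S := by
    rw [hMdef, Matrix.mul_smul, Matrix.mul_one]
  have hMS : M * S = r • S := by
    rw [hMdef, Matrix.smul_mul, Matrix.one_mul]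
  have hMM : M * M = (r * r) • (1 : Matrix (Fin d) (Fin d) ℂ) := by
    rw [hMdef, Matrix.smul_mul, Matrix.one_mul, smul_smul]
  have hSherm : S.IsHermitian := by
    rw [Matrix.IsHermitian, hSdef, Matrix.conjTranspose_sum]
    exact Finset.sum_congr rfl fun x _ => (hC x).1
  have hMherm : M.IsHermitian := by
    rw [Matrix.IsHermitian, hMdef, Matrix.conjTranspose_smul, Matrix.conjTranspose_one,
      star_trivial]
  have hHerm : (S - M).IsHermitian := hSherm.sub hMherm
  have htr : ((S - M) * (S - M)).trace
      = (S * S).trace - (S * M).trace - (M * S).trace + (M * M).trace := by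
    rw [sub_mul, mul_sub, mul_sub, Matrix.trace_sub, Matrix.trace_sub, Matrix.trace_sub]
    ring
  have htrval : ((S - M) * (S - M)).trace = 0 := by
    rw [htr, hSM, hMS, hMM, Matrix.trace_smul, Matrix.trace_smul, htrS, htrSS,
      Matrix.trace_one]
    simp only [Fintype.card_fin, Complex.real_smul]
    have hr0 : (d:ℝ) * c - r * ((d:ℝ) * r) - r * ((d:ℝ) * r) + r * r * (d:ℝ) = 0 := by
      linear_combination (-(d:ℝ)) * hrc
    exact_mod_cast hr0
  have hzero : (∑ i, ∑ j, Complex.normSq ((S - M) i j)) = 0 := by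
    have := (herm_trace_mul_self hHerm).symm.trans htrval
    exact_mod_cast this
  have := normSq_sum_eq_zero hzero
  exact sub_eq_zero.mp this
end
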